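/- arXiv:2404.00841 — 6 statements merged into one kernel-verified Lean document; each statement's English description precedes it below -/
import Mathlib

section
/- For every normal subgroup N of F, the normal closure L_N of N in F(Y_C) satisfies L_N ∩ F = N. -/
def blockA (m C : ℕ) (i : Fin m) : FreeGroup (Fin C × Fin m) :=
  (List.ofFn fun j : Fin C => FreeGroup.of (j, i)).prod

def blockF (m C : ℕ) : Subgroup (FreeGroup (Fin C × Fin m)) :=
  Subgroup.closure (Set.range (blockA m C))

/-- Retraction sending `a_{0,i} ↦ A_i` and other generators to `1`. -/
def blockRetr (m C : ℕ) : FreeGroup (Fin C × Fin m) →* FreeGroup (Fin C × Fin m) :=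
  FreeGroup.lift fun p => if p.1.val = 0 then blockA m C p.2 else 1

lemma blockRetr_mem (m C : ℕ) (x : FreeGroup (Fin C × Fin m)) :
    blockRetr m C x ∈ blockF m C := by
  induction x using FreeGroup.induction_on with
  | C1 => simpa using Subgroup.one_mem _
  | of p =>
      rw [blockRetr, FreeGroup.lift_apply_of]
      split
      · exact Subgroup.subset_closure ⟨_, rfl⟩
      · exact Subgroup.one_mem _
  | inv_of p hp => simpa using Subgroup.inv_mem _ hp
  | mul x y hx hy => simpa using Subgroup.mul_mem _ hx hy

lemma blockRetr_blockA (m C : ℕ) (hC : 1 ≤ C) (i : Fin m) :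
    blockRetr m C (blockA m C i) = blockA m C i := by
  obtain ⟨k, rfl⟩ : ∃ k, C = k + 1 := ⟨C - 1, (Nat.succ_pred_eq_of_pos hC).symm⟩
  rw [blockA, map_list_prod, List.map_ofFn]
  have h : (List.ofFn ((blockRetr m (k+1)) ∘ fun j : Fin (k+1) => FreeGroup.of (j, i))).prod
      = blockA m (k+1) i := by
    rw [List.ofFn_succ, List.prod_cons]
    have h1 : ∀ j : Fin (k+1), blockRetr m (k+1) (FreeGroup.of (j, i))
        = if j.val = 0 then blockA m (k+1) i else 1 := fun j => FreeGroup.lift_apply_of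
    have h2 : (List.ofFn fun j : Fin k =>
        ((blockRetr m (k+1)) ∘ fun j : Fin (k+1) => FreeGroup.of (j, i)) j.succ).prod = 1 := by
      apply List.prod_eq_one
      intro x hx
      obtain ⟨j, rfl⟩ := List.mem_ofFn.1 hx
      simp [Function.comp, h1]
    rw [h2, mul_one]
    simp [Function.comp, h1]
  exact h

lemma blockRetr_fix (m C : ℕ) (hC : 1 ≤ C) (x : FreeGroup (Fin C × Fin m))
    (hx : x ∈ blockF m C) : blockRetr m C x = x := by
  induction hx using Subgroup.closure_induction with
  | mem y hy => obtain ⟨i, rfl⟩ := hy; exact blockRetr_blockA m C hC i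
  | one => simp
  | mul a b _ _ ha hb => simp [map_mul, ha, hb]
  | inv a _ ha => simp [map_inv, ha]

/-- **Lemma 3.1.** For any normal subgroup `N` of `F`, the normal closure `L_N` of `N`
in `F(Y_C)` satisfies `L_N ∩ F = N`. -/
theorem statement2 (m C : ℕ) (hm : 1 ≤ m) (hC : 1 ≤ C)
    (N : Subgroup (FreeGroup (Fin C × Fin m))) (hNF : N ≤ blockF m C)
    (hNnormal : ∀ f ∈ blockF m C, ∀ x ∈ N, f * x * f⁻¹ ∈ N) :
    Subgroup.normalClosure (N : Set (FreeGroup (Fin C × Fin m))) ⊓ blockF m C = N := by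
  apply le_antisymm
  · rintro x ⟨hx1, hx2⟩
    have key : Subgroup.normalClosure (N : Set (FreeGroup (Fin C × Fin m)))
        ≤ N.comap (blockRetr m C) := by
      rw [Subgroup.normalClosure]
      apply (Subgroup.closure_le _).2
      intro c hc
      obtain ⟨a, ha, hconj⟩ := Group.mem_conjugatesOfSet_iff.1 hc
      obtain ⟨g, rfl⟩ := isConj_iff.1 hconj
      have : blockRetr m C (g * a * g⁻¹)
          = blockRetr m C g * a * (blockRetr m C g)⁻¹ := by
        simp [map_mul, map_inv, blockRetr_fix m C hC a (hNF ha)]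
      exact Subgroup.mem_comap.2 (this ▸ hNnormal _ (blockRetr_mem m C g) a ha)
    have := key hx1
    rwa [Subgroup.mem_comap, blockRetr_fix m C hC x hx2] at this
  · exact le_inf (fun x hx => Subgroup.subset_normalClosure hx) hNF
end

section
/- For every w ∈ Q, |φ(w)|_{Y_C} = C·|w|_Y, where |·|_Y denotes word length in Q with respect to the images of y_1, …, y_m and |·|_{Y_C} denotes word length in Q_C with respect to the images of the letters of Y_C. -/
lemma prod_ite_single {G : Type*} [Monoid G] : ∀ {n : ℕ} (j : Fin n) (g : G),
    (List.ofFn fun j' : Fin n => if j' = j then g else 1).prod = g := by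
  intro n
  induction n with
  | zero => exact fun j => j.elim0
  | succ n ih =>
    intro j g
    rw [List.ofFn_succ]
    cases j using Fin.cases with
    | zero =>
      rw [if_pos rfl, List.prod_cons]
      have h1 : (List.ofFn fun j' : Fin n =>
          if (j'.succ : Fin (n+1)) = 0 then g else 1).prod = 1 := by
        apply List.prod_eq_one
        intro x hx
        rw [List.mem_ofFn] at hx
        obtain ⟨j', rfl⟩ := hx
        simp [Fin.succ_ne_zero]
      rw [h1, mul_one]
    | succ i =>
      rw [if_neg (Fin.succ_ne_zero i).symm, List.prod_cons, one_mul]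
      have h2 : (List.ofFn fun j' : Fin n => if (j'.succ : Fin (n+1)) = i.succ then g else 1)
          = List.ofFn fun j' : Fin n => if j' = i then g else 1 := by
        congr 1; funext j'; simp [Fin.succ_inj]
      rw [h2, ih]

lemma wordSet_nonempty {G : Type*} [Group G] {s : Set G} (hs : Subgroup.closure s = ⊤) (g : G) :
    {k : ℕ | ∃ l : List G, l.length = k ∧ (∀ x ∈ l, x ∈ s ∨ x⁻¹ ∈ s) ∧ l.prod = g}.Nonempty := by
  have hg : g ∈ Submonoid.closure (s ∪ s⁻¹) := by
    rw [← Subgroup.closure_toSubmonoid, Subgroup.mem_toSubmonoid, hs]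
    trivial
  obtain ⟨l, hl, hp⟩ := Submonoid.exists_list_of_mem_closure hg
  exact ⟨l.length, l, rfl, fun x hx => (hl x hx).imp id Set.mem_inv.mp, hp⟩

lemma prod_filter_one {G : Type*} [Monoid G] (p : G → Bool) (hp : ∀ x, p x = false → x = 1) :
    ∀ l : List G, (l.filter p).prod = l.prod := by
  intro l
  induction l with
  | nil => rfl
  | cons a l ih =>
    cases h : p a with
    | true => simp [List.filter_cons, h, ih]
    | false =>
      rw [List.filter_cons, if_neg (by simp [h]), ih, List.prod_cons, hp a h, one_mul]

lemma sum_countP_le {G ι : Type*} [Fintype ι] [DecidableEq ι] (p : ι → G → Bool) :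
    ∀ l : List G, (∀ x ∈ l, (Finset.univ.filter fun j => p j x).card ≤ 1) →
      ∑ j, l.countP (p j) ≤ l.length := by
  intro l
  induction l with
  | nil => simp
  | cons a l ih =>
    intro h
    have hsum : ∑ j, ((a :: l).countP (p j))
        = (∑ j, l.countP (p j)) + ∑ j : ι, (if p j a then 1 else 0) := by
      simp [List.countP_cons, Finset.sum_add_distrib]
    rw [hsum]
    have h2 : ∑ j : ι, (if p j a then 1 else 0) = (Finset.univ.filter fun j => p j a).card := by
      rw [Finset.card_filter]
    have h3 := h a List.mem_cons_self
    have h4 := ih fun x hx => h x (List.mem_cons_of_mem _ hx)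
    simp only [List.length_cons]
    omega



/-- Word length of `g` with respect to a generating set `S` of a group:
the least length of a word over `S ∪ S⁻¹` representing `g`. -/
noncomputable def wordLength {G : Type*} [Group G] (S : Set G) (g : G) : ℕ :=
  sInf {k : ℕ | ∃ l : List G, l.length = k ∧ (∀ x ∈ l, x ∈ S ∨ x⁻¹ ∈ S) ∧ l.prod = g}

/-- The homomorphism `β : F(y_1,…,y_m) → F(Y_C)`, `y_i ↦ A_i`. -/
def blockβ (m C : ℕ) : FreeGroup (Fin m) →* FreeGroup (Fin C × Fin m) :=
  FreeGroup.lift (blockA m C)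

/-- The relator set of `Q = ⟨y_1,…,y_m | S⟩`: the elements of `F(y_1,…,y_m)` given by
the (nonempty, positive) words of `S`. -/
def relS (m : ℕ) (S : Set (List (Fin m))) : Set (FreeGroup (Fin m)) :=
  (fun s : List (Fin m) => FreeGroup.mk (s.map fun i => (i, true))) '' S

/-- The relator set `S_C = {r_C : r ∈ S}` of `Q_C = ⟨Y_C | S_C⟩`. -/
def relSC (m C : ℕ) (S : Set (List (Fin m))) : Set (FreeGroup (Fin C × Fin m)) :=
  blockβ m C '' relS m S

lemma proj_aux (m C : ℕ) (S : Set (List (Fin m))) (j : Fin C) :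
    ∀ r ∈ relSC m C S,
      FreeGroup.lift (fun p : Fin C × Fin m =>
        if p.1 = j then (PresentedGroup.of p.2 : PresentedGroup (relS m S)) else 1) r = 1 := by
  rintro r ⟨r', hr', rfl⟩
  set f : Fin C × Fin m → PresentedGroup (relS m S) :=
    fun p => if p.1 = j then PresentedGroup.of p.2 else 1 with hf
  have hcomp : (FreeGroup.lift f).comp (blockβ m C) =
      FreeGroup.lift (fun i => (PresentedGroup.of i : PresentedGroup (relS m S))) := by
    ext i
    simp only [MonoidHom.comp_apply, blockβ, FreeGroup.lift_apply_of, blockA, map_list_prod,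
      List.map_ofFn]
    have : ((fun x => (FreeGroup.lift f) x) ∘ fun j' : Fin C => FreeGroup.of (j', i))
        = fun j' : Fin C => if j' = j then (PresentedGroup.of i : PresentedGroup (relS m S))
          else 1 := by
      funext j'; simp [hf]
    rw [this, prod_ite_single]
  have hmk : FreeGroup.lift (fun i => (PresentedGroup.of i : PresentedGroup (relS m S)))
      = PresentedGroup.mk (relS m S) := by
    ext i
    simp [PresentedGroup.of]
  have : (FreeGroup.lift f) (blockβ m C r') = PresentedGroup.mk (relS m S) r' := by
    rw [← MonoidHom.comp_apply, hcomp, hmk]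
  rw [this]
  exact (QuotientGroup.eq_one_iff r').2 (Subgroup.subset_normalClosure hr')

def proj (m C : ℕ) (S : Set (List (Fin m))) (j : Fin C) :
    PresentedGroup (relSC m C S) →* PresentedGroup (relS m S) :=
  PresentedGroup.toGroup (proj_aux m C S j)

@[simp] lemma proj_of (m C : ℕ) (S : Set (List (Fin m))) (j : Fin C) (p : Fin C × Fin m) :
    proj m C S j (PresentedGroup.of p) =
      (if p.1 = j then (PresentedGroup.of p.2 : PresentedGroup (relS m S)) else 1) :=
  PresentedGroup.toGroup.of _

/-- **Lemma 3.4.**  For every `w ∈ Q`, `|φ(w)|_{Y_C} = C·|w|_Y`, where `φ : Q → Q_C` is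
the homomorphism induced by `y_i ↦ A_i`. -/
theorem statement5 (m C : ℕ) (hm : 1 ≤ m) (hC : 1 ≤ C)
    (S : Set (List (Fin m))) (hS : ∀ s ∈ S, s ≠ [])
    (φ : PresentedGroup (relS m S) →* PresentedGroup (relSC m C S))
    (hφ : ∀ i : Fin m, φ (PresentedGroup.of i) =
      (List.ofFn fun j : Fin C =>
        (PresentedGroup.of (j, i) : PresentedGroup (relSC m C S))).prod)
    (q : PresentedGroup (relS m S)) :
    wordLength (Set.range (PresentedGroup.of : Fin C × Fin m → PresentedGroup (relSC m C S)))
        (φ q) =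
      C * wordLength (Set.range (PresentedGroup.of : Fin m → PresentedGroup (relS m S))) q := by
  classical
  set sQ : Set (PresentedGroup (relS m S)) := Set.range PresentedGroup.of with hsQ
  set sC : Set (PresentedGroup (relSC m C S)) := Set.range PresentedGroup.of with hsC
  -- the retractions
  have hproj : ∀ (j : Fin C) (x : PresentedGroup (relS m S)), proj m C S j (φ x) = x := by
    intro j x
    have hcomp : (proj m C S j).comp φ = MonoidHom.id (PresentedGroup (relS m S)) := by
      ext i
      simp only [MonoidHom.comp_apply, MonoidHom.id_apply, hφ i, map_list_prod, List.map_ofFn]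
      have h1 : ((fun y => proj m C S j y) ∘ fun j' : Fin C =>
          (PresentedGroup.of (j', i) : PresentedGroup (relSC m C S)))
          = fun j' : Fin C => if j' = j then (PresentedGroup.of i : PresentedGroup (relS m S)) else 1 := by
        funext j'; simp
      rw [h1, prod_ite_single]
    exact DFunLike.congr_fun hcomp x
  -- the minimal word for q
  have hne_q := wordSet_nonempty (hsQ ▸ PresentedGroup.closure_range_of (relS m S)) q
  obtain ⟨lq, hlq_len, hlq_mem, hlq_prod⟩ := Nat.sInf_mem hne_q
  -- upper bound
  have upper : ∀ l : List (PresentedGroup (relS m S)), (∀ x ∈ l, x ∈ sQ ∨ x⁻¹ ∈ sQ) →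
      ∃ l' : List (PresentedGroup (relSC m C S)), l'.length = C * l.length ∧
        (∀ y ∈ l', y ∈ sC ∨ y⁻¹ ∈ sC) ∧ l'.prod = φ l.prod := by
    intro l
    induction l with
    | nil => exact fun _ => ⟨[], by simp⟩
    | cons a l ih =>
      intro h
      obtain ⟨l', hl1, hl2, hl3⟩ := ih fun x hx => h x (List.mem_cons_of_mem _ hx)
      obtain ⟨w, hw1, hw2, hw3⟩ : ∃ w : List (PresentedGroup (relSC m C S)), w.length = C ∧
          (∀ y ∈ w, y ∈ sC ∨ y⁻¹ ∈ sC) ∧ w.prod = φ a := by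
        rcases h a List.mem_cons_self with ⟨i, hi⟩ | ⟨i, hi⟩
        · refine ⟨List.ofFn fun j : Fin C => PresentedGroup.of (j, i), by simp, ?_, ?_⟩
          · intro y hy
            rw [List.mem_ofFn] at hy
            obtain ⟨j, rfl⟩ := hy
            exact Or.inl ⟨(j, i), rfl⟩
          · rw [← hi, hφ i]
        · refine ⟨((List.ofFn fun j : Fin C =>
              (PresentedGroup.of (j, i) : PresentedGroup (relSC m C S))).map (·⁻¹)).reverse, by simp, ?_, ?_⟩
          · intro y hy
            rw [List.mem_reverse, List.mem_map] at hy
            obtain ⟨z, hz, rfl⟩ := hy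
            rw [List.mem_ofFn] at hz
            obtain ⟨j, rfl⟩ := hz
            exact Or.inr (by rw [inv_inv]; exact ⟨(j, i), rfl⟩)
          · rw [← List.prod_inv_reverse, ← hφ i, ← map_inv, hi, inv_inv]
      refine ⟨w ++ l', ?_, ?_, ?_⟩
      · rw [List.length_append, hw1, hl1, List.length_cons, Nat.mul_succ, Nat.add_comm]
      · intro y hy
        rcases List.mem_append.mp hy with h' | h'
        exacts [hw2 y h', hl2 y h']
      · rw [List.prod_append, hw3, hl3, List.prod_cons, map_mul]
  have hub : wordLength sC (φ q) ≤ C * wordLength sQ q := by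
    apply Nat.sInf_le
    obtain ⟨l', h1, h2, h3⟩ := upper lq hlq_mem
    exact ⟨l', by rw [h1, hlq_len]; rfl, h2, by rw [h3, hlq_prod]⟩
  -- lower bound
  have hne_c := wordSet_nonempty (hsC ▸ PresentedGroup.closure_range_of (relSC m C S)) (φ q)
  obtain ⟨L, hL_len, hL_mem, hL_prod⟩ := Nat.sInf_mem hne_c
  have hlb : C * wordLength sQ q ≤ wordLength sC (φ q) := by
    have hj : ∀ j : Fin C,
        wordLength sQ q ≤ L.countP (fun x => decide (proj m C S j x ≠ 1)) := by
      intro j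
      set p : PresentedGroup (relS m S) → Bool := fun y => decide (y ≠ 1) with hp
      set Lj := (L.map (proj m C S j)).filter p with hLjdef
      have hlen : Lj.length = L.countP (fun x => decide (proj m C S j x ≠ 1)) := by
        rw [hLjdef, ← List.countP_eq_length_filter, List.countP_map]
        rfl
      have hprod : Lj.prod = q := by
        rw [hLjdef, prod_filter_one p (fun x hx => by simpa [hp] using hx),
          ← map_list_prod, hL_prod, hproj]
      have hmem : ∀ y ∈ Lj, y ∈ sQ ∨ y⁻¹ ∈ sQ := by
        intro y hy
        rw [hLjdef, List.mem_filter] at hy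
        obtain ⟨hy1, hy2⟩ := hy
        have hy2' : y ≠ 1 := by simpa [hp] using hy2
        rw [List.mem_map] at hy1
        obtain ⟨x, hxL, rfl⟩ := hy1
        rcases hL_mem x hxL with ⟨pp, hpp⟩ | ⟨pp, hpp⟩
        · rw [← hpp, proj_of] at hy2' ⊢
          by_cases hj' : pp.1 = j
          · rw [if_pos hj']
            exact Or.inl ⟨pp.2, rfl⟩
          · exact absurd (if_neg hj') hy2'
        · have hx : x = (PresentedGroup.of pp)⁻¹ := by rw [hpp, inv_inv]
          rw [hx, map_inv, proj_of] at hy2' ⊢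
          by_cases hj' : pp.1 = j
          · rw [if_pos hj']
            exact Or.inr (by rw [inv_inv]; exact ⟨pp.2, rfl⟩)
          · rw [if_neg hj', inv_one] at hy2'
            exact absurd rfl hy2'
      rw [← hlen]
      exact Nat.sInf_le ⟨Lj, rfl, hmem, hprod⟩
    have hcard : ∀ x ∈ L,
        (Finset.univ.filter fun j : Fin C => (fun j x => decide (proj m C S j x ≠ 1)) j x).card
          ≤ 1 := by
      intro x hx
      have : ∃ j₀ : Fin C, ∀ j : Fin C, proj m C S j x ≠ 1 → j = j₀ := by
        rcases hL_mem x hx with ⟨pp, hpp⟩ | ⟨pp, hpp⟩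
        · refine ⟨pp.1, fun j hne => ?_⟩
          rw [← hpp, proj_of] at hne
          by_contra hne2
          exact hne (if_neg fun h => hne2 h.symm)
        · refine ⟨pp.1, fun j hne => ?_⟩
          have hx' : x = (PresentedGroup.of pp)⁻¹ := by rw [hpp, inv_inv]
          rw [hx', map_inv, proj_of] at hne
          by_contra hne2
          rw [if_neg fun h => hne2 h.symm, inv_one] at hne
          exact hne rfl
      obtain ⟨j₀, hj₀⟩ := this
      calc (Finset.univ.filter fun j : Fin C => decide (proj m C S j x ≠ 1)).card
          ≤ ({j₀} : Finset (Fin C)).card := by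
            apply Finset.card_le_card
            intro j hjmem
            rw [Finset.mem_filter] at hjmem
            rw [Finset.mem_singleton]
            exact hj₀ j (of_decide_eq_true hjmem.2)
        _ = 1 := Finset.card_singleton j₀
    have hsum := sum_countP_le (fun j x => decide (proj m C S j x ≠ 1)) L hcard
    calc C * wordLength sQ q = ∑ _j : Fin C, wordLength sQ q := by
          rw [Finset.sum_const, Finset.card_univ, Fintype.card_fin, smul_eq_mul]
      _ ≤ ∑ j : Fin C, L.countP (fun x => decide (proj m C S j x ≠ 1)) :=
          Finset.sum_le_sum fun j _ => hj j
      _ ≤ L.length := hsum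
      _ = wordLength sC (φ q) := hL_len
  exact le_antisymm hub hlb
end

section
/- The subgroup Q̃ = φ(Q) of Q_C (the subgroup of Q_C generated by the images of A_1, …, A_m) is malnormal in Q_C: for every h ∈ Q_C with h ∉ φ(Q), one has h^{-1}·φ(Q)·h ∩ φ(Q) = {1}. -/
namespace Stmt6Aux
open Monoid CoprodI


variable {ι : Type*} [DecidableEq ι] {G : ι → Type*} [∀ i, Group (G i)] [∀ i, DecidableEq (G i)]

theorem word_prod_injective : Function.Injective (Word.prod : Word G → CoprodI G) :=
  fun w1 w2 h => Word.equiv.symm.injective (by exact h)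

theorem equiv_prod (w : Word G) : Word.equiv (Word.prod w) = w :=
  Word.equiv.apply_symm_apply w

/-- An element whose normal form is nonempty and starts with index `≠ i₀` is not in factor `i₀`. -/
theorem notmem_of_head_ne (i₀ : ι) (w : Word G) (hne : w.toList ≠ [])
    (hfst : (w.toList.head hne).1 ≠ i₀) :
    w.prod ∉ (CoprodI.of (i := i₀) (M := G)).range := by
  rintro ⟨a, ha⟩
  by_cases h1 : a = 1
  · subst h1
    rw [map_one] at ha
    have : w = Word.empty := word_prod_injective (by rw [← ha, Word.prod_empty])
    exact hne (by rw [this]; rfl)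
  · have hsing : Word.prod ⟨[⟨i₀, a⟩], by simpa, List.isChain_singleton _⟩ = CoprodI.of a := by
      simp [Word.prod]
    have hw : w = ⟨[⟨i₀, a⟩], by simpa, List.isChain_singleton _⟩ :=
      word_prod_injective (by rw [← ha, hsing])
    apply hfst
    have : w.toList = [⟨i₀, a⟩] := by rw [hw]
    simp [List.head_eq_iff_head?_eq_some, this]

theorem conj_key (i₀ : ι) : ∀ n : ℕ, ∀ h : CoprodI G,
    (Word.equiv h).toList.length ≤ n →
    h ∉ (CoprodI.of (i := i₀) (M := G)).range →
    ∀ a b : G i₀, CoprodI.of a * h = h * CoprodI.of b → a = 1 := by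
  intro n
  induction n with
  | zero =>
    intro h hlen hmem a b _
    exfalso
    apply hmem
    have : (Word.equiv h).toList = [] := List.eq_nil_of_length_eq_zero (Nat.le_zero.mp hlen)
    have hw : Word.equiv h = Word.empty := Word.ext this
    have hp : Word.prod (Word.equiv h) = h := Word.equiv.symm_apply_apply h
    have : h = 1 := by rw [← hp, hw, Word.prod_empty]
    exact this ▸ one_mem _
  | succ n ih =>
    intro h hlen hmem a b heq
    set w := Word.equiv h with hwdef
    have hprod : Word.prod w = h := Word.equiv.symm_apply_apply h
    rcases hl : w.toList with _ | ⟨⟨i, x⟩, l'⟩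
    · exfalso
      apply hmem
      have hw : w = Word.empty := Word.ext hl
      rw [← hprod, hw, Word.prod_empty]
      exact one_mem _
    · -- h = of x * prod w'
      have hx1 : x ≠ 1 := w.ne_one ⟨i, x⟩ (hl ▸ List.mem_cons_self)
      by_cases hi : i = i₀
      · -- first letter from factor i₀
        subst hi
        have hchain' : l'.Chain' fun s t => s.1 ≠ t.1 := by
          have := w.chain_ne; rw [hl] at this; exact this.tail
        set w' : Word G := ⟨l', fun s hs => w.ne_one s (hl ▸ List.mem_cons_of_mem _ hs), hchain'⟩
          with hw'def
        have hdecomp : h = CoprodI.of x * w'.prod := by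
          rw [← hprod, Word.prod, Word.prod, hl]
          simp
          rfl
        have hl'ne : l' ≠ [] := by
          rintro rfl
          apply hmem
          rw [hdecomp]
          have : w'.prod = 1 := by simp [Word.prod, hw'def]
          rw [this, mul_one]
          exact ⟨x, rfl⟩
        have hhead : (l'.head hl'ne).1 ≠ i := by
          have hc := w.chain_ne
          rw [hl, ← l'.cons_head_tail hl'ne, List.isChain_cons_cons] at hc
          exact Ne.symm hc.1
        have hmem' : w'.prod ∉ (CoprodI.of (i := i) (M := G)).range :=
          notmem_of_head_ne i w' hl'ne hhead
        have hlen' : (Word.equiv w'.prod).toList.length ≤ n := by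
          rw [equiv_prod]
          have : w.toList.length ≤ n + 1 := hlen
          rw [hl] at this
          simpa using this
        have heq' : CoprodI.of (x⁻¹ * a * x) * w'.prod = w'.prod * CoprodI.of b :=
          calc CoprodI.of (x⁻¹ * a * x) * w'.prod
              = (CoprodI.of x)⁻¹ * (CoprodI.of a * h) := by
                rw [hdecomp, map_mul, map_mul, map_inv]; group
            _ = (CoprodI.of x)⁻¹ * (h * CoprodI.of b) := by rw [heq]
            _ = w'.prod * CoprodI.of b := by rw [hdecomp]; group
        have := ih w'.prod hlen' hmem' (x⁻¹ * a * x) b heq'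
        have : a * x = x := by
          have h2 : x * (x⁻¹ * a * x) = x := by rw [this, mul_one]
          rwa [← mul_assoc, ← mul_assoc, mul_inv_cancel, one_mul] at h2
        exact mul_right_cancel (by rwa [one_mul])
      · -- first letter not from factor i₀; look at the last letter
        have hne : w.toList ≠ [] := by rw [hl]; simp
        rcases hgl : w.toList.getLast hne with ⟨j, y⟩
        have hy1 : y ≠ 1 := w.ne_one ⟨j, y⟩ (hgl ▸ List.getLast_mem hne)
        have hsplit : w.toList = w.toList.dropLast ++ [⟨j, y⟩] := by
          rw [← hgl]; exact (List.dropLast_append_getLast hne).symm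
        by_cases hj : j = i₀
        · -- last letter from factor i₀
          subst hj
          have hchain := w.chain_ne
          rw [hsplit, List.isChain_append] at hchain
          have hsub : ∀ s ∈ w.toList.dropLast, s ∈ w.toList :=
            fun s hs => (List.dropLast_sublist _).subset hs
          set w'' : Word G := ⟨w.toList.dropLast,
            fun s hs => w.ne_one s (hsub s hs), hchain.1⟩ with hw''def
          have hdecomp : h = w''.prod * CoprodI.of y := by
            rw [← hprod, Word.prod]
            conv_lhs => rw [hsplit]
            simp [Word.prod, hw''def]
          have hl'ne2 : l' ≠ [] := by
            intro hemp
            have h4 : w.toList.getLast? = some ⟨i, x⟩ := by rw [hl, hemp]; rfl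
            have h5 : w.toList.getLast? = some ⟨j, y⟩ := by
              rw [List.getLast?_eq_getLast hne, hgl]
            rw [h4] at h5
            exact hi (congrArg Sigma.fst (Option.some_injective _ h5))
          have hdrop : w.toList.dropLast = ⟨i, x⟩ :: l'.dropLast := by
            rw [hl, List.dropLast_cons_of_ne_nil hl'ne2]
          have hl''ne : w.toList.dropLast ≠ [] := by rw [hdrop]; simp
          have hhead'' : (w.toList.dropLast.head hl''ne).1 ≠ j := by
            have h2 : w.toList.dropLast.head hl''ne = ⟨i, x⟩ := by
              rw [List.head_eq_iff_head?_eq_some, hdrop]; rfl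
            rw [h2]
            exact hi
          have hmem'' : w''.prod ∉ (CoprodI.of (i := j) (M := G)).range :=
            notmem_of_head_ne j w'' hl''ne hhead''
          have hlen'' : (Word.equiv w''.prod).toList.length ≤ n := by
            rw [equiv_prod]
            have h1 : w.toList.length ≤ n + 1 := hlen
            have h2 : w.toList.length = w.toList.dropLast.length + 1 := by
              rw [hsplit]; simp
            simp only [hw''def]
            omega
          have heq'' : CoprodI.of a * w''.prod = w''.prod * CoprodI.of (y * b * y⁻¹) :=
            calc CoprodI.of a * w''.prod
                = (CoprodI.of a * h) * (CoprodI.of y)⁻¹ := by rw [hdecomp]; group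
              _ = (h * CoprodI.of b) * (CoprodI.of y)⁻¹ := by rw [heq]
              _ = w''.prod * CoprodI.of (y * b * y⁻¹) := by
                  rw [hdecomp, map_mul, map_mul, map_inv]; group
          exact ih w''.prod hlen'' hmem'' a (y * b * y⁻¹) heq''
        · -- neither end is from factor i₀
          by_cases hb1 : b = 1
          · subst hb1
            rw [map_one, mul_one] at heq
            have h1 : CoprodI.of a * h = 1 * h := by rw [heq, one_mul]
            have h2 : CoprodI.of a = 1 := mul_right_cancel h1
            exact CoprodI.of_injective i₀ (by rw [h2, map_one])
          · by_contra ha1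
            have hLne : ∀ s ∈ (⟨i₀, a⟩ : Σ i, G i) :: w.toList, s.2 ≠ 1 := by
              intro s hs
              rcases List.mem_cons.mp hs with h | h
              · subst h; exact ha1
              · exact w.ne_one s h
            have hLchain : ((⟨i₀, a⟩ : Σ i, G i) :: w.toList).Chain'
                (fun s t => s.1 ≠ t.1) := by
              show List.IsChain _ _
              rw [List.isChain_cons]
              refine ⟨?_, w.chain_ne⟩
              intro t ht
              have : w.toList.head? = some ⟨i, x⟩ := by rw [hl]; rfl
              rw [this, Option.mem_some_iff] at ht
              subst ht
              exact Ne.symm hi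
            have hRne : ∀ s ∈ w.toList ++ [(⟨i₀, b⟩ : Σ i, G i)], s.2 ≠ 1 := by
              intro s hs
              rcases List.mem_append.mp hs with h | h
              · exact w.ne_one s h
              · rw [List.mem_singleton] at h; subst h; exact hb1
            have hRchain : (w.toList ++ [(⟨i₀, b⟩ : Σ i, G i)]).Chain'
                (fun s t => s.1 ≠ t.1) := by
              show List.IsChain _ _
              rw [List.isChain_append]
              refine ⟨w.chain_ne, List.isChain_singleton _, ?_⟩
              intro s hs t ht
              have hgl? : w.toList.getLast? = some ⟨j, y⟩ := by
                rw [List.getLast?_eq_getLast hne, hgl]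
              rw [hgl?, Option.mem_some_iff] at hs
              rw [List.head?_cons, Option.mem_some_iff] at ht
              subst hs; subst ht
              exact hj
            set wL : Word G := ⟨_, hLne, hLchain⟩ with hwL
            set wR : Word G := ⟨_, hRne, hRchain⟩ with hwR
            have prodL : wL.prod = CoprodI.of a * h := by
              rw [← hprod, Word.prod, Word.prod, hwL]
              simp
            have prodR : wR.prod = h * CoprodI.of b := by
              rw [← hprod, Word.prod, Word.prod, hwR]
              simp
            have hEq : wL = wR := word_prod_injective (by rw [prodL, prodR, heq])
            have hlists : (⟨i₀, a⟩ : Σ i, G i) :: w.toList =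
                w.toList ++ [(⟨i₀, b⟩ : Σ i, G i)] := congrArg Word.toList hEq
            rw [hl, List.cons_append] at hlists
            have : (⟨i₀, a⟩ : Σ i, G i) = ⟨i, x⟩ := ((List.cons.injEq _ _ _ _).mp hlists).1
            exact hi (congrArg Sigma.fst this).symm

theorem factor_malnormal (i₀ : ι) (h : CoprodI G)
    (hmem : h ∉ (CoprodI.of (i := i₀) (M := G)).range)
    (g : CoprodI G) (hg : g ∈ (CoprodI.of (i := i₀) (M := G)).range)
    (hconj : h⁻¹ * g * h ∈ (CoprodI.of (i := i₀) (M := G)).range) : g = 1 := by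
  obtain ⟨a, rfl⟩ := hg
  obtain ⟨b, hb⟩ := hconj
  have heq : CoprodI.of a * h = h * CoprodI.of b := by
    rw [hb]; group
  have := conj_key i₀ (Word.equiv h).toList.length h le_rfl hmem a b heq
  rw [this, map_one]

end Stmt6Aux

namespace Stmt6
open Monoid


variable {m : ℕ} (C' : ℕ) (S : Set (List (Fin m)))

/-- The subtype of non-initial letters. -/
def X (C' m : ℕ) : Type := {p : Fin (C'+1) × Fin m // p.1 ≠ 0}

/-- Two-factor family: `Q` at `true`, free group at `false`. -/
def Fam : Bool → Type := fun b =>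
  bif b then PresentedGroup (relS m S) else FreeGroup (X C' m)

instance : ∀ b, Group (Fam C' S b) := fun b => by
  cases b
  · exact (inferInstance : Group (FreeGroup (X C' m)))
  · exact (inferInstance : Group (PresentedGroup (relS m S)))

/-- Coproduct `Q * F`. -/
abbrev K := Monoid.CoprodI (Fam C' S)

def inlK : PresentedGroup (relS m S) →* K C' S := Monoid.CoprodI.of (M := Fam C' S) (i := true)
def inrK : FreeGroup (X C' m) →* K C' S := Monoid.CoprodI.of (M := Fam C' S) (i := false)

/-- The tail word `a_{1,i} ⋯ a_{C-1,i}` in the free factor. -/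
def Rword (i : Fin m) : FreeGroup (X C' m) :=
  (List.ofFn fun j : Fin C' =>
    FreeGroup.of (⟨(j.succ, i), Fin.succ_ne_zero j⟩ : X C' m)).prod

/-- Values of the basis-change map on generators. -/
def ψ₀ : Fin (C'+1) × Fin m → K C' S := fun p =>
  if h : p.1 = 0 then
    inlK C' S (PresentedGroup.of p.2) * (inrK C' S (Rword C' p.2))⁻¹
  else inrK C' S (FreeGroup.of ⟨p, h⟩)

lemma lift_blockA (i : Fin m) :
    FreeGroup.lift (ψ₀ C' S) (blockA m (C'+1) i) =
      inlK C' S (PresentedGroup.of i) := by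
  rw [blockA, map_list_prod, List.map_ofFn]
  have h0 : ((FreeGroup.lift (ψ₀ C' S)) ∘ fun j : Fin (C'+1) => FreeGroup.of (j, i)) =
      fun j : Fin (C'+1) => ψ₀ C' S (j, i) := by
    funext j; simp [Function.comp]
  rw [h0, List.ofFn_succ]
  have h1 : ψ₀ C' S ((0 : Fin (C'+1)), i) =
      inlK C' S (PresentedGroup.of i) * (inrK C' S (Rword C' i))⁻¹ := by
    simp [ψ₀]
  have h2 : (List.ofFn fun j : Fin C' => ψ₀ C' S (j.succ, i)).prod =
      inrK C' S (Rword C' i) := by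
    have hfun : (fun j : Fin C' => ψ₀ C' S (j.succ, i)) =
        fun j : Fin C' =>
          inrK C' S (FreeGroup.of (⟨(j.succ, i), Fin.succ_ne_zero j⟩ : X C' m)) := by
      funext j; simp [ψ₀, Fin.succ_ne_zero]
    rw [hfun, Rword]
    erw [map_list_prod, List.map_ofFn]
    rfl
  rw [List.prod_cons, h1, h2]
  simp

lemma lift_kills : ∀ r ∈ relSC m (C'+1) S, FreeGroup.lift (ψ₀ C' S) r = 1 := by
  rintro _ ⟨r, hr, rfl⟩
  have hcomp : (FreeGroup.lift (ψ₀ C' S)).comp (blockβ m (C'+1)) =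
      (inlK C' S).comp (FreeGroup.lift PresentedGroup.of) := by
    apply FreeGroup.ext_hom
    intro x
    simp only [MonoidHom.comp_apply, blockβ, FreeGroup.lift_apply_of]
    exact lift_blockA C' S x
  have h1 : FreeGroup.lift (ψ₀ C' S) (blockβ m (C'+1) r) =
      inlK C' S (FreeGroup.lift PresentedGroup.of r) := by
    have := congrArg (fun f => f r) hcomp
    simpa using this
  rw [h1]
  have h2 : (FreeGroup.lift PresentedGroup.of) r = PresentedGroup.mk (relS m S) r := by
    have : (FreeGroup.lift PresentedGroup.of : FreeGroup (Fin m) →* _) =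
        PresentedGroup.mk (relS m S) := by
      apply FreeGroup.ext_hom; intro x; simp [PresentedGroup.of]
    rw [this]
  rw [h2]
  have h3 : PresentedGroup.mk (relS m S) r = 1 := by
    rw [← MonoidHom.mem_ker]
    have : Subgroup.normalClosure (relS m S) ≤ (PresentedGroup.mk (relS m S)).ker := by
      intro x hx
      rw [MonoidHom.mem_ker]
      exact (QuotientGroup.eq_one_iff x).mpr hx
    exact this (Subgroup.subset_normalClosure hr)
  rw [h3, map_one]

/-- The descended map `Q_C →* Q * F`. -/
def ψbar : PresentedGroup (relSC m (C'+1) S) →* K C' S :=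
  PresentedGroup.toGroup (lift_kills C' S)

@[simp] lemma ψbar_of (p : Fin (C'+1) × Fin m) :
    ψbar C' S (PresentedGroup.of p) = ψ₀ C' S p :=
  PresentedGroup.toGroup.of _

variable (φ : PresentedGroup (relS m S) →* PresentedGroup (relSC m (C'+1) S))

/-- The factor maps for the inverse `Q * F →* Q_C`. -/
def κfun : ∀ b : Bool, Fam C' S b →* PresentedGroup (relSC m (C'+1) S)
  | true => φ
  | false => FreeGroup.lift fun x : X C' m => PresentedGroup.of x.1

def κ : K C' S →* PresentedGroup (relSC m (C'+1) S) :=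
  Monoid.CoprodI.lift (κfun C' S φ)

@[simp] lemma κ_inl (q : PresentedGroup (relS m S)) :
    κ C' S φ (inlK C' S q) = φ q := by
  exact Monoid.CoprodI.lift_of (M := Fam C' S) (κfun C' S φ) (i := true) q

@[simp] lemma κ_inr (x : FreeGroup (X C' m)) :
    κ C' S φ (inrK C' S x) =
      (FreeGroup.lift fun x : X C' m => PresentedGroup.of x.1) x := by
  exact Monoid.CoprodI.lift_of (M := Fam C' S) (κfun C' S φ) (i := false) x

lemma mk_blockA (i : Fin m) :
    (List.ofFn fun j : Fin (C'+1) =>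
        (PresentedGroup.of (j, i) : PresentedGroup (relSC m (C'+1) S))).prod =
      PresentedGroup.mk (relSC m (C'+1) S) (blockA m (C'+1) i) := by
  rw [blockA, map_list_prod, List.map_ofFn]
  rfl

lemma ψbar_mk (w : FreeGroup (Fin (C'+1) × Fin m)) :
    ψbar C' S (PresentedGroup.mk (relSC m (C'+1) S) w) =
      FreeGroup.lift (ψ₀ C' S) w := rfl

lemma ψbar_φ (hφ : ∀ i : Fin m, φ (PresentedGroup.of i) =
    (List.ofFn fun j : Fin (C'+1) =>
      (PresentedGroup.of (j, i) : PresentedGroup (relSC m (C'+1) S))).prod)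
    (q : PresentedGroup (relS m S)) :
    ψbar C' S (φ q) = inlK C' S q := by
  have hcomp : (ψbar C' S).comp φ = inlK C' S := by
    apply PresentedGroup.ext
    intro i
    rw [MonoidHom.comp_apply, hφ i, mk_blockA, ψbar_mk, lift_blockA]
  have := congrArg (fun f => f q) hcomp
  simpa using this

lemma κ_ψbar (hφ : ∀ i : Fin m, φ (PresentedGroup.of i) =
    (List.ofFn fun j : Fin (C'+1) =>
      (PresentedGroup.of (j, i) : PresentedGroup (relSC m (C'+1) S))).prod)
    (x : PresentedGroup (relSC m (C'+1) S)) :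
    κ C' S φ (ψbar C' S x) = x := by
  have hcomp : (κ C' S φ).comp (ψbar C' S) =
      MonoidHom.id (PresentedGroup (relSC m (C'+1) S)) := by
    apply PresentedGroup.ext
    intro p
    rw [MonoidHom.comp_apply, ψbar_of, MonoidHom.id_apply]
    by_cases hp : p.1 = 0
    · rw [ψ₀, dif_pos hp, map_mul, map_inv, κ_inl, κ_inr]
      have hR : (FreeGroup.lift fun x : X C' m => PresentedGroup.of x.1)
          (Rword C' p.2) =
          (List.ofFn fun j : Fin C' =>
            (PresentedGroup.of (j.succ, p.2) :
              PresentedGroup (relSC m (C'+1) S))).prod := by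
        rw [Rword]
        erw [map_list_prod, List.map_ofFn]
        congr 1
      rw [hR, hφ p.2, List.ofFn_succ, List.prod_cons]
      have hp' : p = ((0 : Fin (C'+1)), p.2) := Prod.ext hp rfl
      rw [mul_assoc, mul_inv_cancel, mul_one]
      exact (congrArg PresentedGroup.of hp').symm
    · rw [ψ₀, dif_neg hp, κ_inr]
      exact FreeGroup.lift_apply_of (f := fun x : X C' m => PresentedGroup.of x.1) (x := ⟨p, hp⟩)
  have := congrArg (fun f => f x) hcomp
  simpa using this

lemma ψbar_injective (hφ : ∀ i : Fin m, φ (PresentedGroup.of i) =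
    (List.ofFn fun j : Fin (C'+1) =>
      (PresentedGroup.of (j, i) : PresentedGroup (relSC m (C'+1) S))).prod) :
    Function.Injective (ψbar C' S (m := m)) := by
  intro x y hxy
  rw [← κ_ψbar C' S φ hφ x, ← κ_ψbar C' S φ hφ y, hxy]


end Stmt6

/-- **Lemma 3.5.**  The subgroup `Q̃ = φ(Q)` of `Q_C` is malnormal in `Q_C`: for every
`h ∈ Q_C` with `h ∉ φ(Q)`, one has `h⁻¹·φ(Q)·h ∩ φ(Q) = {1}`. -/
theorem statement6 (m C : ℕ) (hm : 1 ≤ m) (hC : 1 ≤ C)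
    (S : Set (List (Fin m))) (hS : ∀ s ∈ S, s ≠ [])
    (φ : PresentedGroup (relS m S) →* PresentedGroup (relSC m C S))
    (hφ : ∀ i : Fin m, φ (PresentedGroup.of i) =
      (List.ofFn fun j : Fin C =>
        (PresentedGroup.of (j, i) : PresentedGroup (relSC m C S))).prod) :
    ∀ h : PresentedGroup (relSC m C S), h ∉ φ.range →
      ∀ g : PresentedGroup (relSC m C S), g ∈ φ.range →
        h⁻¹ * g * h ∈ φ.range → g = 1 := by
  obtain ⟨C', rfl⟩ : ∃ C', C = C' + 1 := ⟨C - 1, by omega⟩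
  intro h hmem g hg hconj
  classical
  have hinj := Stmt6.ψbar_injective C' S φ hφ
  have hfwd : ∀ x, x ∈ φ.range →
      Stmt6.ψbar C' S x ∈ (Stmt6.inlK C' S).range := by
    rintro x ⟨q, rfl⟩
    exact ⟨q, (Stmt6.ψbar_φ C' S φ hφ q).symm⟩
  have hbwd : ∀ x, Stmt6.ψbar C' S x ∈ (Stmt6.inlK C' S).range → x ∈ φ.range := by
    rintro x ⟨q, hq⟩
    refine ⟨q, hinj ?_⟩
    rw [Stmt6.ψbar_φ C' S φ hφ q, hq]
  have hmem' : Stmt6.ψbar C' S h ∉ (Stmt6.inlK C' S).range :=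
    fun hc => hmem (hbwd h hc)
  have hg' : Stmt6.ψbar C' S g ∈ (Stmt6.inlK C' S).range := hfwd g hg
  have hconj' : (Stmt6.ψbar C' S h)⁻¹ * Stmt6.ψbar C' S g * Stmt6.ψbar C' S h ∈
      (Stmt6.inlK C' S).range := by
    have := hfwd _ hconj
    rwa [map_mul, map_mul, map_inv] at this
  have h1 : Stmt6.ψbar C' S g = 1 :=
    Stmt6Aux.factor_malnormal (G := Stmt6.Fam C' S) true
      (Stmt6.ψbar C' S h) hmem' (Stmt6.ψbar C' S g) hg' hconj'
  exact hinj (by rw [h1, map_one])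
end

section
/- For all pairs (y₁,a₁), (y₂,a₂) ∈ (𝒜 ⊔ ℬ) × 𝒜 and all ε₁, ε₂ ∈ {±1}, either (y₁,a₁) = (y₂,a₂) and ε₁ = -ε₂, or fewer than D/4 letters of each factor cancel in the product v(y₁,a₁)^{ε₁}·v(y₂,a₂)^{ε₂}; that is, the reduced length of v(y₁,a₁)^{ε₁}·v(y₂,a₂)^{ε₂} is greater than 3D/2. In particular, the family (v(y,a)) indexed by (y,a) ∈ (𝒜 ⊔ ℬ) × 𝒜 is a basis of a free subgroup of F(ℬ): the homomorphism from the free group on (𝒜 ⊔ ℬ) × 𝒜 to F(ℬ) sending (y,a) to v(y,a) is injective. -/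
/-- The alphabet `𝒜₁ ⊔ ℬ` (also used as the index set `𝒜 ⊔ ℬ`): `Sum.inl a` is the
letter `a₁ ∈ 𝒜₁` (resp. the index `a ∈ 𝒜`), and `Sum.inr i` encodes `b₁, b₂ ∈ ℬ`. -/
abbrev MLetter (n : ℕ) := Sum (Fin n) (Fin 2)

/-- `D = 4n(n+2)`. -/
def Dconst (n : ℕ) : ℕ := 4 * n * (n + 2)

/-- `b₁`. -/
def bb1 (n : ℕ) : FreeGroup (MLetter n) := FreeGroup.of (Sum.inr 0)

/-- `b₂`. -/
def bb2 (n : ℕ) : FreeGroup (MLetter n) := FreeGroup.of (Sum.inr 1)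

/-- `k = η(y,a)`, normalized to lie in `{1, …, n(n+2) = D/4}`. -/
def kVal (n : ℕ) (η : MLetter n × Fin n ≃ Fin (n * (n + 2))) (y : MLetter n) (a : Fin n) :
    ℕ :=
  (η (y, a)).val + 1

/-- `v(y,a) = b₁^k (b₂b₁)^{(D-2k)/2} b₂^k`, a reduced word of length `D` in `F(ℬ)`. -/
def vWord (n : ℕ) (η : MLetter n × Fin n ≃ Fin (n * (n + 2))) (y : MLetter n) (a : Fin n) :
    FreeGroup (MLetter n) :=
  bb1 n ^ kVal n η y a * (bb2 n * bb1 n) ^ (2 * n * (n + 2) - kVal n η y a) *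
    bb2 n ^ kVal n η y a

/-- `w^ε` for a sign `ε : Bool` (`true ↦ w`, `false ↦ w⁻¹`). -/
def bpow {α : Type*} (w : FreeGroup α) (ε : Bool) : FreeGroup α := if ε then w else w⁻¹

/-- The letter map of the automorphism `φ_y^{ε}`. -/
def phiAux (n : ℕ) (η : MLetter n × Fin n ≃ Fin (n * (n + 2))) (y : MLetter n) (ε : Bool) :
    MLetter n → FreeGroup (MLetter n)
  | Sum.inl a => bpow (vWord n η y a) ε * FreeGroup.of (Sum.inl a)
  | Sum.inr i => FreeGroup.of (Sum.inr i)

/-- The automorphism `φ_y^{ε}` of `F(𝒜₁ ⊔ ℬ)`: it fixes `ℬ` pointwise and sends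
`a₁ ↦ v(y,a) a₁` (for `ε = +1`), resp. `a₁ ↦ v(y,a)⁻¹ a₁` (for `ε = -1`). -/
def phiM (n : ℕ) (η : MLetter n × Fin n ≃ Fin (n * (n + 2))) (y : MLetter n) (ε : Bool) :
    FreeGroup (MLetter n) →* FreeGroup (MLetter n) :=
  FreeGroup.lift (phiAux n η y ε)

/-- The map `ρ_y^{ε}`: `ρ_y^{+1}(w) = φ_y(w)·y⁻¹` (with `y` read as the letter `a₁`
when `y = a ∈ 𝒜`), `ρ_{b_i}^{-1}(w) = φ_{b_i}^{-1}(w)·b_i`, and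
`ρ_a^{-1}(w) = φ_a^{-1}(w)·v(a,a)⁻¹a₁`. -/
def rhoM (n : ℕ) (η : MLetter n × Fin n ≃ Fin (n * (n + 2))) (y : MLetter n) (ε : Bool)
    (w : FreeGroup (MLetter n)) : FreeGroup (MLetter n) :=
  if ε then phiM n η y true w * (FreeGroup.of y)⁻¹
  else
    match y with
    | Sum.inl a =>
        phiM n η (Sum.inl a) false w * (vWord n η (Sum.inl a) a)⁻¹ *
          FreeGroup.of (Sum.inl a)
    | Sum.inr i => phiM n η (Sum.inr i) false w * FreeGroup.of (Sum.inr i)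

/-- `‖w‖`: the length of the reduced word of `w`. -/
def rlen (n : ℕ) (w : FreeGroup (MLetter n)) : ℕ := (FreeGroup.toWord w).length

/-- `|w|_𝒜`: the number of `𝒜₁^{±1}`-letters in the reduced word of `w`. -/
def aCount (n : ℕ) (w : FreeGroup (MLetter n)) : ℕ :=
  ((FreeGroup.toWord w).filter fun p => p.1.isLeft).length

/-- The `𝒜`-projection `δ(w)`: delete the `ℬ^{±1}`-letters of the reduced word of `w`
and replace each `a₁^{±1}` by `a^{±1}`. -/
def aProj (n : ℕ) (w : FreeGroup (MLetter n)) : List (Fin n × Bool) :=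
  (FreeGroup.toWord w).filterMap fun p =>
    Sum.elim (fun a => some (a, p.2)) (fun _ => none) p.1

/-- `w ∈ F(ℬ)`. -/
def IsBWord (n : ℕ) (w : FreeGroup (MLetter n)) : Prop :=
  ∀ p ∈ FreeGroup.toWord w, (p.1).isRight = true

/-- The product `u₀ x₁^{δ₁} u₁ x₂^{δ₂} ⋯ u_{k-1} x_k^{δ_k} u_k`
(with `0`-based indexing of `u`, `x`, `d`). -/
def wordProd (n : ℕ) (k : ℕ) (u : ℕ → FreeGroup (MLetter n)) (x : ℕ → Fin n)
    (d : ℕ → Bool) : FreeGroup (MLetter n) :=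
  ((List.range k).map fun i => u i * bpow (FreeGroup.of (Sum.inl (x i))) (d i)).prod * u k

/-- A computation: `w_{i+1} = ρ_{y_i}^{ε_i}(w_i)` for all `i < t`. -/
def IsComputation (n : ℕ) (η : MLetter n × Fin n ≃ Fin (n * (n + 2))) (t : ℕ)
    (y : ℕ → MLetter n) (e : ℕ → Bool) (w : ℕ → FreeGroup (MLetter n)) : Prop :=
  ∀ i < t, w (i + 1) = rhoM n η (y i) (e i) (w i)

/-- A semi-computation: `w_{i+1} = φ_{y_i}^{ε_i}(w_i)` for all `i < t`. -/
def IsSemiComputation (n : ℕ) (η : MLetter n × Fin n ≃ Fin (n * (n + 2))) (t : ℕ)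
    (y : ℕ → MLetter n) (e : ℕ → Bool) (w : ℕ → FreeGroup (MLetter n)) : Prop :=
  ∀ i < t, w (i + 1) = phiM n η (y i) (e i) (w i)

/-- The history `y₁^{ε₁} ⋯ y_t^{ε_t}` is a reduced word: there is no `i` with
`y_{i+1} = y_i` and `ε_{i+1} = -ε_i`. -/
def ReducedHistory (n : ℕ) (t : ℕ) (y : ℕ → MLetter n) (e : ℕ → Bool) : Prop :=
  ∀ i, i + 1 < t → ¬(y (i + 1) = y i ∧ e (i + 1) = !e i)

/-- A rear shift of `w 0`: a computation with reduced history such that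
`|w₀|_𝒜 = ⋯ = |w_{t-1}|_𝒜 = |w_t|_𝒜 + 1`. -/
def IsRearShift (n : ℕ) (η : MLetter n × Fin n ≃ Fin (n * (n + 2))) (t : ℕ)
    (y : ℕ → MLetter n) (e : ℕ → Bool) (w : ℕ → FreeGroup (MLetter n)) : Prop :=
  1 ≤ t ∧ IsComputation n η t y e w ∧ ReducedHistory n t y e ∧
    ∀ i < t, aCount n (w i) = aCount n (w t) + 1

/-- A shift of `w 0`: a computation with reduced history ending at the empty word. -/
def IsShift (n : ℕ) (η : MLetter n × Fin n ≃ Fin (n * (n + 2))) (t : ℕ)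
    (y : ℕ → MLetter n) (e : ℕ → Bool) (w : ℕ → FreeGroup (MLetter n)) : Prop :=
  IsComputation n η t y e w ∧ ReducedHistory n t y e ∧ w t = 1

/-- A reduced word is cyclically reduced if its first letter is not the inverse
of its last letter. -/
def CyclicallyReducedWord {α : Type*} (l : List (α × Bool)) : Prop :=
  ∀ a ∈ l.head?, ∀ b ∈ l.getLast?, a ≠ (b.1, !b.2)

section Aux5
set_option linter.unusedSectionVars false
open List FreeGroup
open List FreeGroup

variable {α : Type*} [DecidableEq α]

/-- The no-cancellation relation between adjacent letters. -/
def RD (a b : α × Bool) : Prop := ¬(a.1 = b.1 ∧ a.2 = !b.2)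

theorem chain'_cons_iff {β : Type*} {R : β → β → Prop} {a b : β} {l : List β} :
    List.Chain' R (a :: b :: l) ↔ R a b ∧ List.Chain' R (b :: l) := List.isChain_cons_cons

theorem chain'_append_iff {β : Type*} {R : β → β → Prop} {l₁ l₂ : List β} :
    List.Chain' R (l₁ ++ l₂) ↔ List.Chain' R l₁ ∧ List.Chain' R l₂ ∧
      ∀ x ∈ l₁.getLast?, ∀ y ∈ l₂.head?, R x y := List.isChain_append

theorem chain'_reduce (L : List (α × Bool)) : List.Chain' RD (FreeGroup.reduce L) := by
  induction L with
  | nil => simp [List.Chain']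
  | cons x L ih =>
    rw [FreeGroup.reduce.cons]
    rcases h : FreeGroup.reduce L with _ | ⟨y, ys⟩
    · simp [List.Chain']
    · rw [h] at ih
      by_cases hxy : x.1 = y.1 ∧ x.2 = !y.2
      · simpa [hxy, List.Chain'] using ih.tail
      · simpa [hxy, chain'_cons_iff] using (⟨hxy, ih⟩ : RD x y ∧ List.Chain' RD (y :: ys))

theorem reduce_eq_self_of_chain' {L : List (α × Bool)} (h : List.Chain' RD L) :
    FreeGroup.reduce L = L := by
  induction L with
  | nil => rfl
  | cons x L ih =>
    rw [FreeGroup.reduce.cons, ih h.tail]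
    rcases L with _ | ⟨y, ys⟩
    · rfl
    · have hxy : RD x y := chain'_cons_iff.mp h |>.1
      simp [RD] at hxy
      by_cases h1 : x.1 = y.1
      · simp [h1, hxy h1]
      · simp [h1]

theorem chain'_toWord (x : FreeGroup α) : List.Chain' RD x.toWord := by
  rw [← FreeGroup.reduce_toWord]; exact chain'_reduce _

theorem toWord_mk_of_chain' {L : List (α × Bool)} (h : List.Chain' RD L) :
    (FreeGroup.mk L).toWord = L := by
  rw [FreeGroup.toWord_mk, reduce_eq_self_of_chain' h]

theorem mk_pow_of (x : α) (k : ℕ) :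
    (FreeGroup.of x : FreeGroup α) ^ k = FreeGroup.mk (List.replicate k (x, true)) := by
  rw [FreeGroup.of, FreeGroup.pow_mk]
  congr 1
  induction k with
  | zero => rfl
  | succ k ih => simp [List.replicate_succ, ih]

theorem mk_single_inv (x : α) :
    ((FreeGroup.of x)⁻¹ : FreeGroup α) = FreeGroup.mk [(x, false)] := by
  rw [FreeGroup.of, FreeGroup.inv_mk]; rfl

theorem mk_pow_of_inv (x : α) (k : ℕ) :
    ((FreeGroup.of x)⁻¹ : FreeGroup α) ^ k = FreeGroup.mk (List.replicate k (x, false)) := by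
  rw [mk_single_inv, FreeGroup.pow_mk]
  congr 1
  induction k with
  | zero => rfl
  | succ k ih => simp [List.replicate_succ, ih]

theorem pow_mul_invPow_ge {G : Type*} [Group G] (a : G) {i j : ℕ} (h : j ≤ i) :
    a^i * (a⁻¹)^j = a^(i-j) := by
  have h1 : a^i = a^(i-j) * a^j := by rw [← pow_add, Nat.sub_add_cancel h]
  rw [h1, inv_pow, mul_assoc, mul_inv_cancel, mul_one]

theorem pow_mul_invPow_le {G : Type*} [Group G] (a : G) {i j : ℕ} (h : i ≤ j) :
    a^i * (a⁻¹)^j = (a⁻¹)^(j-i) := by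
  have h2 : (a⁻¹)^j = (a⁻¹)^i * (a⁻¹)^(j-i) := by rw [← pow_add, Nat.add_sub_cancel' h]
  rw [h2, ← mul_assoc, inv_pow, mul_inv_cancel, one_mul]


/-- letters -/
def B1 (n : ℕ) : MLetter n × Bool := (Sum.inr 0, true)
def B2 (n : ℕ) : MLetter n × Bool := (Sum.inr 1, true)
def B1' (n : ℕ) : MLetter n × Bool := (Sum.inr 0, false)
def B2' (n : ℕ) : MLetter n × Bool := (Sum.inr 1, false)

def CCl (n : ℕ) : ℕ → List (MLetter n × Bool)
  | 0 => []
  | m+1 => B2 n :: B1 n :: CCl n m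

def CCl' (n : ℕ) : ℕ → List (MLetter n × Bool)
  | 0 => []
  | m+1 => B1' n :: B2' n :: CCl' n m

theorem rd01 {n} : RD (B1 n) (B2 n) := by simp [RD, B1, B2]
theorem rd10 {n} : RD (B2 n) (B1 n) := by simp [RD, B1, B2]
theorem rd01' {n} : RD (B1' n) (B2' n) := by simp [RD, B1', B2']
theorem rd10' {n} : RD (B2' n) (B1' n) := by simp [RD, B1', B2']
theorem rd11 {n} : RD (B1 n) (B1 n) := by simp [RD]
theorem rd22 {n} : RD (B2 n) (B2 n) := by simp [RD]
theorem rd11' {n} : RD (B1' n) (B1' n) := by simp [RD]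
theorem rd22' {n} : RD (B2' n) (B2' n) := by simp [RD]
theorem rd_2_1' {n} : RD (B2 n) (B1' n) := by simp [RD, B2, B1']
theorem rd_1_2' {n} : RD (B1 n) (B2' n) := by simp [RD, B1, B2']
theorem rd_2'_1 {n} : RD (B2' n) (B1 n) := by simp [RD, B2', B1]
theorem rd_1'_2 {n} : RD (B1' n) (B2 n) := by simp [RD, B1', B2]

theorem cpow_eq {n : ℕ} (m : ℕ) : (bb2 n * bb1 n) ^ m = FreeGroup.mk (CCl n m) := by
  induction m with
  | zero => rfl
  | succ m ih =>
    rw [pow_succ', ih, bb1, bb2, FreeGroup.of, FreeGroup.of, FreeGroup.mul_mk,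
      FreeGroup.mul_mk]
    rfl

theorem cpow_inv_eq {n : ℕ} (m : ℕ) : ((bb1 n)⁻¹ * (bb2 n)⁻¹) ^ m = FreeGroup.mk (CCl' n m) := by
  induction m with
  | zero => rfl
  | succ m ih =>
    rw [pow_succ', ih, bb1, bb2, mk_single_inv, mk_single_inv, FreeGroup.mul_mk,
      FreeGroup.mul_mk]
    rfl

theorem chain'_cons_CCl {n : ℕ} (m : ℕ) : List.Chain' RD (B1 n :: CCl n m) := by
  induction m with
  | zero => simp [CCl, List.Chain']
  | succ m ih =>
    rw [CCl, chain'_cons_iff]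
    exact ⟨rd01, chain'_cons_iff.mpr ⟨rd10, ih⟩⟩

theorem chain'_CCl {n : ℕ} (m : ℕ) : List.Chain' RD (CCl n m) :=
  (chain'_cons_CCl m).tail

theorem chain'_cons_CCl' {n : ℕ} (m : ℕ) : List.Chain' RD (B2' n :: CCl' n m) := by
  induction m with
  | zero => simp [CCl', List.Chain']
  | succ m ih =>
    rw [CCl', chain'_cons_iff]
    exact ⟨rd10', chain'_cons_iff.mpr ⟨rd01', ih⟩⟩

theorem chain'_CCl' {n : ℕ} (m : ℕ) : List.Chain' RD (CCl' n m) :=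
  (chain'_cons_CCl' m).tail

theorem head?_CCl {n m : ℕ} (h : 1 ≤ m) : (CCl n m).head? = some (B2 n) := by
  obtain ⟨m, rfl⟩ := Nat.exists_eq_add_of_le h
  rw [Nat.add_comm]; rfl

theorem head?_CCl' {n m : ℕ} (h : 1 ≤ m) : (CCl' n m).head? = some (B1' n) := by
  obtain ⟨m, rfl⟩ := Nat.exists_eq_add_of_le h
  rw [Nat.add_comm]; rfl

theorem getLast?_CCl {n : ℕ} : ∀ {m : ℕ}, 1 ≤ m → (CCl n m).getLast? = some (B1 n)
  | 1, _ => rfl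
  | m+2, _ => by
    have ih := getLast?_CCl (n := n) (m := m+1) (by omega)
    show (B2 n :: B1 n :: CCl n (m+1)).getLast? = _
    rw [List.getLast?_cons_cons]
    show (B1 n :: B2 n :: B1 n :: CCl n m).getLast? = _
    rw [List.getLast?_cons_cons]
    exact ih

theorem getLast?_CCl' {n : ℕ} : ∀ {m : ℕ}, 1 ≤ m → (CCl' n m).getLast? = some (B2' n)
  | 1, _ => rfl
  | m+2, _ => by
    have ih := getLast?_CCl' (n := n) (m := m+1) (by omega)
    show (B1' n :: B2' n :: CCl' n (m+1)).getLast? = _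
    rw [List.getLast?_cons_cons]
    show (B2' n :: B1' n :: B2' n :: CCl' n m).getLast? = _
    rw [List.getLast?_cons_cons]
    exact ih

theorem length_CCl {n : ℕ} (m : ℕ) : (CCl n m).length = 2 * m := by
  induction m with
  | zero => rfl
  | succ m ih => rw [CCl]; simp [ih]; omega

theorem length_CCl' {n : ℕ} (m : ℕ) : (CCl' n m).length = 2 * m := by
  induction m with
  | zero => rfl
  | succ m ih => rw [CCl']; simp [ih]; omega

/-- the core element `v_k` -/
def Vkk (n k : ℕ) : FreeGroup (MLetter n) :=
  bb1 n ^ k * (bb2 n * bb1 n) ^ (2 * n * (n + 2) - k) * bb2 n ^ k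

def vlistT (n k : ℕ) : List (MLetter n × Bool) :=
  List.replicate k (B1 n) ++ CCl n (2 * n * (n + 2) - k) ++ List.replicate k (B2 n)

def vlistF (n k : ℕ) : List (MLetter n × Bool) :=
  List.replicate k (B2' n) ++ CCl' n (2 * n * (n + 2) - k) ++ List.replicate k (B1' n)

def sgT (n k : ℕ) : List (MLetter n × Bool) := List.replicate k (B1 n) ++ [B2 n]
def sgF (n k : ℕ) : List (MLetter n × Bool) := List.replicate k (B2' n) ++ [B1' n]

theorem bb1_pow (n k : ℕ) : bb1 n ^ k = FreeGroup.mk (List.replicate k (B1 n)) :=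
  mk_pow_of _ _
theorem bb2_pow (n k : ℕ) : bb2 n ^ k = FreeGroup.mk (List.replicate k (B2 n)) :=
  mk_pow_of _ _
theorem bb1_inv_pow (n k : ℕ) : ((bb1 n)⁻¹) ^ k = FreeGroup.mk (List.replicate k (B1' n)) :=
  mk_pow_of_inv _ _
theorem bb2_inv_pow (n k : ℕ) : ((bb2 n)⁻¹) ^ k = FreeGroup.mk (List.replicate k (B2' n)) :=
  mk_pow_of_inv _ _

theorem Vkk_eq (n k : ℕ) : Vkk n k = FreeGroup.mk (vlistT n k) := by
  rw [Vkk, bb1_pow, bb2_pow, cpow_eq, FreeGroup.mul_mk, FreeGroup.mul_mk, vlistT]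

theorem Vkk_expand_inv (n k : ℕ) :
    (Vkk n k)⁻¹ =
      ((bb2 n)⁻¹) ^ k * ((bb1 n)⁻¹ * (bb2 n)⁻¹) ^ (2 * n * (n + 2) - k) * ((bb1 n)⁻¹) ^ k := by
  rw [Vkk]
  simp [mul_inv_rev, ← inv_pow, mul_assoc]

theorem Vkk_inv_eq (n k : ℕ) : (Vkk n k)⁻¹ = FreeGroup.mk (vlistF n k) := by
  rw [Vkk_expand_inv, bb2_inv_pow, bb1_inv_pow, cpow_inv_eq, FreeGroup.mul_mk,
    FreeGroup.mul_mk, vlistF]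

theorem chain'_vlistT {n k : ℕ} (hk : 1 ≤ k) (hm : 1 ≤ 2 * n * (n + 2) - k) :
    List.Chain' RD (vlistT n k) := by
  rw [vlistT, List.append_assoc, chain'_append_iff]
  refine ⟨List.isChain_replicate_of_rel _ rd11, ?_, ?_⟩
  · rw [chain'_append_iff]
    refine ⟨chain'_CCl _, List.isChain_replicate_of_rel _ rd22, ?_⟩
    intro x hx y hy
    rw [getLast?_CCl hm] at hx
    rw [List.head?_replicate, if_neg (by omega)] at hy
    simp at hx hy; subst hx; subst hy; exact rd01
  · intro x hx y hy
    rw [List.getLast?_replicate, if_neg (by omega)] at hx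
    rw [List.head?_append, head?_CCl hm] at hy
    simp at hx hy; subst hx; subst hy; exact rd01

theorem chain'_vlistF {n k : ℕ} (hk : 1 ≤ k) (hm : 1 ≤ 2 * n * (n + 2) - k) :
    List.Chain' RD (vlistF n k) := by
  rw [vlistF, List.append_assoc, chain'_append_iff]
  refine ⟨List.isChain_replicate_of_rel _ rd22', ?_, ?_⟩
  · rw [chain'_append_iff]
    refine ⟨chain'_CCl' _, List.isChain_replicate_of_rel _ rd11', ?_⟩
    intro x hx y hy
    rw [getLast?_CCl' hm] at hx
    rw [List.head?_replicate, if_neg (by omega)] at hy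
    simp at hx hy; subst hx; subst hy; exact rd10'
  · intro x hx y hy
    rw [List.getLast?_replicate, if_neg (by omega)] at hx
    rw [List.head?_append, head?_CCl' hm] at hy
    simp at hx hy; subst hx; subst hy; exact rd10'

theorem sgT_prefix_vlistT {n k : ℕ} (hm : 1 ≤ 2 * n * (n + 2) - k) :
    sgT n k <+: vlistT n k := by
  obtain ⟨m', hm'⟩ := Nat.exists_eq_add_of_le hm
  rw [vlistT, hm', Nat.add_comm]
  exact ⟨B1 n :: CCl n m' ++ List.replicate k (B2 n), by simp [sgT, CCl]⟩

theorem sgF_prefix_vlistF {n k : ℕ} (hm : 1 ≤ 2 * n * (n + 2) - k) :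
    sgF n k <+: vlistF n k := by
  obtain ⟨m', hm'⟩ := Nat.exists_eq_add_of_le hm
  rw [vlistF, hm', Nat.add_comm]
  exact ⟨B2' n :: CCl' n m' ++ List.replicate k (B1' n), by simp [sgF, CCl']⟩

theorem length_vlistT {n k : ℕ} (hk : k ≤ n * (n + 2)) :
    (vlistT n k).length = 4 * n * (n + 2) := by
  have h2 : 2 * n * (n+2) = n*(n+2) + n*(n+2) := by ring
  have h4 : 4 * n * (n+2) = n*(n+2) + n*(n+2) + (n*(n+2) + n*(n+2)) := by ring
  simp [vlistT, length_CCl]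
  omega

theorem length_vlistF {n k : ℕ} (hk : k ≤ n * (n + 2)) :
    (vlistF n k).length = 4 * n * (n + 2) := by
  have h2 : 2 * n * (n+2) = n*(n+2) + n*(n+2) := by ring
  have h4 : 4 * n * (n+2) = n*(n+2) + n*(n+2) + (n*(n+2) + n*(n+2)) := by ring
  simp [vlistF, length_CCl']
  omega

theorem invPow_mul_pow_ge {G : Type*} [Group G] (a : G) {i j : ℕ} (h : j ≤ i) :
    (a⁻¹)^i * a^j = (a⁻¹)^(i-j) := by
  simpa using pow_mul_invPow_ge a⁻¹ h

theorem invPow_mul_pow_le {G : Type*} [Group G] (a : G) {i j : ℕ} (h : i ≤ j) :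
    (a⁻¹)^i * a^j = a^(j-i) := by
  simpa using pow_mul_invPow_le a⁻¹ h

theorem bb1_mk (n : ℕ) : bb1 n = FreeGroup.mk [B1 n] := rfl
theorem bb2_mk (n : ℕ) : bb2 n = FreeGroup.mk [B2 n] := rfl
theorem bb1_inv_mk (n : ℕ) : (bb1 n)⁻¹ = FreeGroup.mk [B1' n] := mk_single_inv _
theorem bb2_inv_mk (n : ℕ) : (bb2 n)⁻¹ = FreeGroup.mk [B2' n] := mk_single_inv _

theorem getLast?_vlistT {n k : ℕ} (hk : 1 ≤ k) : (vlistT n k).getLast? = some (B2 n) := by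
  rw [vlistT, List.getLast?_append, List.getLast?_replicate, if_neg (by omega)]; rfl

theorem getLast?_vlistF {n k : ℕ} (hk : 1 ≤ k) : (vlistF n k).getLast? = some (B1' n) := by
  rw [vlistF, List.getLast?_append, List.getLast?_replicate, if_neg (by omega)]; rfl

theorem head?_sgT {n k : ℕ} (hk : 1 ≤ k) : (sgT n k).head? = some (B1 n) := by
  rw [sgT, List.head?_append, List.head?_replicate, if_neg (by omega)]; rfl

theorem head?_sgF {n k : ℕ} (hk : 1 ≤ k) : (sgF n k).head? = some (B2' n) := by
  rw [sgF, List.head?_append, List.head?_replicate, if_neg (by omega)]; rfl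

theorem step {n : ℕ} (hn : 0 < n) {k1 k2 : ℕ} (h11 : 1 ≤ k1) (h1N : k1 ≤ n*(n+2))
    (h21 : 1 ≤ k2) (h2N : k2 ≤ n*(n+2)) {e1 e2 : Bool} (hne : ¬(k1 = k2 ∧ e1 = !e2))
    (R : List (MLetter n × Bool))
    (hch : List.Chain' RD ((if e2 then sgT n k2 else sgF n k2) ++ R)) :
    ∃ (W : List (MLetter n × Bool)) (c : ℕ),
      (if e1 then Vkk n k1 else (Vkk n k1)⁻¹) *
          FreeGroup.mk ((if e2 then sgT n k2 else sgF n k2) ++ R) = FreeGroup.mk (W ++ R) ∧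
      List.Chain' RD (W ++ R) ∧
      (if e1 then sgT n k1 else sgF n k1) <+: W ∧
      W.length + 2*c = 4*n*(n+2) + (k2+1) ∧ c < n*(n+2) := by
  have hN3 : 3 ≤ n*(n+2) := by nlinarith
  have h2 : 2*n*(n+2) = n*(n+2) + n*(n+2) := by ring
  have h4 : 4*n*(n+2) = n*(n+2) + n*(n+2) + (n*(n+2) + n*(n+2)) := by ring
  have hm1 : 1 ≤ 2*n*(n+2) - k1 := by omega
  set m1 := 2*n*(n+2) - k1 with hm1def
  cases e1 <;> cases e2
  · -- FF
    simp only [Bool.false_eq_true, if_false] at hch ⊢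
    refine ⟨vlistF n k1 ++ sgF n k2, 0, ?_, ?_, ?_, ?_, by omega⟩
    · rw [Vkk_inv_eq, FreeGroup.mul_mk, List.append_assoc]
    · rw [List.append_assoc, chain'_append_iff]
      refine ⟨chain'_vlistF h11 hm1, hch, ?_⟩
      intro x hx y hy
      rw [getLast?_vlistF h11] at hx
      rw [List.head?_append, head?_sgF h21] at hy
      simp at hx hy
      subst hx
      subst hy
      exact rd01'
    · exact (sgF_prefix_vlistF hm1).trans (List.prefix_append _ _)
    · simp [length_vlistF h1N, sgF]; try omega
  · -- FT : e1 = false, e2 = true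
    simp only [Bool.false_eq_true, if_false, if_true] at hch ⊢
    have hk12 : k1 ≠ k2 := fun h => hne ⟨h, rfl⟩
    have hBR : List.Chain' RD ([B2 n] ++ R) := by
      rw [sgT, List.append_assoc] at hch
      exact (chain'_append_iff.mp hch).2.1
    have hsgT : FreeGroup.mk (sgT n k2 ++ R) = bb1 n ^ k2 * (bb2 n * FreeGroup.mk R) := by
      rw [bb1_pow, bb2_mk, FreeGroup.mul_mk, FreeGroup.mul_mk, sgT, List.append_assoc]
    rcases lt_or_gt_of_ne hk12 with hlt | hgt
    · -- k1 < k2 : W = P2' k1 ++ CC' m1 ++ P1 (k2-k1) ++ [B2]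
      refine ⟨List.replicate k1 (B2' n) ++ (CCl' n m1 ++ (List.replicate (k2-k1) (B1 n)
        ++ [B2 n])), k1, ?_, ?_, ?_, ?_, by omega⟩
      · rw [hsgT, Vkk_expand_inv, ← hm1def]
        have key : ((bb1 n)⁻¹)^k1 * (bb1 n ^ k2 * (bb2 n * FreeGroup.mk R))
            = bb1 n ^ (k2-k1) * (bb2 n * FreeGroup.mk R) := by
          rw [← mul_assoc, invPow_mul_pow_le _ hlt.le]
        simp only [mul_assoc]
        rw [key, bb2_inv_pow, cpow_inv_eq, bb1_pow, bb2_mk]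
        simp [FreeGroup.mul_mk, List.append_assoc]
      · simp only [List.append_assoc]
        rw [chain'_append_iff]
        refine ⟨List.isChain_replicate_of_rel _ rd22', ?_, ?_⟩
        · rw [chain'_append_iff]
          refine ⟨chain'_CCl' _, ?_, ?_⟩
          · rw [chain'_append_iff]
            refine ⟨List.isChain_replicate_of_rel _ rd11, hBR, ?_⟩
            intro x hx y hy
            rw [List.getLast?_replicate, if_neg (by omega)] at hx
            simp at hx hy; subst hx; subst hy; exact rd01
          · intro x hx y hy
            rw [getLast?_CCl' hm1] at hx
            rw [List.head?_append, List.head?_replicate, if_neg (by omega)] at hy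
            simp at hx hy; subst hx; subst hy; exact rd_2'_1
        · intro x hx y hy
          rw [List.getLast?_replicate, if_neg (by omega)] at hx
          rw [List.head?_append, head?_CCl' hm1] at hy
          simp at hx hy; subst hx; subst hy; exact rd10'
      · obtain ⟨m', hm'⟩ := Nat.exists_eq_add_of_le hm1
        rw [hm', Nat.add_comm]
        exact ⟨B2' n :: CCl' n m' ++ (List.replicate (k2-k1) (B1 n) ++ [B2 n]),
          by simp [sgF, CCl']⟩
      · simp [length_CCl']; try omega
    · -- k2 < k1 : W = P2' k1 ++ CC' m1 ++ P1' (k1-k2) ++ [B2]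
      refine ⟨List.replicate k1 (B2' n) ++ (CCl' n m1 ++ (List.replicate (k1-k2) (B1' n)
        ++ [B2 n])), k2, ?_, ?_, ?_, ?_, by omega⟩
      · rw [hsgT, Vkk_expand_inv, ← hm1def]
        have key : ((bb1 n)⁻¹)^k1 * (bb1 n ^ k2 * (bb2 n * FreeGroup.mk R))
            = ((bb1 n)⁻¹) ^ (k1-k2) * (bb2 n * FreeGroup.mk R) := by
          rw [← mul_assoc, invPow_mul_pow_ge _ hgt.le]
        simp only [mul_assoc]
        rw [key, bb2_inv_pow, cpow_inv_eq, bb1_inv_pow, bb2_mk]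
        simp [FreeGroup.mul_mk, List.append_assoc]
      · simp only [List.append_assoc]
        rw [chain'_append_iff]
        refine ⟨List.isChain_replicate_of_rel _ rd22', ?_, ?_⟩
        · rw [chain'_append_iff]
          refine ⟨chain'_CCl' _, ?_, ?_⟩
          · rw [chain'_append_iff]
            refine ⟨List.isChain_replicate_of_rel _ rd11', hBR, ?_⟩
            intro x hx y hy
            rw [List.getLast?_replicate, if_neg (by omega)] at hx
            simp at hx hy; subst hx; subst hy; exact rd_1'_2
          · intro x hx y hy
            rw [getLast?_CCl' hm1] at hx
            rw [List.head?_append, List.head?_replicate, if_neg (by omega)] at hy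
            simp at hx hy; subst hx; subst hy; exact rd10'
        · intro x hx y hy
          rw [List.getLast?_replicate, if_neg (by omega)] at hx
          rw [List.head?_append, head?_CCl' hm1] at hy
          simp at hx hy; subst hx; subst hy; exact rd10'
      · obtain ⟨m', hm'⟩ := Nat.exists_eq_add_of_le hm1
        rw [hm', Nat.add_comm]
        exact ⟨B2' n :: CCl' n m' ++ (List.replicate (k1-k2) (B1' n) ++ [B2 n]),
          by simp [sgF, CCl']⟩
      · simp [length_CCl']; try omega
  · -- TF : e1 = true, e2 = false
    simp only [Bool.false_eq_true, if_false, if_true] at hch ⊢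
    have hk12 : k1 ≠ k2 := fun h => hne ⟨h, rfl⟩
    have hBR : List.Chain' RD ([B1' n] ++ R) := by
      rw [sgF, List.append_assoc] at hch
      exact (chain'_append_iff.mp hch).2.1
    have hsgF : FreeGroup.mk (sgF n k2 ++ R)
        = ((bb2 n)⁻¹) ^ k2 * ((bb1 n)⁻¹ * FreeGroup.mk R) := by
      rw [bb2_inv_pow, bb1_inv_mk, FreeGroup.mul_mk, FreeGroup.mul_mk, sgF, List.append_assoc]
    rcases lt_or_gt_of_ne hk12 with hlt | hgt
    · -- k1 < k2 : W = P1 k1 ++ CC m1 ++ P2' (k2-k1) ++ [B1']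
      refine ⟨List.replicate k1 (B1 n) ++ (CCl n m1 ++ (List.replicate (k2-k1) (B2' n)
        ++ [B1' n])), k1, ?_, ?_, ?_, ?_, by omega⟩
      · rw [hsgF, Vkk, ← hm1def]
        have key : (bb2 n)^k1 * (((bb2 n)⁻¹) ^ k2 * ((bb1 n)⁻¹ * FreeGroup.mk R))
            = ((bb2 n)⁻¹) ^ (k2-k1) * ((bb1 n)⁻¹ * FreeGroup.mk R) := by
          rw [← mul_assoc, pow_mul_invPow_le _ hlt.le]
        simp only [mul_assoc]
        rw [key, bb1_pow, cpow_eq, bb2_inv_pow, bb1_inv_mk]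
        simp [FreeGroup.mul_mk, List.append_assoc]
      · simp only [List.append_assoc]
        rw [chain'_append_iff]
        refine ⟨List.isChain_replicate_of_rel _ rd11, ?_, ?_⟩
        · rw [chain'_append_iff]
          refine ⟨chain'_CCl _, ?_, ?_⟩
          · rw [chain'_append_iff]
            refine ⟨List.isChain_replicate_of_rel _ rd22', hBR, ?_⟩
            intro x hx y hy
            rw [List.getLast?_replicate, if_neg (by omega)] at hx
            simp at hx hy; subst hx; subst hy; exact rd10'
          · intro x hx y hy
            rw [getLast?_CCl hm1] at hx
            rw [List.head?_append, List.head?_replicate, if_neg (by omega)] at hy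
            simp at hx hy; subst hx; subst hy; exact rd_1_2'
        · intro x hx y hy
          rw [List.getLast?_replicate, if_neg (by omega)] at hx
          rw [List.head?_append, head?_CCl hm1] at hy
          simp at hx hy; subst hx; subst hy; exact rd01
      · obtain ⟨m', hm'⟩ := Nat.exists_eq_add_of_le hm1
        rw [hm', Nat.add_comm]
        exact ⟨B1 n :: CCl n m' ++ (List.replicate (k2-k1) (B2' n) ++ [B1' n]),
          by simp [sgT, CCl]⟩
      · simp [length_CCl]; try omega
    · -- k2 < k1 : W = P1 k1 ++ CC m1 ++ P2 (k1-k2) ++ [B1']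
      refine ⟨List.replicate k1 (B1 n) ++ (CCl n m1 ++ (List.replicate (k1-k2) (B2 n)
        ++ [B1' n])), k2, ?_, ?_, ?_, ?_, by omega⟩
      · rw [hsgF, Vkk, ← hm1def]
        have key : (bb2 n)^k1 * (((bb2 n)⁻¹) ^ k2 * ((bb1 n)⁻¹ * FreeGroup.mk R))
            = (bb2 n) ^ (k1-k2) * ((bb1 n)⁻¹ * FreeGroup.mk R) := by
          rw [← mul_assoc, pow_mul_invPow_ge _ hgt.le]
        simp only [mul_assoc]
        rw [key, bb1_pow, cpow_eq, bb2_pow, bb1_inv_mk]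
        simp [FreeGroup.mul_mk, List.append_assoc]
      · simp only [List.append_assoc]
        rw [chain'_append_iff]
        refine ⟨List.isChain_replicate_of_rel _ rd11, ?_, ?_⟩
        · rw [chain'_append_iff]
          refine ⟨chain'_CCl _, ?_, ?_⟩
          · rw [chain'_append_iff]
            refine ⟨List.isChain_replicate_of_rel _ rd22, hBR, ?_⟩
            intro x hx y hy
            rw [List.getLast?_replicate, if_neg (by omega)] at hx
            simp at hx hy; subst hx; subst hy; exact rd_2_1'
          · intro x hx y hy
            rw [getLast?_CCl hm1] at hx
            rw [List.head?_append, List.head?_replicate, if_neg (by omega)] at hy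
            simp at hx hy; subst hx; subst hy; exact rd01
        · intro x hx y hy
          rw [List.getLast?_replicate, if_neg (by omega)] at hx
          rw [List.head?_append, head?_CCl hm1] at hy
          simp at hx hy; subst hx; subst hy; exact rd01
      · obtain ⟨m', hm'⟩ := Nat.exists_eq_add_of_le hm1
        rw [hm', Nat.add_comm]
        exact ⟨B1 n :: CCl n m' ++ (List.replicate (k1-k2) (B2 n) ++ [B1' n]),
          by simp [sgT, CCl]⟩
      · simp [length_CCl]; try omega
  · -- TT
    simp only [if_true] at hch ⊢
    refine ⟨vlistT n k1 ++ sgT n k2, 0, ?_, ?_, ?_, ?_, by omega⟩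
    · rw [Vkk_eq, FreeGroup.mul_mk, List.append_assoc]
    · rw [List.append_assoc, chain'_append_iff]
      refine ⟨chain'_vlistT h11 hm1, hch, ?_⟩
      intro x hx y hy
      rw [getLast?_vlistT h11] at hx
      rw [List.head?_append, head?_sgT h21] at hy
      simp at hx hy; subst hx; subst hy; exact rd10
    · exact (sgT_prefix_vlistT hm1).trans (List.prefix_append _ _)
    · simp [length_vlistT h1N, sgT]; try omega

section Main

variable {n : ℕ} (η : MLetter n × Fin n ≃ Fin (n * (n + 2)))

theorem vWord_eq_Vkk (y : MLetter n) (a : Fin n) : vWord n η y a = Vkk n (kVal n η y a) := rfl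

theorem kVal_ge (y a) : 1 ≤ kVal n η y a := Nat.le_add_left _ _

theorem kVal_le (y a) : kVal n η y a ≤ n * (n + 2) := (η (y, a)).is_lt

theorem kVal_inj {p q : MLetter n × Fin n}
    (h : kVal n η p.1 p.2 = kVal n η q.1 q.2) : p = q := by
  have h1 : η (p.1, p.2) = η (q.1, q.2) := Fin.ext (by simpa [kVal] using h)
  have h2 := η.injective h1
  simpa using h2

theorem part1 (hn : 0 < n) (y₁ y₂ : MLetter n) (a₁ a₂ : Fin n) (e₁ e₂ : Bool) :
    ((y₁, a₁) = (y₂, a₂) ∧ e₁ = !e₂) ∨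
      3 * Dconst n < 2 * rlen n (bpow (vWord n η y₁ a₁) e₁ * bpow (vWord n η y₂ a₂) e₂) := by
  by_cases hsame : (y₁, a₁) = (y₂, a₂) ∧ e₁ = !e₂
  · exact Or.inl hsame
  right
  have hN3 : 3 ≤ n*(n+2) := by nlinarith
  have h2' : 2*n*(n+2) = n*(n+2) + n*(n+2) := by ring
  have h4' : 4*n*(n+2) = n*(n+2) + n*(n+2) + (n*(n+2) + n*(n+2)) := by ring
  set K1 := kVal n η y₁ a₁ with hK1
  set K2 := kVal n η y₂ a₂ with hK2
  have h11 : 1 ≤ K1 := kVal_ge η y₁ a₁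
  have h1N : K1 ≤ n*(n+2) := kVal_le η y₁ a₁
  have h21 : 1 ≤ K2 := kVal_ge η y₂ a₂
  have h2N : K2 ≤ n*(n+2) := kVal_le η y₂ a₂
  have hm2 : 1 ≤ 2*n*(n+2) - K2 := by omega
  have hne' : ¬(K1 = K2 ∧ e₁ = !e₂) := by
    rintro ⟨hk, he⟩
    exact hsame ⟨kVal_inj η hk, he⟩
  have hbase : (if e₂ then sgT n K2 else sgF n K2) <+:
      (if e₂ then vlistT n K2 else vlistF n K2) := by
    cases e₂
    · exact sgF_prefix_vlistF hm2
    · exact sgT_prefix_vlistT hm2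
  obtain ⟨R, hR⟩ := hbase
  have hchv : List.Chain' RD (if e₂ then vlistT n K2 else vlistF n K2) := by
    cases e₂
    · exact chain'_vlistF h21 hm2
    · exact chain'_vlistT h21 hm2
  have hlenv : (if e₂ then vlistT n K2 else vlistF n K2).length = 4*n*(n+2) := by
    cases e₂
    · exact length_vlistF h2N
    · exact length_vlistT h2N
  have hbp2 : bpow (vWord n η y₂ a₂) e₂
      = FreeGroup.mk (if e₂ then vlistT n K2 else vlistF n K2) := by
    cases e₂
    · exact (Vkk_inv_eq n K2)
    · exact (Vkk_eq n K2)
  have hbp1 : bpow (vWord n η y₁ a₁) e₁ = (if e₁ then Vkk n K1 else (Vkk n K1)⁻¹) := by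
    cases e₁ <;> rfl
  have hch : List.Chain' RD ((if e₂ then sgT n K2 else sgF n K2) ++ R) := by
    rw [hR]; exact hchv
  obtain ⟨W, c, heq, hch2, _, hlen, hc⟩ :=
    step hn h11 h1N h21 h2N hne' R hch
  rw [hbp1, hbp2, ← hR, heq]
  have hlr : rlen n (FreeGroup.mk (W ++ R)) = W.length + R.length := by
    rw [rlen, toWord_mk_of_chain' hch2, List.length_append]
  have hRlen : (if e₂ then sgT n K2 else sgF n K2).length + R.length = 4*n*(n+2) := by
    rw [← List.length_append, hR, hlenv]
  have hsgl : (if e₂ then sgT n K2 else sgF n K2).length = K2 + 1 := by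
    cases e₂ <;> simp [sgT, sgF]
  have hD : Dconst n = 4*n*(n+2) := rfl
  omega

theorem main_prefix (hn : 0 < n) :
    ∀ (L : List ((MLetter n × Fin n) × Bool)), List.Chain' RD L →
      ∀ (p : MLetter n × Fin n) (e : Bool), L.head? = some (p, e) →
        (if e then sgT n (kVal n η p.1 p.2) else sgF n (kVal n η p.1 p.2)) <+:
          (FreeGroup.lift (fun q : MLetter n × Fin n => vWord n η q.1 q.2)
            (FreeGroup.mk L)).toWord := by
  have hN3 : 3 ≤ n*(n+2) := by nlinarith
  have h2' : 2*n*(n+2) = n*(n+2) + n*(n+2) := by ring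
  intro L
  induction L with
  | nil => intro _ p e h; simp at h
  | cons hd tl ih =>
    intro hch p e hhd
    obtain ⟨rfl⟩ : hd = (p, e) := by simpa using hhd
    set K := kVal n η p.1 p.2 with hK
    have h11 : 1 ≤ K := kVal_ge η p.1 p.2
    have h1N : K ≤ n*(n+2) := kVal_le η p.1 p.2
    have hm : 1 ≤ 2*n*(n+2) - K := by omega
    have hsplit : (FreeGroup.mk ((p, e) :: tl) : FreeGroup (MLetter n × Fin n))
        = (if e then FreeGroup.of p else (FreeGroup.of p)⁻¹) * FreeGroup.mk tl := by
      cases e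
      · rw [if_neg (by simp), mk_single_inv, FreeGroup.mul_mk]; rfl
      · rw [if_pos rfl, FreeGroup.of, FreeGroup.mul_mk]; rfl
    have hmap : (FreeGroup.lift (fun q : MLetter n × Fin n => vWord n η q.1 q.2))
        (FreeGroup.mk ((p, e) :: tl))
        = (if e then Vkk n K else (Vkk n K)⁻¹) *
          (FreeGroup.lift (fun q : MLetter n × Fin n => vWord n η q.1 q.2))
            (FreeGroup.mk tl) := by
      rw [hsplit, _root_.map_mul]
      congr 1
      cases e
      · rw [if_neg (by simp), if_neg (by simp), _root_.map_inv, FreeGroup.lift_apply_of, vWord_eq_Vkk]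
      · rw [if_pos rfl, if_pos rfl, FreeGroup.lift_apply_of, vWord_eq_Vkk]
    rcases tl with _ | ⟨⟨q, e'⟩, L'⟩
    · -- singleton
      have h1 : (FreeGroup.mk ([] : List ((MLetter n × Fin n) × Bool))) = 1 :=
        (FreeGroup.one_eq_mk).symm
      rw [hmap, h1, _root_.map_one, mul_one]
      cases e
      · rw [if_neg (by simp), if_neg (by simp), Vkk_inv_eq,
          toWord_mk_of_chain' (chain'_vlistF h11 hm)]
        exact sgF_prefix_vlistF hm
      · rw [if_pos rfl, if_pos rfl, Vkk_eq, toWord_mk_of_chain' (chain'_vlistT h11 hm)]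
        exact sgT_prefix_vlistT hm
    · -- longer word
      have hrd : RD (p, e) (q, e') := (chain'_cons_iff.mp hch).1
      have ihp := ih hch.tail q e' rfl
      set K2 := kVal n η q.1 q.2 with hK2
      have h21 : 1 ≤ K2 := kVal_ge η q.1 q.2
      have h2N : K2 ≤ n*(n+2) := kVal_le η q.1 q.2
      have hne' : ¬(K = K2 ∧ e = !e') := by
        rintro ⟨hk, he⟩
        exact hrd ⟨kVal_inj η hk, he⟩
      obtain ⟨R, hR⟩ := ihp
      have hch1 : List.Chain' RD ((if e' then sgT n K2 else sgF n K2) ++ R) := by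
        rw [hR]; exact chain'_toWord _
      obtain ⟨W, c, heq, hch2, hpre, _, _⟩ :=
        step hn h11 h1N h21 h2N hne' R hch1
      have hQ : (FreeGroup.lift (fun q : MLetter n × Fin n => vWord n η q.1 q.2))
          (FreeGroup.mk ((q, e') :: L'))
          = FreeGroup.mk ((if e' then sgT n K2 else sgF n K2) ++ R) := by
        rw [hR, FreeGroup.mk_toWord]
      rw [hmap, hQ, heq, toWord_mk_of_chain' hch2]
      exact hpre.trans (List.prefix_append _ _)

theorem part2 (hn : 0 < n) :
    Function.Injective
      (FreeGroup.lift (fun p : MLetter n × Fin n => vWord n η p.1 p.2) :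
        FreeGroup (MLetter n × Fin n) →* FreeGroup (MLetter n)) := by
  rw [injective_iff_map_eq_one]
  intro g hg
  by_contra hg1
  have hL : g.toWord ≠ [] := fun h => hg1 (FreeGroup.toWord_eq_nil_iff.mp h)
  rcases hhd : g.toWord.head? with _ | ⟨⟨p, e⟩⟩
  · rw [List.head?_eq_none_iff] at hhd; exact hL hhd
  · have hpre := main_prefix η hn g.toWord (chain'_toWord g) p e hhd
    rw [FreeGroup.mk_toWord, hg, FreeGroup.toWord_one, List.prefix_nil] at hpre
    cases e <;> simp [sgT, sgF] at hpre

end Main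

end Aux5

/-- **Lemma 5.1.** For all `(y₁,a₁), (y₂,a₂)` and signs `ε₁, ε₂`: either
`(y₁,a₁) = (y₂,a₂)` with `ε₁ = -ε₂`, or fewer than `D/4` letters of each factor cancel
in `v(y₁,a₁)^{ε₁}·v(y₂,a₂)^{ε₂}`, i.e. the reduced length of the product exceeds
`3D/2`.  In particular the family `(v(y,a))` is a basis of a free subgroup of `F(ℬ)`. -/
theorem statement7 (n : ℕ) (hn : 0 < n) (η : MLetter n × Fin n ≃ Fin (n * (n + 2))) :
    (∀ (y₁ y₂ : MLetter n) (a₁ a₂ : Fin n) (e₁ e₂ : Bool),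
      ((y₁, a₁) = (y₂, a₂) ∧ e₁ = !e₂) ∨
        3 * Dconst n < 2 * rlen n (bpow (vWord n η y₁ a₁) e₁ * bpow (vWord n η y₂ a₂) e₂)) ∧
    Function.Injective
      (FreeGroup.lift (fun p : MLetter n × Fin n => vWord n η p.1 p.2) :
        FreeGroup (MLetter n × Fin n) →* FreeGroup (MLetter n)) := by
  constructor
  · intro y₁ y₂ a₁ a₂ e₁ e₂
    exact part1 η hn y₁ y₂ a₁ a₂ e₁ e₂
  · exact part2 η hn
end

section
/- For every w ∈ F(𝒜₁ ⊔ ℬ), every y ∈ 𝒜 ⊔ ℬ and every ε ∈ {±1}, δ(φ_y^{ε}(w)) coincides letter-for-letter with δ(w); equivalently, the subsequence of 𝒜₁^{±1}-letters of the reduced word of φ_y^{ε}(w) is identical to the subsequence of 𝒜₁^{±1}-letters of the reduced word of w. -/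
section Aux8

open FreeGroup List

/-- A word is reduced: no adjacent pair `x x⁻¹`. -/
def Red8 {α : Type*} (l : List (α × Bool)) : Prop :=
  l.Chain' fun a b => ¬(a.1 = b.1 ∧ a.2 = !b.2)

lemma exists_of_not_chain' {α : Type*} {R : α → α → Prop} :
    ∀ {l : List α}, ¬ l.Chain' R →
      ∃ l₁ a b l₂, l = l₁ ++ a :: b :: l₂ ∧ ¬ R a b := by
  intro l
  induction l with
  | nil => intro h; exact absurd List.isChain_nil h
  | cons p t ih =>
    intro h
    cases t with
    | nil => exact absurd (List.isChain_singleton p) h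
    | cons q r =>
      by_cases hpq : R p q
      · have h' : ¬ List.Chain' R (q :: r) := fun hc => h (List.isChain_cons_cons.2 ⟨hpq, hc⟩)
        obtain ⟨l₁, a, b, l₂, he, hr⟩ := ih h'
        exact ⟨p :: l₁, a, b, l₂, by rw [List.cons_append, he], hr⟩
      · exact ⟨[], p, q, r, rfl, hpq⟩

lemma red8_reduce {α : Type*} [DecidableEq α] (L : List (α × Bool)) : Red8 (FreeGroup.reduce L) := by
  by_contra h
  obtain ⟨l₁, a, b, l₂, he, hr⟩ := exists_of_not_chain' h
  rw [not_not] at hr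
  have hb : b = (a.1, !a.2) := by
    obtain ⟨h1, h2⟩ := hr
    ext
    · exact h1.symm
    · rw [h2]; simp
  exact FreeGroup.reduce.not (L₂ := l₁) (L₃ := l₂) (x := a.1) (b := a.2)
    (by rw [he, hb])

lemma red8_toWord {α : Type*} [DecidableEq α] (w : FreeGroup α) : Red8 (FreeGroup.toWord w) := by
  rw [← FreeGroup.reduce_toWord]
  exact red8_reduce _

lemma reduce_eq_self {α : Type*} [DecidableEq α] : ∀ {l : List (α × Bool)}, Red8 l →
    FreeGroup.reduce l = l := by
  intro l
  induction l with
  | nil => intro _; rfl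
  | cons p t ih =>
    intro h
    rw [FreeGroup.reduce.cons, ih h.tail]
    cases t with
    | nil => rfl
    | cons q r =>
      have hpq := (List.isChain_cons_cons.1 h).1
      simp only []
      rw [if_neg hpq]

lemma toWord_mk_red8 {α : Type*} [DecidableEq α] {l : List (α × Bool)} (h : Red8 l) :
    FreeGroup.toWord (FreeGroup.mk l) = l := by
  rw [FreeGroup.toWord_mk, reduce_eq_self h]

lemma mk_single {α : Type*} (c : α) (s : Bool) :
    FreeGroup.mk [(c, s)] = bpow (FreeGroup.of c) s := by
  cases s
  · show FreeGroup.mk [(c, false)] = (FreeGroup.of c)⁻¹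
    rw [show FreeGroup.of c = FreeGroup.mk [(c, true)] from rfl, FreeGroup.inv_mk]
    simp [FreeGroup.invRev]
  · rfl

end Aux8

section Aux8b

open FreeGroup List

variable {n : ℕ}

lemma isB_one : IsBWord n 1 := by
  intro p hp
  rw [FreeGroup.toWord_one] at hp
  exact absurd hp (List.not_mem_nil (a := p))

lemma isB_mul {u v : FreeGroup (MLetter n)} (hu : IsBWord n u) (hv : IsBWord n v) :
    IsBWord n (u * v) := by
  intro p hp
  have := (FreeGroup.toWord_mul_sublist u v).subset hp
  rcases List.mem_append.1 this with h | h
  · exact hu p h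
  · exact hv p h

lemma isB_inv {u : FreeGroup (MLetter n)} (hu : IsBWord n u) : IsBWord n u⁻¹ := by
  intro p hp
  rw [FreeGroup.toWord_inv] at hp
  simp only [FreeGroup.invRev, List.mem_reverse, List.mem_map] at hp
  obtain ⟨q, hq, hpq⟩ := hp
  have := hu q hq
  rw [← hpq]
  exact this

lemma isB_pow {u : FreeGroup (MLetter n)} (hu : IsBWord n u) (m : ℕ) :
    IsBWord n (u ^ m) := by
  induction m with
  | zero => simpa using isB_one
  | succ m ih => rw [pow_succ]; exact isB_mul ih hu

lemma isB_of_inr (i : Fin 2) : IsBWord n (FreeGroup.of (Sum.inr i : MLetter n)) := by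
  intro p hp
  rw [FreeGroup.toWord_of] at hp
  simp at hp
  rw [hp]
  rfl

lemma isB_bpow {u : FreeGroup (MLetter n)} (hu : IsBWord n u) (s : Bool) :
    IsBWord n (bpow u s) := by
  cases s
  · exact isB_inv hu
  · exact hu

lemma isB_vWord (η : MLetter n × Fin n ≃ Fin (n * (n + 2))) (y : MLetter n) (a : Fin n) :
    IsBWord n (vWord n η y a) := by
  unfold vWord bb1 bb2
  exact isB_mul (isB_mul (isB_pow (isB_of_inr 0) _)
    (isB_pow (isB_mul (isB_of_inr 1) (isB_of_inr 0)) _)) (isB_pow (isB_of_inr 1) _)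

lemma phi_mk_fix (η : MLetter n × Fin n ≃ Fin (n * (n + 2))) (y : MLetter n) (ε : Bool) :
    ∀ l : List (MLetter n × Bool), (∀ p ∈ l, (p.1).isRight = true) →
      phiM n η y ε (FreeGroup.mk l) = FreeGroup.mk l := by
  intro l
  induction l with
  | nil =>
    intro _
    rw [← FreeGroup.one_eq_mk]
    exact _root_.map_one _
  | cons p t ih =>
    intro h
    obtain ⟨c, s⟩ := p
    obtain ⟨i, rfl⟩ : ∃ i, c = Sum.inr i := by
      cases c with
      | inl a => exact absurd (h _ List.mem_cons_self) (by simp)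
      | inr i => exact ⟨i, rfl⟩
    have hsplit : FreeGroup.mk ((Sum.inr i, s) :: t) =
        FreeGroup.mk [((Sum.inr i : MLetter n), s)] * FreeGroup.mk t := by
      rw [FreeGroup.mul_mk]; rfl
    rw [hsplit, _root_.map_mul, ih (fun q hq => h q (List.mem_cons_of_mem _ hq)), mk_single]
    congr 1
    cases s
    · show phiM n η y ε (FreeGroup.of (Sum.inr i : MLetter n))⁻¹ = _
      rw [_root_.map_inv]
      congr 1
    · exact FreeGroup.lift_apply_of

lemma phi_fix (η : MLetter n × Fin n ≃ Fin (n * (n + 2))) (y : MLetter n) (ε : Bool)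
    {u : FreeGroup (MLetter n)} (hu : IsBWord n u) : phiM n η y ε u = u := by
  conv_lhs => rw [← FreeGroup.mk_toWord (x := u)]
  rw [phi_mk_fix η y ε _ hu, FreeGroup.mk_toWord]

lemma wordProd_zero (u : ℕ → FreeGroup (MLetter n)) (x : ℕ → Fin n) (d : ℕ → Bool) :
    wordProd n 0 u x d = u 0 := by
  simp [wordProd]

lemma wordProd_succ (k : ℕ) (u : ℕ → FreeGroup (MLetter n)) (x : ℕ → Fin n) (d : ℕ → Bool) :
    wordProd n (k + 1) u x d =
      u 0 * bpow (FreeGroup.of (Sum.inl (x 0))) (d 0) *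
        wordProd n k (u ∘ Nat.succ) (x ∘ Nat.succ) (d ∘ Nat.succ) := by
  unfold wordProd
  rw [List.range_succ_eq_map, List.map_cons, List.prod_cons, List.map_map]
  simp [Function.comp_def, mul_assoc]

lemma wordProd_left (k : ℕ) (u u' : ℕ → FreeGroup (MLetter n)) (x : ℕ → Fin n) (d : ℕ → Bool)
    (g : FreeGroup (MLetter n)) (h : ∀ i, u' i = if i = 0 then g * u i else u i) :
    wordProd n k u' x d = g * wordProd n k u x d := by
  cases k with
  | zero => rw [wordProd_zero, wordProd_zero, h 0]; simp
  | succ k =>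
    rw [wordProd_succ, wordProd_succ, h 0]
    have : u' ∘ Nat.succ = u ∘ Nat.succ := by
      funext i
      simp [h (i + 1)]
    rw [this]
    simp [mul_assoc]

lemma wordProd_right (k : ℕ) (u u' : ℕ → FreeGroup (MLetter n)) (x : ℕ → Fin n) (d : ℕ → Bool)
    (g : FreeGroup (MLetter n)) (h : ∀ i, u' i = if i = k then u i * g else u i) :
    wordProd n k u' x d = wordProd n k u x d * g := by
  unfold wordProd
  rw [h k, if_pos rfl]
  have : (List.range k).map (fun i => u' i * bpow (FreeGroup.of (Sum.inl (x i))) (d i)) =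
      (List.range k).map (fun i => u i * bpow (FreeGroup.of (Sum.inl (x i))) (d i)) := by
    apply List.map_congr_left
    intro i hi
    rw [h i, if_neg (Nat.ne_of_lt (List.mem_range.1 hi))]
  rw [this, mul_assoc]

end Aux8b

section Aux8c

open FreeGroup List

variable {n : ℕ}

/-- The word `toWord u₀ ++ [x₀^{d₀}] ++ toWord u₁ ++ ⋯ ++ [x_{k-1}^{d_{k-1}}] ++ toWord u_k`. -/
def bexpand (n : ℕ) : ℕ → (ℕ → FreeGroup (MLetter n)) → (ℕ → Fin n) → (ℕ → Bool) →
    List (MLetter n × Bool)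
  | 0, u, _, _ => FreeGroup.toWord (u 0)
  | k + 1, u, x, d =>
      FreeGroup.toWord (u 0) ++ (Sum.inl (x 0), d 0) ::
        bexpand n k (u ∘ Nat.succ) (x ∘ Nat.succ) (d ∘ Nat.succ)

lemma mk_bexpand : ∀ (k : ℕ) (u : ℕ → FreeGroup (MLetter n)) (x : ℕ → Fin n) (d : ℕ → Bool),
    FreeGroup.mk (bexpand n k u x d) = wordProd n k u x d := by
  intro k
  induction k with
  | zero => intro u x d; rw [bexpand, FreeGroup.mk_toWord, wordProd_zero]
  | succ k ih =>
    intro u x d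
    rw [bexpand, wordProd_succ, ← ih (u ∘ Nat.succ) (x ∘ Nat.succ) (d ∘ Nat.succ)]
    rw [show (Sum.inl (x 0), d 0) :: bexpand n k (u ∘ Nat.succ) (x ∘ Nat.succ) (d ∘ Nat.succ)
        = [((Sum.inl (x 0) : MLetter n), d 0)] ++ bexpand n k (u ∘ Nat.succ) (x ∘ Nat.succ)
          (d ∘ Nat.succ) from rfl]
    rw [← FreeGroup.mul_mk, ← FreeGroup.mul_mk, FreeGroup.mk_toWord, mk_single, mul_assoc]

lemma bexpand_head {k : ℕ} {u : ℕ → FreeGroup (MLetter n)} {x : ℕ → Fin n} {d : ℕ → Bool}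
    (hB : IsBWord n (u 0)) {b : MLetter n × Bool} (hb : b ∈ (bexpand n k u x d).head?) :
    (b.1).isRight = true ∨ (0 < k ∧ u 0 = 1 ∧ b = (Sum.inl (x 0), d 0)) := by
  cases k with
  | zero =>
    exact Or.inl (hB b (List.mem_of_mem_head? hb))
  | succ k =>
    rw [bexpand] at hb
    cases htw : FreeGroup.toWord (u 0) with
    | nil =>
      rw [htw, List.nil_append, List.head?_cons, Option.mem_some_iff] at hb
      exact Or.inr ⟨Nat.succ_pos k, FreeGroup.toWord_eq_nil_iff.1 htw, hb.symm⟩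
    | cons p t =>
      rw [htw, List.cons_append, List.head?_cons, Option.mem_some_iff] at hb
      refine Or.inl ?_
      rw [← hb]
      exact hB p (by rw [htw]; exact List.mem_cons_self)

lemma red8_bexpand : ∀ (k : ℕ) (u : ℕ → FreeGroup (MLetter n)) (x : ℕ → Fin n) (d : ℕ → Bool),
    (∀ i, IsBWord n (u i)) →
    (∀ i, i + 1 < k → x (i + 1) = x i → d (i + 1) = !d i → u (i + 1) ≠ 1) →
    Red8 (bexpand n k u x d) := by
  intro k
  induction k with
  | zero => intro u x d hB _; exact red8_toWord (u 0)
  | succ k ih =>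
    intro u x d hB hC
    rw [bexpand]
    apply List.IsChain.append (red8_toWord (u 0))
    · rw [List.isChain_cons]
      constructor
      · intro b hb
        rcases bexpand_head (hB 1) hb with h | ⟨hk, h1, hb⟩
        · intro ⟨hc, _⟩
          rw [← hc] at h
          exact absurd h (by simp)
        · rw [hb]
          intro ⟨hc, hd⟩
          simp only [Function.comp_apply] at hc hd
          rw [Sum.inl.injEq] at hc
          have hd' : d 1 = !d 0 := by
            cases hdd : d 0 <;> rw [hdd] at hd <;> simp_all
          exact hC 0 (by omega) hc.symm hd' h1
      · exact ih (u ∘ Nat.succ) (x ∘ Nat.succ) (d ∘ Nat.succ) (fun i => hB (i + 1))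
          (fun i hi hx hd => hC (i + 1) (by omega) hx hd)
    · intro a ha b hb
      have haR := hB 0 a (List.mem_of_mem_getLast? ha)
      rw [List.head?_cons, Option.mem_some_iff] at hb
      rw [← hb]
      intro ⟨hc, _⟩
      rw [hc] at haR
      exact absurd haR (by simp)

lemma hC_of_red8 : ∀ (k : ℕ) (u : ℕ → FreeGroup (MLetter n)) (x : ℕ → Fin n) (d : ℕ → Bool),
    Red8 (bexpand n k u x d) →
    ∀ i, i + 1 < k → x (i + 1) = x i → d (i + 1) = !d i → u (i + 1) ≠ 1 := by
  intro k
  induction k with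
  | zero => intro u x d _ i hi; omega
  | succ k ih =>
    intro u x d hred i hi hx hd h1
    rw [bexpand] at hred
    have hred2 : List.Chain' _ ((Sum.inl (x 0), d 0) ::
        bexpand n k (u ∘ Nat.succ) (x ∘ Nat.succ) (d ∘ Nat.succ)) :=
      (List.isChain_append.1 hred).2.1
    cases i with
    | zero =>
      have hk : 0 < k := by omega
      obtain ⟨k', rfl⟩ : ∃ k', k = k' + 1 := ⟨k - 1, by omega⟩
      rw [show bexpand n (k' + 1) (u ∘ Nat.succ) (x ∘ Nat.succ) (d ∘ Nat.succ) =
          FreeGroup.toWord (u 1) ++ (Sum.inl (x 1), d 1) ::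
            bexpand n k' (u ∘ Nat.succ ∘ Nat.succ) (x ∘ Nat.succ ∘ Nat.succ)
              (d ∘ Nat.succ ∘ Nat.succ) from rfl] at hred2
      rw [h1, FreeGroup.toWord_one, List.nil_append] at hred2
      have := (List.isChain_cons_cons.1 hred2).1
      apply this
      constructor
      · rw [hx]
      · rw [hd]; simp
    | succ j =>
      exact ih (u ∘ Nat.succ) (x ∘ Nat.succ) (d ∘ Nat.succ)
        (List.IsChain.tail hred2) j (by omega) hx hd h1

lemma filterMap_bword {l : List (MLetter n × Bool)} (h : ∀ p ∈ l, (p.1).isRight = true) :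
    l.filterMap (fun p => Sum.elim (fun a => some (a, p.2)) (fun _ => none) p.1) = [] := by
  rw [List.filterMap_eq_nil_iff]
  intro p hp
  obtain ⟨c, s⟩ := p
  cases c with
  | inl a => exact absurd (h _ hp) (by simp)
  | inr i => rfl

lemma aProj_bexpand : ∀ (k : ℕ) (u : ℕ → FreeGroup (MLetter n)) (x : ℕ → Fin n) (d : ℕ → Bool),
    (∀ i, IsBWord n (u i)) →
    (bexpand n k u x d).filterMap
        (fun p => Sum.elim (fun a => some (a, p.2)) (fun _ => none) p.1) =
      (List.range k).map fun i => (x i, d i) := by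
  intro k
  induction k with
  | zero => intro u x d hB; exact filterMap_bword (hB 0)
  | succ k ih =>
    intro u x d hB
    rw [bexpand, List.filterMap_append, filterMap_bword (hB 0), List.nil_append,
      List.filterMap_cons]
    simp only [Sum.elim_inl]
    rw [ih (u ∘ Nat.succ) (x ∘ Nat.succ) (d ∘ Nat.succ) (fun i => hB (i + 1)),
      List.range_succ_eq_map, List.map_cons, List.map_map]
    rfl

/-- Every reduced word admits a decomposition into `B`-segments and `A`-letters. -/
lemma decomp (hn : 0 < n) : ∀ l : List (MLetter n × Bool), Red8 l →
    ∃ (k : ℕ) (u : ℕ → FreeGroup (MLetter n)) (x : ℕ → Fin n) (d : ℕ → Bool),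
      l = bexpand n k u x d ∧ ∀ i, IsBWord n (u i) := by
  intro l
  induction l with
  | nil =>
    intro _
    refine ⟨0, fun _ => 1, fun _ => ⟨0, hn⟩, fun _ => true, ?_, fun _ => isB_one⟩
    rw [bexpand, FreeGroup.toWord_one]
  | cons p t ih =>
    intro h
    obtain ⟨k, u, x, d, he, hB⟩ := ih h.tail
    obtain ⟨c, s⟩ := p
    cases c with
    | inl a =>
      refine ⟨k + 1, fun i => Nat.casesOn i 1 u, fun i => Nat.casesOn i a x,
        fun i => Nat.casesOn i s d, ?_, ?_⟩
      · rw [bexpand]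
        simp only [FreeGroup.toWord_one, List.nil_append]
        congr 1
      · intro i
        cases i with
        | zero => exact isB_one
        | succ i => exact hB i
    | inr b =>
      have hhead : ∀ q ∈ (FreeGroup.toWord (u 0)).head?,
          ¬(((Sum.inr b : MLetter n), s).1 = q.1 ∧ s = !q.2) := by
        intro q hq
        have hq' : q ∈ t.head? := by
          rw [he]
          cases k with
          | zero => exact hq
          | succ k =>
            rw [show bexpand n (k + 1) u x d = FreeGroup.toWord (u 0) ++
              (Sum.inl (x 0), d 0) :: bexpand n k (u ∘ Nat.succ) (x ∘ Nat.succ)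
                (d ∘ Nat.succ) from rfl]
            cases htw : FreeGroup.toWord (u 0) with
            | nil => rw [htw] at hq; exact absurd hq (by simp)
            | cons p' t' =>
              rw [htw] at hq
              simp only [List.cons_append, List.head?_cons] at hq ⊢
              exact hq
        have := (List.isChain_cons.1 h).1 q hq'
        exact this
      have hred0 : Red8 (((Sum.inr b : MLetter n), s) :: FreeGroup.toWord (u 0)) := by
        rw [Red8]
        exact List.isChain_cons.2 ⟨hhead, red8_toWord (u 0)⟩
      refine ⟨k, fun i => if i = 0 then FreeGroup.mk (((Sum.inr b : MLetter n), s) ::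
        FreeGroup.toWord (u 0)) else u i, x, d, ?_, ?_⟩
      · have hus : (fun i => if i = 0 then FreeGroup.mk (((Sum.inr b : MLetter n), s) ::
            FreeGroup.toWord (u 0)) else u i) ∘ Nat.succ = u ∘ Nat.succ := by
          funext i
          simp
        cases k with
        | zero =>
          show (Sum.inr b, s) :: t = FreeGroup.toWord (FreeGroup.mk
            (((Sum.inr b : MLetter n), s) :: FreeGroup.toWord (u 0)))
          rw [toWord_mk_red8 hred0]
          exact congrArg _ he
        | succ k =>
          show (Sum.inr b, s) :: t = FreeGroup.toWord (FreeGroup.mk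
              (((Sum.inr b : MLetter n), s) :: FreeGroup.toWord (u 0))) ++
            (Sum.inl (x 0), d 0) :: bexpand n k ((fun i => if i = 0 then FreeGroup.mk
              (((Sum.inr b : MLetter n), s) :: FreeGroup.toWord (u 0)) else u i) ∘ Nat.succ)
              (x ∘ Nat.succ) (d ∘ Nat.succ)
          rw [hus, toWord_mk_red8 hred0, List.cons_append]
          exact congrArg _ he
      · intro i
        cases i with
        | zero =>
          intro q hq
          show Sum.isRight q.1 = true
          replace hq : q ∈ FreeGroup.toWord (FreeGroup.mk
            (((Sum.inr b : MLetter n), s) :: FreeGroup.toWord (u 0))) := hq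
          rw [toWord_mk_red8 hred0] at hq
          rcases List.mem_cons.1 hq with rfl | hq'
          · rfl
          · exact hB 0 q hq'
        | succ i =>
          show IsBWord n (if i + 1 = 0 then _ else u (i + 1))
          rw [if_neg (Nat.succ_ne_zero i)]
          exact hB (i + 1)

end Aux8c

section Aux8d

open FreeGroup List

variable {n : ℕ}

/-- `V a = v(y,a)^ε`. -/
def Vb (n : ℕ) (η : MLetter n × Fin n ≃ Fin (n * (n + 2))) (y : MLetter n) (ε : Bool)
    (a : Fin n) : FreeGroup (MLetter n) := bpow (vWord n η y a) ε

def preF (n : ℕ) (η : MLetter n × Fin n ≃ Fin (n * (n + 2))) (y : MLetter n) (ε : Bool)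
    (x : ℕ → Fin n) (d : ℕ → Bool) (i : ℕ) : FreeGroup (MLetter n) :=
  if d i then Vb n η y ε (x i) else 1

def postF (n : ℕ) (η : MLetter n × Fin n ≃ Fin (n * (n + 2))) (y : MLetter n) (ε : Bool)
    (x : ℕ → Fin n) (d : ℕ → Bool) : ℕ → FreeGroup (MLetter n)
  | 0 => 1
  | j + 1 => if d j then 1 else (Vb n η y ε (x j))⁻¹

lemma isB_Vb (η : MLetter n × Fin n ≃ Fin (n * (n + 2))) (y : MLetter n) (ε : Bool)
    (a : Fin n) : IsBWord n (Vb n η y ε a) := isB_bpow (isB_vWord η y a) ε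

lemma isB_preF (η : MLetter n × Fin n ≃ Fin (n * (n + 2))) (y : MLetter n) (ε : Bool)
    (x : ℕ → Fin n) (d : ℕ → Bool) (i : ℕ) : IsBWord n (preF n η y ε x d i) := by
  unfold preF
  split
  · exact isB_Vb η y ε (x i)
  · exact isB_one

lemma isB_postF (η : MLetter n × Fin n ≃ Fin (n * (n + 2))) (y : MLetter n) (ε : Bool)
    (x : ℕ → Fin n) (d : ℕ → Bool) (i : ℕ) : IsBWord n (postF n η y ε x d i) := by
  cases i with
  | zero => exact isB_one
  | succ j =>
    show IsBWord n (if d j then 1 else (Vb n η y ε (x j))⁻¹)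
    split
    · exact isB_one
    · exact isB_inv (isB_Vb η y ε (x j))

lemma phi_of_inl (η : MLetter n × Fin n ≃ Fin (n * (n + 2))) (y : MLetter n) (ε : Bool)
    (a : Fin n) :
    phiM n η y ε (FreeGroup.of (Sum.inl a : MLetter n)) =
      Vb n η y ε a * FreeGroup.of (Sum.inl a) :=
  FreeGroup.lift_apply_of

lemma phi_wordProd_aux (η : MLetter n × Fin n ≃ Fin (n * (n + 2))) (y : MLetter n) (ε : Bool) :
    ∀ (k : ℕ) (u : ℕ → FreeGroup (MLetter n)) (x : ℕ → Fin n) (d : ℕ → Bool),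
      (∀ i, phiM n η y ε (u i) = u i) →
      phiM n η y ε (wordProd n k u x d) * preF n η y ε x d k =
        wordProd n k (fun i => postF n η y ε x d i * u i * preF n η y ε x d i) x d := by
  intro k
  induction k with
  | zero =>
    intro u x d hfix
    rw [wordProd_zero, wordProd_zero, hfix 0]
    show u 0 * preF n η y ε x d 0 = 1 * u 0 * preF n η y ε x d 0
    rw [one_mul]
  | succ k ih =>
    intro u x d hfix
    rw [wordProd_succ, _root_.map_mul, _root_.map_mul, hfix 0]
    have hpre : preF n η y ε x d (k + 1) =
        preF n η y ε (x ∘ Nat.succ) (d ∘ Nat.succ) k := rfl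
    rw [mul_assoc, mul_assoc, hpre, ih (u ∘ Nat.succ) (x ∘ Nat.succ) (d ∘ Nat.succ)
      (fun i => hfix (i + 1))]
    -- now compute RHS
    rw [wordProd_succ]
    have hshift : wordProd n k
        ((fun i => postF n η y ε x d i * u i * preF n η y ε x d i) ∘ Nat.succ)
        (x ∘ Nat.succ) (d ∘ Nat.succ) =
        postF n η y ε x d 1 * wordProd n k
          (fun i => postF n η y ε (x ∘ Nat.succ) (d ∘ Nat.succ) i * (u ∘ Nat.succ) i *
            preF n η y ε (x ∘ Nat.succ) (d ∘ Nat.succ) i)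
          (x ∘ Nat.succ) (d ∘ Nat.succ) := by
      apply wordProd_left
      intro i
      cases i with
      | zero =>
        rw [if_pos rfl]
        show postF n η y ε x d 1 * u 1 * preF n η y ε x d 1 =
          postF n η y ε x d 1 * (postF n η y ε (x ∘ Nat.succ) (d ∘ Nat.succ) 0 * u 1 *
            preF n η y ε (x ∘ Nat.succ) (d ∘ Nat.succ) 0)
        rw [show postF n η y ε (x ∘ Nat.succ) (d ∘ Nat.succ) 0 = 1 from rfl, one_mul]
        rw [show preF n η y ε (x ∘ Nat.succ) (d ∘ Nat.succ) 0 = preF n η y ε x d 1 from rfl]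
        rw [mul_assoc]
      | succ j =>
        rw [if_neg (Nat.succ_ne_zero j)]
        show postF n η y ε x d (j + 2) * u (j + 2) * preF n η y ε x d (j + 2) =
          postF n η y ε (x ∘ Nat.succ) (d ∘ Nat.succ) (j + 1) * u (j + 2) *
            preF n η y ε (x ∘ Nat.succ) (d ∘ Nat.succ) (j + 1)
        rfl
    rw [hshift]
    show u 0 * (phiM n η y ε (bpow (FreeGroup.of (Sum.inl (x 0))) (d 0)) * _) =
      postF n η y ε x d 0 * u 0 * preF n η y ε x d 0 *
        bpow (FreeGroup.of (Sum.inl (x 0))) (d 0) * (postF n η y ε x d 1 * _)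
    rw [show postF n η y ε x d 0 = 1 from rfl, one_mul]
    cases hd : d 0 with
    | true =>
      rw [show preF n η y ε x d 0 = Vb n η y ε (x 0) from by rw [preF, hd, if_pos rfl]]
      rw [show postF n η y ε x d 1 = 1 from by
        show (if d 0 then 1 else (Vb n η y ε (x 0))⁻¹) = 1
        rw [hd, if_pos rfl]]
      rw [show bpow (FreeGroup.of (Sum.inl (x 0) : MLetter n)) true =
        FreeGroup.of (Sum.inl (x 0)) from rfl, phi_of_inl]
      group
    | false =>
      rw [show preF n η y ε x d 0 = 1 from by rw [preF, hd, if_neg Bool.false_ne_true]]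
      rw [show postF n η y ε x d 1 = (Vb n η y ε (x 0))⁻¹ from by
        show (if d 0 then 1 else (Vb n η y ε (x 0))⁻¹) = _
        rw [hd, if_neg Bool.false_ne_true]]
      rw [show bpow (FreeGroup.of (Sum.inl (x 0) : MLetter n)) false =
        (FreeGroup.of (Sum.inl (x 0)))⁻¹ from rfl, _root_.map_inv, phi_of_inl]
      group

lemma phi_wordProd (η : MLetter n × Fin n ≃ Fin (n * (n + 2))) (y : MLetter n) (ε : Bool)
    (k : ℕ) (u : ℕ → FreeGroup (MLetter n)) (x : ℕ → Fin n) (d : ℕ → Bool)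
    (hB : ∀ i, IsBWord n (u i)) :
    phiM n η y ε (wordProd n k u x d) =
      wordProd n k (fun i => postF n η y ε x d i * u i *
        (if i = k then 1 else preF n η y ε x d i)) x d := by
  have h := phi_wordProd_aux η y ε k u x d (fun i => phi_fix η y ε (hB i))
  have h2 : phiM n η y ε (wordProd n k u x d) =
      wordProd n k (fun i => postF n η y ε x d i * u i * preF n η y ε x d i) x d *
        (preF n η y ε x d k)⁻¹ := by
    rw [← h, mul_assoc, mul_inv_cancel, mul_one]
  rw [h2]
  symm
  apply wordProd_right
  intro i
  by_cases hi : i = k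
  · rw [if_pos hi, if_pos hi, hi, mul_one, mul_assoc, mul_inv_cancel, mul_one]
  · rw [if_neg hi, if_neg hi]

end Aux8d

/-- **Lemma 5.4.** For every `w ∈ F(𝒜₁ ⊔ ℬ)`, `y ∈ 𝒜 ⊔ ℬ` and `ε ∈ {±1}`, the
`𝒜`-projection of `φ_y^{ε}(w)` coincides letter-for-letter with that of `w`. -/
theorem statement8 (n : ℕ) (hn : 0 < n) (η : MLetter n × Fin n ≃ Fin (n * (n + 2)))
    (w : FreeGroup (MLetter n)) (y : MLetter n) (ε : Bool) :
    aProj n (phiM n η y ε w) = aProj n w := by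
  obtain ⟨k, u, x, d, he, hB⟩ := decomp hn (FreeGroup.toWord w) (red8_toWord w)
  have hw : w = wordProd n k u x d := by
    conv_lhs => rw [← FreeGroup.mk_toWord (x := w)]
    rw [he, mk_bexpand]
  have hC : ∀ i, i + 1 < k → x (i + 1) = x i → d (i + 1) = !d i → u (i + 1) ≠ 1 :=
    hC_of_red8 k u x d (he ▸ red8_toWord w)
  set u3 : ℕ → FreeGroup (MLetter n) := fun i => postF n η y ε x d i * u i *
    (if i = k then 1 else preF n η y ε x d i) with hu3
  have hB3 : ∀ i, IsBWord n (u3 i) := by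
    intro i
    refine isB_mul (isB_mul (isB_postF η y ε x d i) (hB i)) ?_
    split
    · exact isB_one
    · exact isB_preF η y ε x d i
  have hC3 : ∀ i, i + 1 < k → x (i + 1) = x i → d (i + 1) = !d i → u3 (i + 1) ≠ 1 := by
    intro i hi hx hd
    have hne := hC i hi hx hd
    have hik : ¬(i + 1 = k) := by omega
    show postF n η y ε x d (i + 1) * u (i + 1) *
      (if i + 1 = k then 1 else preF n η y ε x d (i + 1)) ≠ 1
    rw [if_neg hik]
    cases hdi : d i with
    | true =>
      have h1 : postF n η y ε x d (i + 1) = 1 := by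
        show (if d i then 1 else (Vb n η y ε (x i))⁻¹) = 1
        rw [hdi, if_pos rfl]
      have h2 : preF n η y ε x d (i + 1) = 1 := by
        rw [preF, hd, hdi]
        rfl
      rw [h1, h2, one_mul, mul_one]
      exact hne
    | false =>
      have h1 : postF n η y ε x d (i + 1) = (Vb n η y ε (x i))⁻¹ := by
        show (if d i then 1 else (Vb n η y ε (x i))⁻¹) = _
        rw [hdi, if_neg Bool.false_ne_true]
      have h2 : preF n η y ε x d (i + 1) = Vb n η y ε (x i) := by
        rw [preF, hd, hdi, hx]
        rfl
      rw [h1, h2]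
      intro hcon
      apply hne
      calc u (i + 1)
          = Vb n η y ε (x i) * ((Vb n η y ε (x i))⁻¹ * u (i + 1) * Vb n η y ε (x i)) *
            (Vb n η y ε (x i))⁻¹ := by group
        _ = 1 := by rw [hcon]; group
  have hphi : phiM n η y ε w = FreeGroup.mk (bexpand n k u3 x d) := by
    rw [hw, phi_wordProd η y ε k u x d hB, mk_bexpand]
  have htw : FreeGroup.toWord (phiM n η y ε w) = bexpand n k u3 x d := by
    rw [hphi, toWord_mk_red8 (red8_bexpand k u3 x d hB3 hC3)]
  unfold aProj
  rw [htw, he, aProj_bexpand k u3 x d hB3, aProj_bexpand k u x d hB]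
end

section
/- Let w₀ → ⋯ → w_t be a computation with reduced history (i.e., w_i = ρ_{y_i}^{ε_i}(w_{i-1}) with no i such that y_{i+1} = y_i and ε_{i+1} = -ε_i). If |w₀|_𝒜 < |w₁|_𝒜, then |w_{i-1}|_𝒜 ≤ |w_i|_𝒜 for all 1 ≤ i ≤ t. -/
set_option linter.unusedSectionVars false
set_option maxHeartbeats 1000000



namespace S9
open FreeGroup List

variable {α : Type*} [DecidableEq α]

/-- Non-cancelling adjacency of letters. -/
def NC (p q : α × Bool) : Prop := q ≠ (p.1, !p.2)

lemma nc_of_same_bool {p q : α × Bool} (h : q.2 = p.2) : NC p q := by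
  intro hq; rw [hq] at h; simp at h

lemma nc_of_ne_fst {p q : α × Bool} (h : q.1 ≠ p.1) : NC p q := by
  intro hq; rw [hq] at h; simp at h

lemma reduce_eq_self_of_chain' : ∀ {l : List (α × Bool)}, l.Chain' NC → FreeGroup.reduce l = l
  | [], _ => rfl
  | [x], _ => rfl
  | x :: y :: l, h => by
    have h1 : NC x y := (List.isChain_cons_cons.1 h).1
    have h2 := reduce_eq_self_of_chain' (List.isChain_cons_cons.1 h).2
    rw [reduce.cons, h2]
    have : ¬(x.1 = y.1 ∧ x.2 = !y.2) := by
      rintro ⟨ha, hb⟩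
      exact h1 (by ext <;> simp [ha, hb])
    simp [this]

lemma not_chain'_split : ∀ {L : List (α × Bool)}, ¬ L.Chain' NC →
    ∃ (L₁ L₂ : List (α × Bool)) (x : α) (b : Bool), L = L₁ ++ (x, b) :: (x, !b) :: L₂
  | [], h => absurd List.isChain_nil h
  | p :: L, h => by
    unfold List.Chain' at h
    rw [List.isChain_cons] at h
    rcases Classical.em (L.Chain' NC) with hc | hc
    · have hA : ¬ ∀ y ∈ L.head?, NC p y := by tauto
      push_neg at hA
      obtain ⟨q, hq, hnc⟩ := hA
      rcases L with _ | ⟨q', L'⟩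
      · simp at hq
      · simp only [List.head?_cons, Option.mem_def, Option.some.injEq] at hq
        subst hq
        simp only [NC, not_not] at hnc
        exact ⟨[], L', p.1, p.2, by simp [hnc]⟩
    · obtain ⟨L₁, L₂, x, b, rfl⟩ := not_chain'_split hc
      exact ⟨p :: L₁, L₂, x, b, rfl⟩

lemma chain'_toWord (w : FreeGroup α) : (toWord w).Chain' NC := by
  by_contra h
  obtain ⟨L₁, L₂, x, b, hL⟩ := not_chain'_split h
  have := reduce_toWord w
  rw [hL] at this
  exact reduce.not this

lemma toWord_mk_of_chain' {l : List (α × Bool)} (h : l.Chain' NC) :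
    toWord (mk l) = l := by rw [toWord_mk, reduce_eq_self_of_chain' h]

/-! ### letter counting -/

variable (f : α → Bool)

/-- count letters satisfying `f` in a list. -/
def cnt (l : List (α × Bool)) : ℕ := (l.filter fun p => f p.1).length

lemma cnt_cons (p : α × Bool) (l : List (α × Bool)) :
    cnt f (p :: l) = (if f p.1 then 1 else 0) + cnt f l := by
  by_cases h : f p.1 = true <;> simp [cnt, List.filter_cons, h, Nat.add_comm]

lemma cnt_append (l₁ l₂ : List (α × Bool)) : cnt f (l₁ ++ l₂) = cnt f l₁ + cnt f l₂ := by
  simp [cnt]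

lemma cnt_invRev (l : List (α × Bool)) : cnt f (invRev l) = cnt f l := by
  simp [cnt, invRev, List.filter_reverse, List.filter_map, List.length_map]
  congr 1

lemma cnt_step {L₁ L₂ : List (α × Bool)} (h : Red.Step L₁ L₂) : cnt f L₂ ≤ cnt f L₁ := by
  cases h with
  | @not L₁ L₂ x b =>
    simp only [cnt_append, cnt_cons]
    cases hf : f x <;> simp [hf] <;> omega

lemma cnt_red {L₁ L₂ : List (α × Bool)} (h : Red L₁ L₂) : cnt f L₂ ≤ cnt f L₁ := by
  induction h with
  | refl => exact le_refl _
  | tail _ hstep ih => exact le_trans (cnt_step f hstep) ih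

/-- count in the reduced word of an element. -/
def cntW (w : FreeGroup α) : ℕ := cnt f (toWord w)

lemma cntW_le_rep {l : List (α × Bool)} {w : FreeGroup α} (h : mk l = w) :
    cntW f w ≤ cnt f l := by
  have : toWord w = FreeGroup.reduce l := by rw [← h, toWord_mk]
  rw [cntW, this]
  exact cnt_red f (reduce.red)

lemma cntW_mul_le (x y : FreeGroup α) : cntW f (x * y) ≤ cntW f x + cntW f y := by
  have : mk (toWord x ++ toWord y) = x * y := by
    rw [← mul_mk, mk_toWord, mk_toWord]
  calc cntW f (x * y) ≤ cnt f (toWord x ++ toWord y) := cntW_le_rep f this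
    _ = cntW f x + cntW f y := by unfold cntW; exact cnt_append f _ _

lemma cntW_inv (x : FreeGroup α) : cntW f x⁻¹ = cntW f x := by
  rw [cntW, cntW, toWord_inv, cnt_invRev]

lemma cntW_mul_right_zero {t : FreeGroup α} (ht : cntW f t = 0) (w : FreeGroup α) :
    cntW f (w * t) = cntW f w := by
  refine le_antisymm (by have := cntW_mul_le f w t; omega) ?_
  have h2 : cntW f w ≤ cntW f (w * t) + cntW f t⁻¹ := by
    have := cntW_mul_le f (w * t) t⁻¹
    simpa [mul_assoc] using this
  rw [cntW_inv] at h2; omega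

lemma cntW_mul_left_zero {t : FreeGroup α} (ht : cntW f t = 0) (w : FreeGroup α) :
    cntW f (t * w) = cntW f w := by
  refine le_antisymm (by have := cntW_mul_le f t w; omega) ?_
  have h2 : cntW f w ≤ cntW f t⁻¹ + cntW f (t * w) := by
    have := cntW_mul_le f t⁻¹ (t * w)
    simpa [← mul_assoc] using this
  rw [cntW_inv] at h2; omega

/-! ### single letter multiplication -/

lemma toWord_mul_letter (w : FreeGroup α) (x : α × Bool) :
    toWord (w * mk [x]) = toWord w ++ [x] ∨
      (∃ l, toWord w = l ++ [(x.1, !x.2)] ∧ toWord (w * mk [x]) = l) := by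
  rcases List.eq_nil_or_concat (toWord w) with h | ⟨l, p, h⟩
  · left
    have hw : w = 1 := toWord_eq_nil_iff.1 h
    rw [hw, one_mul, toWord_mk, reduce_singleton, toWord_one]; rfl
  · rw [List.concat_eq_append] at h
    have hchain := chain'_toWord w
    have hmk : w * mk [x] = mk (toWord w ++ [x]) := by
      rw [← mul_mk, mk_toWord]
    by_cases hp : p = (x.1, !x.2)
    · right
      refine ⟨l, by rw [h, hp], ?_⟩
      have hx : x = (p.1, !p.2) := by rw [hp]; simp
      have hstep : Red.Step (l ++ (p.1, p.2) :: (p.1, !p.2) :: []) (l ++ []) := Red.Step.not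
      have hmkeq : mk (l ++ (p.1, p.2) :: (p.1, !p.2) :: []) = mk (l ++ []) := by
        rw [← quot_mk_eq_mk, ← quot_mk_eq_mk]; exact Quot.sound hstep
      have : w * mk [x] = mk l := by
        rw [hmk, h, hx]
        have he : (l ++ [p]) ++ [(p.1, !p.2)] = l ++ (p.1, p.2) :: (p.1, !p.2) :: [] := by simp
        rw [he, hmkeq]; simp
      rw [this]
      apply toWord_mk_of_chain'
      rw [h] at hchain
      exact (List.isChain_append.1 hchain).1
    · left
      rw [hmk]
      apply toWord_mk_of_chain'
      unfold List.Chain'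
      rw [List.isChain_append]
      refine ⟨hchain, List.isChain_singleton _, ?_⟩
      intro a ha y hy
      simp only [List.head?_cons, Option.mem_def, Option.some.injEq] at hy
      subst hy
      rw [h, List.getLast?_concat, Option.mem_def, Option.some.injEq] at ha
      subst ha
      intro hcon
      exact hp (by rw [hcon]; simp)


/-! ### single-letter corollaries (generic) -/

/-- the reduced word of `w` ends with letter `x`. -/
def Ends (w : FreeGroup α) (x : α × Bool) : Prop := (toWord w).getLast? = some x

lemma cntW_mul_letter_cases {x : α × Bool} (hx : f x.1 = true) (w : FreeGroup α) :
    (cntW f (w * mk [x]) = cntW f w + 1 ∧ toWord (w * mk [x]) = toWord w ++ [x]) ∨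
    (cntW f (w * mk [x]) + 1 = cntW f w ∧
      toWord w = toWord (w * mk [x]) ++ [(x.1, !x.2)]) := by
  rcases toWord_mul_letter w x with h | ⟨l, hl, h⟩
  · left
    refine ⟨?_, h⟩
    rw [cntW, h, cnt_append, cntW]
    simp [cnt, List.filter, hx]
  · right
    refine ⟨?_, by rw [hl, h]⟩
    rw [cntW, cntW, h, hl, cnt_append]
    simp [cnt, List.filter, hx]

lemma ends_of_cntW_succ {x : α × Bool} (hx : f x.1 = true) {w : FreeGroup α}
    (h : cntW f (w * mk [x]) = cntW f w + 1) : Ends (w * mk [x]) x := by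
  rcases cntW_mul_letter_cases f hx w with ⟨_, h2⟩ | ⟨h1, _⟩
  · rw [Ends, h2, List.getLast?_concat]
  · omega

lemma cntW_succ_of_not_ends {x : α × Bool} (hx : f x.1 = true) {w : FreeGroup α}
    (h : ¬ Ends w (x.1, !x.2)) : cntW f (w * mk [x]) = cntW f w + 1 := by
  rcases cntW_mul_letter_cases f hx w with ⟨h1, _⟩ | ⟨_, h2⟩
  · exact h1
  · exact absurd (by rw [Ends, h2, List.getLast?_concat]) h

lemma cntW_pred_of_ends {x : α × Bool} (hx : f x.1 = true) {w : FreeGroup α}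
    (h : Ends w (x.1, !x.2)) :
    cntW f (w * mk [x]) + 1 = cntW f w ∧
      toWord w = toWord (w * mk [x]) ++ [(x.1, !x.2)] := by
  rcases cntW_mul_letter_cases f hx w with ⟨_, h2⟩ | h1
  · exfalso
    have hch := chain'_toWord (w * mk [x])
    rw [h2] at hch
    rcases List.eq_nil_or_concat (toWord w) with hnil | ⟨l, p, hl⟩
    · rw [Ends, hnil] at h; simp at h
    · rw [List.concat_eq_append] at hl
      rw [Ends, hl, List.getLast?_concat, Option.some_inj] at h
      subst h
      rw [hl, List.append_assoc] at hch
      have hch2 := (List.isChain_append.1 hch).2.1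
      have hnc : NC (x.1, !x.2) x := (List.isChain_cons_cons.1 hch2).1
      exact hnc (by simp)
  · exact h1

lemma toWord_mul_of_ends {w t : FreeGroup α} {x : α × Bool} (hE : Ends w x)
    (hx : f x.1 = true) (ht : ∀ p ∈ toWord t, f p.1 = false) :
    toWord (w * t) = toWord w ++ toWord t := by
  have hmk : w * t = mk (toWord w ++ toWord t) := by rw [← mul_mk, mk_toWord, mk_toWord]
  rw [hmk]
  apply toWord_mk_of_chain'
  unfold List.Chain'
  rw [List.isChain_append]
  refine ⟨chain'_toWord w, chain'_toWord t, ?_⟩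
  intro p hp q hq
  rw [Ends] at hE
  rw [hE, Option.mem_def, Option.some_inj] at hp
  subst hp
  apply nc_of_ne_fst
  intro hfst
  have hqmem : q ∈ toWord t := List.mem_of_mem_head? hq
  have := ht q hqmem
  rw [hfst, hx] at this
  exact absurd this (by simp)

/-! ### block lists -/

section Blocks

def rep (c : α) (j : ℕ) (s : Bool) : List (α × Bool) := List.replicate j (c, s)

def alt (d c : α) (j : ℕ) (s : Bool) : List (α × Bool) :=
  (List.replicate j [(d, s), (c, s)]).flatten

lemma rep_succ (c : α) (j : ℕ) (s : Bool) : rep c (j + 1) s = (c, s) :: rep c j s :=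
  List.replicate_succ

lemma rep_succ' (c : α) (j : ℕ) (s : Bool) : rep c (j + 1) s = rep c j s ++ [(c, s)] :=
  List.replicate_succ'

lemma alt_succ (d c : α) (j : ℕ) (s : Bool) :
    alt d c (j + 1) s = (d, s) :: (c, s) :: alt d c j s := by
  simp [alt, List.replicate_succ]

lemma alt_succ' (d c : α) (j : ℕ) (s : Bool) :
    alt d c (j + 1) s = alt d c j s ++ [(d, s), (c, s)] := by
  simp [alt, List.replicate_succ']

lemma mem_rep {c : α} {j : ℕ} {s : Bool} {p : α × Bool} (h : p ∈ rep c j s) : p.2 = s := by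
  rw [List.eq_of_mem_replicate h]

lemma mem_alt {d c : α} {j : ℕ} {s : Bool} {p : α × Bool} (h : p ∈ alt d c j s) : p.2 = s := by
  obtain ⟨l, hl, hp⟩ := List.mem_flatten.1 h
  rw [List.eq_of_mem_replicate hl] at hp
  simp only [List.mem_cons, List.not_mem_nil, or_false] at hp
  rcases hp with h | h <;> rw [h]

lemma chain'_allbool {l : List (α × Bool)} {s : Bool} (h : ∀ p ∈ l, p.2 = s) :
    l.Chain' NC :=
  (List.pairwise_of_forall_mem_list fun a ha b hb =>
    nc_of_same_bool ((h b hb).trans (h a ha).symm)).isChain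

lemma rep_ne_nil {c : α} {j : ℕ} {s : Bool} (hj : j ≠ 0) : rep c j s ≠ [] := by
  obtain ⟨i, rfl⟩ := Nat.exists_eq_succ_of_ne_zero hj
  rw [rep_succ]; simp

lemma alt_ne_nil {d c : α} {j : ℕ} {s : Bool} (hj : j ≠ 0) : alt d c j s ≠ [] := by
  obtain ⟨i, rfl⟩ := Nat.exists_eq_succ_of_ne_zero hj
  rw [alt_succ]; simp

lemma head?_rep {c : α} {j : ℕ} {s : Bool} (hj : j ≠ 0) : (rep c j s).head? = some (c, s) := by
  obtain ⟨i, rfl⟩ := Nat.exists_eq_succ_of_ne_zero hj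
  rw [rep_succ]; rfl

lemma getLast?_rep {c : α} {j : ℕ} {s : Bool} (hj : j ≠ 0) :
    (rep c j s).getLast? = some (c, s) := by
  obtain ⟨i, rfl⟩ := Nat.exists_eq_succ_of_ne_zero hj
  rw [rep_succ']; exact List.getLast?_concat

lemma head?_alt {d c : α} {j : ℕ} {s : Bool} (hj : j ≠ 0) :
    (alt d c j s).head? = some (d, s) := by
  obtain ⟨i, rfl⟩ := Nat.exists_eq_succ_of_ne_zero hj
  rw [alt_succ]; rfl

lemma getLast?_alt {d c : α} {j : ℕ} {s : Bool} (hj : j ≠ 0) :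
    (alt d c j s).getLast? = some (c, s) := by
  obtain ⟨i, rfl⟩ := Nat.exists_eq_succ_of_ne_zero hj
  rw [alt_succ']
  rw [List.getLast?_append_of_ne_nil _ (by simp)]
  rfl

lemma head?_append_left {l₁ l₂ : List (α × Bool)} (h : l₁ ≠ []) :
    (l₁ ++ l₂).head? = l₁.head? := by
  cases l₁ with
  | nil => exact absurd rfl h
  | cons x l => rfl

lemma mk_cons' (x : α × Bool) (L : List (α × Bool)) :
    mk (x :: L) = mk [x] * mk L := by rw [mul_mk]; rfl

lemma mk_single_true' (c : α) : mk [(c, true)] = (of c : FreeGroup α) := rfl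

lemma mk_single_false' (c : α) : mk [(c, false)] = (of c : FreeGroup α)⁻¹ := by
  rw [← mk_single_true', inv_mk]; rfl

lemma mk_rep_true (c : α) (j : ℕ) : mk (rep c j true) = (of c : FreeGroup α) ^ j := by
  induction j with
  | zero => rfl
  | succ j ih =>
    rw [rep_succ', ← mul_mk, ih, mk_single_true', pow_succ]

lemma mk_rep_false (c : α) (j : ℕ) : mk (rep c j false) = ((of c : FreeGroup α) ^ j)⁻¹ := by
  induction j with
  | zero => rfl
  | succ j ih =>
    rw [rep_succ, mk_cons', ih, mk_single_false', pow_succ, mul_inv_rev]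

lemma mk_pair_true (d c : α) : mk [(d, true), (c, true)] = (of d : FreeGroup α) * of c := by
  have : [(d, true), (c, true)] = [(d, true)] ++ [(c, true)] := rfl
  rw [this, ← mul_mk, mk_single_true', mk_single_true']

lemma mk_pair_false (d c : α) :
    mk [(d, false), (c, false)] = ((of c : FreeGroup α) * of d)⁻¹ := by
  have : [(d, false), (c, false)] = [(d, false)] ++ [(c, false)] := rfl
  rw [this, ← mul_mk, mk_single_false', mk_single_false', mul_inv_rev]

lemma mk_alt_true (d c : α) (j : ℕ) :
    mk (alt d c j true) = ((of d : FreeGroup α) * of c) ^ j := by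
  induction j with
  | zero => rfl
  | succ j ih =>
    have h : alt d c (j + 1) true = [(d, true), (c, true)] ++ alt d c j true := alt_succ d c j true
    rw [h, ← mul_mk, ih, mk_pair_true, pow_succ']

lemma mk_alt_false (d c : α) (j : ℕ) :
    mk (alt d c j false) = (((of c : FreeGroup α) * of d) ^ j)⁻¹ := by
  induction j with
  | zero => rfl
  | succ j ih =>
    have h : alt d c (j + 1) false = [(d, false), (c, false)] ++ alt d c j false :=
      alt_succ d c j false
    rw [h, ← mul_mk, ih, mk_pair_false, pow_succ]; group

end Blocks

/-! ### aCount and phiM lemmas -/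

section Problem

variable {n : ℕ} (η : MLetter n × Fin n ≃ Fin (n * (n + 2)))

lemma aCount_eq (w : FreeGroup (MLetter n)) :
    aCount n w = cntW (fun x : MLetter n => x.isLeft) w := rfl

lemma aCount_mul_le (x y : FreeGroup (MLetter n)) :
    aCount n (x * y) ≤ aCount n x + aCount n y := by
  rw [aCount_eq, aCount_eq, aCount_eq]; exact cntW_mul_le _ x y

lemma aCount_inv (x : FreeGroup (MLetter n)) : aCount n x⁻¹ = aCount n x := by
  rw [aCount_eq, aCount_eq]; exact cntW_inv _ x

lemma aCount_one : aCount n (1 : FreeGroup (MLetter n)) = 0 := by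
  simp [aCount, toWord_one]

lemma aCount_mulr0 {t : FreeGroup (MLetter n)} (ht : aCount n t = 0)
    (w : FreeGroup (MLetter n)) : aCount n (w * t) = aCount n w := by
  rw [aCount_eq] at *; exact cntW_mul_right_zero _ ht w

lemma aCount_mull0 {t : FreeGroup (MLetter n)} (ht : aCount n t = 0)
    (w : FreeGroup (MLetter n)) : aCount n (t * w) = aCount n w := by
  rw [aCount_eq] at *; exact cntW_mul_left_zero _ ht w

lemma aCount_mul00 {t s : FreeGroup (MLetter n)} (ht : aCount n t = 0)
    (hs : aCount n s = 0) : aCount n (t * s) = 0 := by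
  rw [aCount_mulr0 hs, ht]

lemma aCount_of_inr (i : Fin 2) : aCount n (of (Sum.inr i) : FreeGroup (MLetter n)) = 0 := by
  simp [aCount, toWord_of]

lemma aCount_of_inl (a : Fin n) : aCount n (of (Sum.inl a) : FreeGroup (MLetter n)) = 1 := by
  simp [aCount, toWord_of, List.filter]

lemma aCount_pow0 {t : FreeGroup (MLetter n)} (ht : aCount n t = 0) (j : ℕ) :
    aCount n (t ^ j) = 0 := by
  induction j with
  | zero => simpa using aCount_one
  | succ j ih => rw [pow_succ]; exact aCount_mul00 ih ht

lemma aCount_vWord (y : MLetter n) (a : Fin n) : aCount n (vWord n η y a) = 0 := by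
  unfold vWord bb1 bb2
  exact aCount_mul00 (aCount_mul00 (aCount_pow0 (aCount_of_inr 0) _)
    (aCount_pow0 (aCount_mul00 (aCount_of_inr 1) (aCount_of_inr 0)) _))
    (aCount_pow0 (aCount_of_inr 1) _)

lemma aCount_bpow (w : FreeGroup (MLetter n)) (ε : Bool) :
    aCount n (bpow w ε) = aCount n w := by
  cases ε <;> simp [bpow, aCount_inv]

@[simp] lemma bpow_inv (w : FreeGroup (MLetter n)) (ε : Bool) :
    (bpow w ε)⁻¹ = bpow w (!ε) := by cases ε <;> simp [bpow]

lemma bpow_mul_opp (w : FreeGroup (MLetter n)) (ε : Bool) :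
    bpow w ε * bpow w (!ε) = 1 := by cases ε <;> simp [bpow]

lemma mk_cons (x : MLetter n × Bool) (L : List (MLetter n × Bool)) :
    mk (x :: L) = mk [x] * mk L := by rw [mul_mk]; rfl

lemma mk_single_true (c : MLetter n) : mk [(c, true)] = (of c : FreeGroup (MLetter n)) := rfl

lemma mk_single_false (c : MLetter n) :
    mk [(c, false)] = (of c : FreeGroup (MLetter n))⁻¹ := by
  rw [← mk_single_true, inv_mk]; rfl

lemma phiM_of_inl (y : MLetter n) (ε : Bool) (a : Fin n) :
    phiM n η y ε (of (Sum.inl a)) = bpow (vWord n η y a) ε * of (Sum.inl a) :=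
  lift_apply_of

lemma phiM_of_inr (y : MLetter n) (ε : Bool) (i : Fin 2) :
    phiM n η y ε (of (Sum.inr i)) = of (Sum.inr i) :=
  lift_apply_of

lemma phiM_vWord (y y' : MLetter n) (ε : Bool) (a' : Fin n) :
    phiM n η y ε (vWord n η y' a') = vWord n η y' a' := by
  unfold vWord bb1 bb2
  simp [_root_.map_mul, _root_.map_pow, phiM_of_inr]

lemma phiM_bpow (y : MLetter n) (ε ε' : Bool) (w : FreeGroup (MLetter n)) :
    phiM n η y ε (bpow w ε') = bpow (phiM n η y ε w) ε' := by
  cases ε' <;> simp [bpow]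

lemma phiM_phiM (y : MLetter n) (ε : Bool) (w : FreeGroup (MLetter n)) :
    phiM n η y (!ε) (phiM n η y ε w) = w := by
  have hcomp : (phiM n η y (!ε)).comp (phiM n η y ε) = MonoidHom.id _ := by
    apply ext_hom
    intro x
    rcases x with a | i
    · rw [MonoidHom.comp_apply, phiM_of_inl, _root_.map_mul, phiM_bpow, phiM_vWord, phiM_of_inl,
        MonoidHom.id_apply, ← mul_assoc, bpow_mul_opp, one_mul]
    · rw [MonoidHom.comp_apply, phiM_of_inr, phiM_of_inr, MonoidHom.id_apply]
  calc phiM n η y (!ε) (phiM n η y ε w)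
      = ((phiM n η y (!ε)).comp (phiM n η y ε)) w := rfl
    _ = w := by rw [hcomp]; rfl

lemma aCount_phiM_mk_le (y : MLetter n) (ε : Bool) (L : List (MLetter n × Bool)) :
    aCount n (phiM n η y ε (mk L)) ≤ cnt (fun x : MLetter n => x.isLeft) L := by
  induction L with
  | nil =>
    have : (mk [] : FreeGroup (MLetter n)) = 1 := rfl
    rw [this, _root_.map_one, aCount_one]; exact Nat.zero_le _
  | cons x L ih =>
    rw [mk_cons, _root_.map_mul]
    refine le_trans (aCount_mul_le _ _) ?_
    rw [cnt_cons]
    have hx : aCount n (phiM n η y ε (mk [x])) ≤ if (x.1 : MLetter n).isLeft then 1 else 0 := by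
      rcases x with ⟨c | i, s⟩
      · cases s
        · rw [mk_single_false, _root_.map_inv, aCount_inv, phiM_of_inl, aCount_mull0
            (by rw [aCount_bpow]; exact aCount_vWord η _ _), aCount_of_inl]
          simp
        · rw [mk_single_true, phiM_of_inl, aCount_mull0
            (by rw [aCount_bpow]; exact aCount_vWord η _ _), aCount_of_inl]
          simp
      · cases s
        · rw [mk_single_false, _root_.map_inv, aCount_inv, phiM_of_inr, aCount_of_inr]
          simp
        · rw [mk_single_true, phiM_of_inr, aCount_of_inr]
          simp
    omega

lemma aCount_phiM (y : MLetter n) (ε : Bool) (w : FreeGroup (MLetter n)) :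
    aCount n (phiM n η y ε w) = aCount n w := by
  have h1 : ∀ (ε' : Bool) (v : FreeGroup (MLetter n)),
      aCount n (phiM n η y ε' v) ≤ aCount n v := by
    intro ε' v
    have := aCount_phiM_mk_le η y ε' (toWord v)
    rwa [mk_toWord] at this
  refine le_antisymm (h1 ε w) ?_
  have h2 := h1 (!ε) (phiM n η y ε w)
  rwa [phiM_phiM] at h2

lemma phiM_fix_mk (y : MLetter n) (ε : Bool) (L : List (MLetter n × Bool))
    (hL : ∀ p ∈ L, (p.1 : MLetter n).isRight = true) :
    phiM n η y ε (mk L) = mk L := by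
  induction L with
  | nil => exact _root_.map_one _
  | cons x L ih =>
    rw [mk_cons, _root_.map_mul, ih (fun p hp => hL p (List.mem_cons_of_mem x hp))]
    congr 1
    rcases x with ⟨c | i, s⟩
    · exact absurd (hL (Sum.inl c, s) List.mem_cons_self) (by simp)
    · cases s
      · rw [mk_single_false, _root_.map_inv, phiM_of_inr]
      · rw [mk_single_true, phiM_of_inr]

lemma bletters_of_aCount0 {t : FreeGroup (MLetter n)} (ht : aCount n t = 0) :
    ∀ p ∈ toWord t, (p.1 : MLetter n).isRight = true := by
  intro p hp
  have : (toWord t).filter (fun p => (p.1 : MLetter n).isLeft) = [] :=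
    List.length_eq_zero_iff.1 ht
  have h2 := List.filter_eq_nil_iff.1 this p hp
  rcases p with ⟨c, s⟩
  rcases c with a | i
  · simp at h2
  · simp

lemma phiM_fix (y : MLetter n) (ε : Bool) {t : FreeGroup (MLetter n)}
    (ht : aCount n t = 0) : phiM n η y ε t = t := by
  have := phiM_fix_mk η y ε (toWord t) (bletters_of_aCount0 ht)
  rwa [mk_toWord] at this
/-! ### v-words as explicit lists -/

section VW

@[simp] lemma bpow_true (w : FreeGroup (MLetter n)) : bpow w true = w := rfl
@[simp] lemma bpow_false (w : FreeGroup (MLetter n)) : bpow w false = w⁻¹ := rfl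

def c0 : MLetter n := Sum.inr 0
def c1 : MLetter n := Sum.inr 1

lemma c0_ne_c1 : (c0 : MLetter n) ≠ c1 := by simp [c0, c1]

lemma c1_ne_c0 : (c1 : MLetter n) ≠ c0 := by simp [c0, c1]

def listV (k j : ℕ) : List (MLetter n × Bool) :=
  rep (c0 : MLetter n) k true ++ alt c1 c0 j true ++ rep c1 k true

def listVinv (k j : ℕ) : List (MLetter n × Bool) :=
  rep (c1 : MLetter n) k false ++ alt c0 c1 j false ++ rep c0 k false

lemma mk_listV (k j : ℕ) :
    mk (listV k j) = bb1 n ^ k * (bb2 n * bb1 n) ^ j * bb2 n ^ k := by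
  rw [listV, ← mul_mk, ← mul_mk, mk_rep_true, mk_rep_true, mk_alt_true]
  rfl

lemma mk_listVinv (k j : ℕ) :
    mk (listVinv k j) = (bb1 n ^ k * (bb2 n * bb1 n) ^ j * bb2 n ^ k)⁻¹ := by
  rw [listVinv, ← mul_mk, ← mul_mk, mk_rep_false, mk_rep_false, mk_alt_false]
  show (bb2 n ^ k)⁻¹ * ((bb2 n * bb1 n) ^ j)⁻¹ * (bb1 n ^ k)⁻¹ = _
  group

lemma mem_listV {k j : ℕ} {p : MLetter n × Bool} (h : p ∈ listV k j) : p.2 = true := by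
  rcases List.mem_append.1 h with h | h
  · rcases List.mem_append.1 h with h | h
    · exact mem_rep h
    · exact mem_alt h
  · exact mem_rep h

lemma mem_listVinv {k j : ℕ} {p : MLetter n × Bool} (h : p ∈ listVinv k j) : p.2 = false := by
  rcases List.mem_append.1 h with h | h
  · rcases List.mem_append.1 h with h | h
    · exact mem_rep h
    · exact mem_alt h
  · exact mem_rep h

lemma kVal_pos (y : MLetter n) (a : Fin n) : kVal n η y a ≠ 0 := Nat.succ_ne_zero _

lemma kVal_le (y : MLetter n) (a : Fin n) : kVal n η y a ≤ n * (n + 2) :=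
  Nat.succ_le_of_lt (η (y, a)).isLt

lemma Msub_pos (hn : 0 < n) (y : MLetter n) (a : Fin n) :
    2 * n * (n + 2) - kVal n η y a ≠ 0 := by
  have h1 := kVal_le η y a
  have h2 : n * (n + 2) + n * (n + 2) = 2 * n * (n + 2) := by ring
  have h3 : 1 ≤ n * (n + 2) := Nat.one_le_iff_ne_zero.2 (by positivity)
  omega

lemma kVal_inj {y y' : MLetter n} {a a' : Fin n}
    (h : kVal n η y a = kVal n η y' a') : y = y' ∧ a = a' := by
  have : η (y, a) = η (y', a') := Fin.ext (by simpa [kVal] using h)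
  have := η.injective this
  exact ⟨congrArg Prod.fst this, congrArg Prod.snd this⟩

lemma mk_listV_v (hn : 0 < n) (y : MLetter n) (a : Fin n) :
    mk (listV (kVal n η y a) (2 * n * (n + 2) - kVal n η y a)) = vWord n η y a := by
  rw [mk_listV]; rfl

lemma mk_listVinv_v (hn : 0 < n) (y : MLetter n) (a : Fin n) :
    mk (listVinv (kVal n η y a) (2 * n * (n + 2) - kVal n η y a)) = (vWord n η y a)⁻¹ := by
  rw [mk_listVinv]; rfl

lemma junc_helper {l₁ l₂ : List (MLetter n × Bool)} {p q : MLetter n × Bool}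
    (h₁ : l₁.getLast? = some p) (h₂ : l₂.head? = some q) (h : NC p q) :
    ∀ x ∈ l₁.getLast?, ∀ y ∈ l₂.head?, NC x y := by
  intro x hx y hy
  rw [h₁, Option.mem_def, Option.some_inj] at hx
  rw [h₂, Option.mem_def, Option.some_inj] at hy
  subst hx; subst hy; exact h

/-! ### the suffix invariant -/

def pre (a : Fin n) (b : Fin 2) (ε : Bool) : List (MLetter n × Bool) :=
  if ε then rep (c1 : MLetter n) (kVal n η (Sum.inr b) a) false ++ [(c0, false)]
  else rep (c0 : MLetter n) (kVal n η (Sum.inr b) a) true ++ [(c1, true)]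

lemma pre_true (a : Fin n) (b : Fin 2) :
    pre η a b true = rep (c1 : MLetter n) (kVal n η (Sum.inr b) a) false ++ [(c0, false)] := by
  simp [pre]

lemma pre_false (a : Fin n) (b : Fin 2) :
    pre η a b false = rep (c0 : MLetter n) (kVal n η (Sum.inr b) a) true ++ [(c1, true)] := by
  simp [pre]

lemma pre_ne_nil (a : Fin n) (b : Fin 2) (ε : Bool) : pre η a b ε ≠ [] := by
  cases ε
  · rw [pre_false]; simp
  · rw [pre_true]; simp

lemma pre_getLast?_true (a : Fin n) (b : Fin 2) :
    (pre η a b true).getLast? = some ((c0 : MLetter n), false) := by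
  rw [pre_true]; exact List.getLast?_concat

lemma pre_getLast?_false (a : Fin n) (b : Fin 2) :
    (pre η a b false).getLast? = some ((c1 : MLetter n), true) := by
  rw [pre_false]; exact List.getLast?_concat

lemma pre_head?_true (a : Fin n) (b : Fin 2) :
    (pre η a b true).head? = some ((c1 : MLetter n), false) := by
  rw [pre_true, head?_append_left (rep_ne_nil (kVal_pos η _ _)), head?_rep (kVal_pos η _ _)]

lemma pre_head?_false (a : Fin n) (b : Fin 2) :
    (pre η a b false).head? = some ((c0 : MLetter n), true) := by
  rw [pre_false, head?_append_left (rep_ne_nil (kVal_pos η _ _)), head?_rep (kVal_pos η _ _)]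

lemma mk_pre_true (a : Fin n) (b : Fin 2) :
    mk (pre η a b true) = (bb2 n ^ kVal n η (Sum.inr b) a)⁻¹ * (bb1 n)⁻¹ := by
  rw [pre_true, ← mul_mk, mk_rep_false, mk_single_false']
  rfl

lemma mk_pre_false (a : Fin n) (b : Fin 2) :
    mk (pre η a b false) = bb1 n ^ kVal n η (Sum.inr b) a * bb2 n := by
  rw [pre_false, ← mul_mk, mk_rep_true, mk_single_true']
  rfl

def GoodU (a : Fin n) (b : Fin 2) (ε : Bool) (u : FreeGroup (MLetter n)) : Prop :=
  ∃ L, L ≠ [] ∧ toWord u = pre η a b ε ++ L ∧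
    L.getLast? = some ((Sum.inr b : MLetter n), !ε)

lemma GoodU.ne_one {a : Fin n} {b : Fin 2} {ε : Bool} {u : FreeGroup (MLetter n)}
    (h : GoodU η a b ε u) : u ≠ 1 := by
  obtain ⟨L, hL0, hTW, _⟩ := h
  intro hu
  rw [hu, toWord_one] at hTW
  exact pre_ne_nil η a b ε (List.append_eq_nil_iff.1 hTW.symm).1

lemma goodU_base (hn : 0 < n) (a : Fin n) (b : Fin 2) (ε : Bool) :
    GoodU η a b ε
      (bpow (vWord n η (Sum.inr b) a) (!ε) * bpow (of (Sum.inr b)) (!ε)) := by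
  set κ := kVal n η (Sum.inr b) a with hκdef
  obtain ⟨j, hj⟩ := Nat.exists_eq_succ_of_ne_zero (Msub_pos η hn (Sum.inr b) a)
  cases ε
  · -- ε = false : positive word
    have helem : bpow (vWord n η (Sum.inr b) a) (!false) * bpow (of (Sum.inr b)) (!false)
        = mk (listV κ (2 * n * (n + 2) - κ) ++ [(Sum.inr b, true)]) := by
      rw [← mul_mk, mk_listV_v η hn, mk_single_true']
      simp
    have hchain : (listV κ (2 * n * (n + 2) - κ) ++ [((Sum.inr b : MLetter n), true)]).Chain' NC := by
      apply chain'_allbool (s := true)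
      intro p hp
      rcases List.mem_append.1 hp with h | h
      · exact mem_listV h
      · simp at h; rw [h]
    have hTW : toWord (bpow (vWord n η (Sum.inr b) a) (!false) * bpow (of (Sum.inr b)) (!false))
        = listV κ (2 * n * (n + 2) - κ) ++ [(Sum.inr b, true)] := by
      rw [helem, toWord_mk_of_chain' hchain]
    refine ⟨(c0, true) :: (alt c1 c0 j true ++ rep c1 κ true) ++ [(Sum.inr b, true)],
      by simp, ?_, by rw [List.getLast?_concat]; rfl⟩
    rw [hTW, pre_false, listV, hj, alt_succ]
    simp [List.append_assoc, hκdef]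
  · -- ε = true : negative word
    have helem : bpow (vWord n η (Sum.inr b) a) (!true) * bpow (of (Sum.inr b)) (!true)
        = mk (listVinv κ (2 * n * (n + 2) - κ) ++ [(Sum.inr b, false)]) := by
      rw [← mul_mk, mk_listVinv_v η hn, mk_single_false']
      simp
    have hchain : (listVinv κ (2 * n * (n + 2) - κ) ++ [((Sum.inr b : MLetter n), false)]).Chain' NC := by
      apply chain'_allbool (s := false)
      intro p hp
      rcases List.mem_append.1 hp with h | h
      · exact mem_listVinv h
      · simp at h; rw [h]
    have hTW : toWord (bpow (vWord n η (Sum.inr b) a) (!true) * bpow (of (Sum.inr b)) (!true))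
        = listVinv κ (2 * n * (n + 2) - κ) ++ [(Sum.inr b, false)] := by
      rw [helem, toWord_mk_of_chain' hchain]
    refine ⟨(c1, false) :: (alt c0 c1 j false ++ rep c0 κ false) ++ [(Sum.inr b, false)],
      by simp, ?_, by rw [List.getLast?_concat]; rfl⟩
    rw [hTW, pre_true, listVinv, hj, alt_succ]
    simp [List.append_assoc, hκdef]

end VW

section StepLemma

lemma bb1_eq : bb1 n = of (c0 : MLetter n) := rfl
lemma bb2_eq : bb2 n = of (c1 : MLetter n) := rfl

lemma goodU_step (hn : 0 < n) {a : Fin n} {b b' : Fin 2} {ε ε' : Bool}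
    {u : FreeGroup (MLetter n)} (hg : GoodU η a b ε u)
    (hbe : ¬(b' = b ∧ ε' = !ε)) :
    GoodU η a b' ε'
      (bpow (vWord n η (Sum.inr b') a) (!ε') * (u * bpow (of (Sum.inr b')) (!ε'))) := by
  obtain ⟨L, hL0, hTW, hLast⟩ := hg
  have hchainU := chain'_toWord u
  rw [hTW] at hchainU
  have hchainL : L.Chain' NC := (List.isChain_append.1 hchainU).2.1
  have hjunc := (List.isChain_append.1 hchainU).2.2
  obtain ⟨j, hj⟩ := Nat.exists_eq_succ_of_ne_zero (Msub_pos η hn (Sum.inr b') a)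
  have hUne : toWord u ≠ [] := by
    rw [hTW]; intro hc; exact hL0 (List.append_eq_nil_iff.1 hc).2
  have hu : u = mk (pre η a b ε) * mk L := by rw [mul_mk, ← hTW, mk_toWord]
  have hV : vWord n η (Sum.inr b') a
      = of (c0 : MLetter n) ^ kVal n η (Sum.inr b') a
        * (of (c1 : MLetter n) * of (c0 : MLetter n)) ^ (2 * n * (n + 2) - kVal n η (Sum.inr b') a)
        * of (c1 : MLetter n) ^ kVal n η (Sum.inr b') a := rfl
  cases ε
  · -- ε = false : toWord u = pre false ++ L, last of L is (inr b, true)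
    have hjuncL : ∀ y ∈ L.head?, NC ((c1 : MLetter n), true) y := by
      intro y hy
      refine hjunc _ ?_ y hy
      rw [pre_getLast?_false]; rfl
    cases ε'
    · -- ε' = false : same sign (positive), prepend full listV
      simp only [Bool.not_false, bpow_true]
      have helem : vWord n η (Sum.inr b') a * (u * of (Sum.inr b'))
          = mk (listV (kVal n η (Sum.inr b') a) (2 * n * (n + 2) - kVal n η (Sum.inr b') a)
              ++ (toWord u ++ [(Sum.inr b', true)])) := by
        rw [← mul_mk, ← mul_mk, mk_listV_v η hn, mk_toWord, mk_single_true']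
      have hchain : Chain' NC (listV (kVal n η (Sum.inr b') a)
          (2 * n * (n + 2) - kVal n η (Sum.inr b') a) ++ (toWord u ++ [(Sum.inr b', true)])) := by
        apply List.IsChain.append
        · exact chain'_allbool (s := true) fun p hp => mem_listV hp
        · apply List.IsChain.append (chain'_toWord u) (List.isChain_singleton _)
          refine junc_helper (p := ((Sum.inr b : MLetter n), true)) ?_ rfl
            (nc_of_same_bool rfl)
          rw [hTW, List.getLast?_append_of_ne_nil _ hL0]
          exact hLast
        · refine junc_helper (p := ((c1 : MLetter n), true)) (q := ((c0 : MLetter n), true))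
            ?_ ?_ (nc_of_same_bool rfl)
          · rw [listV, List.getLast?_append_of_ne_nil _ (rep_ne_nil (kVal_pos η _ _)),
              getLast?_rep (kVal_pos η _ _)]
          · rw [head?_append_left hUne, hTW, head?_append_left (pre_ne_nil η a b false),
              pre_head?_false]
      refine ⟨((c0, true) :: (alt c1 c0 j true ++ rep c1 (kVal n η (Sum.inr b') a) true
          ++ toWord u)) ++ [(Sum.inr b', true)], by simp, ?_, by rw [List.getLast?_concat]; rfl⟩
      rw [helem, toWord_mk_of_chain' hchain, pre_false, listV, hj, alt_succ]
      simp [List.append_assoc]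
    · -- ε' = true : sign change, b' ≠ b, κ' ≠ κ
      have hbb : b' ≠ b := fun h => hbe ⟨h, by simp⟩
      have hκne : kVal n η (Sum.inr b') a ≠ kVal n η (Sum.inr b) a := by
        intro h
        exact hbb (Sum.inr_injective (kVal_inj η h).1)
      simp only [Bool.not_true, bpow_false]
      have hCL : Chain' NC (L ++ [((Sum.inr b' : MLetter n), false)]) := by
        apply List.IsChain.append hchainL (List.isChain_singleton _)
        exact junc_helper hLast rfl (nc_of_ne_fst (by simp [hbb]))
      rcases Nat.lt_or_gt_of_ne hκne with hlt | hgt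
      · -- κ' < κ
        obtain ⟨j₂, hj₂⟩ : ∃ j₂, kVal n η (Sum.inr b) a
            = kVal n η (Sum.inr b') a + (j₂ + 1) := ⟨kVal n η (Sum.inr b) a
              - kVal n η (Sum.inr b') a - 1, by omega⟩
        have helem : (vWord n η (Sum.inr b') a)⁻¹ * (u * (of (Sum.inr b'))⁻¹)
            = mk ((rep (c1 : MLetter n) (kVal n η (Sum.inr b') a) false
                ++ alt c0 c1 (2 * n * (n + 2) - kVal n η (Sum.inr b') a) false)
              ++ ((rep (c0 : MLetter n) (j₂ + 1) true ++ [((c1 : MLetter n), true)])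
                ++ (L ++ [(Sum.inr b', false)]))) := by
          rw [← mul_mk, ← mul_mk, ← mul_mk, ← mul_mk, ← mul_mk,
            mk_rep_false, mk_alt_false, mk_rep_true, mk_single_true', mk_single_false',
            hu, mk_pre_false, hV, bb1_eq, bb2_eq, hj₂, pow_add]
          group
        have hchain : Chain' NC ((rep (c1 : MLetter n) (kVal n η (Sum.inr b') a) false
                ++ alt c0 c1 (2 * n * (n + 2) - kVal n η (Sum.inr b') a) false)
              ++ ((rep (c0 : MLetter n) (j₂ + 1) true ++ [((c1 : MLetter n), true)])
                ++ (L ++ [(Sum.inr b', false)]))) := by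
          apply List.IsChain.append
          · apply chain'_allbool (s := false)
            intro p hp
            rcases List.mem_append.1 hp with h | h
            · exact mem_rep h
            · exact mem_alt h
          · apply List.IsChain.append
            · apply chain'_allbool (s := true)
              intro p hp
              rcases List.mem_append.1 hp with h | h
              · exact mem_rep h
              · simp at h; rw [h]
            · exact hCL
            · intro x hx y hy
              rw [List.getLast?_append_of_ne_nil _ (by simp), List.getLast?_singleton,
                Option.mem_def, Option.some_inj] at hx
              rw [head?_append_left hL0] at hy
              subst hx
              exact hjuncL y hy
          · refine junc_helper (p := ((c1 : MLetter n), false)) (q := ((c0 : MLetter n), true))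
              ?_ ?_ (nc_of_ne_fst c0_ne_c1)
            · rw [List.getLast?_append_of_ne_nil _ (alt_ne_nil (by omega)),
                getLast?_alt (by omega)]
            · have hne : rep (c0 : MLetter n) (j₂ + 1) true ++ [((c1 : MLetter n), true)] ≠ [] := by
                simp
              rw [head?_append_left hne, head?_append_left (rep_ne_nil (Nat.succ_ne_zero _)),
                head?_rep (Nat.succ_ne_zero _)]
        refine ⟨((c1, false) :: (alt c0 c1 j false
            ++ (rep (c0 : MLetter n) (j₂ + 1) true ++ [((c1 : MLetter n), true)]) ++ L))
            ++ [(Sum.inr b', false)], by simp, ?_, by rw [List.getLast?_concat]; rfl⟩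
        rw [helem, toWord_mk_of_chain' hchain, pre_true, hj, alt_succ]
        simp [List.append_assoc]
      · -- κ' > κ
        obtain ⟨j₂, hj₂⟩ : ∃ j₂, kVal n η (Sum.inr b') a
            = kVal n η (Sum.inr b) a + (j₂ + 1) := ⟨kVal n η (Sum.inr b') a
              - kVal n η (Sum.inr b) a - 1, by omega⟩
        have helem : (vWord n η (Sum.inr b') a)⁻¹ * (u * (of (Sum.inr b'))⁻¹)
            = mk ((rep (c1 : MLetter n) (kVal n η (Sum.inr b') a) false
                ++ alt c0 c1 (2 * n * (n + 2) - kVal n η (Sum.inr b') a) false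
                ++ rep (c0 : MLetter n) (j₂ + 1) false)
              ++ ([((c1 : MLetter n), true)] ++ (L ++ [(Sum.inr b', false)]))) := by
          rw [← mul_mk, ← mul_mk, ← mul_mk, ← mul_mk, ← mul_mk,
            mk_rep_false, mk_alt_false, mk_rep_false, mk_single_true', mk_single_false',
            hu, mk_pre_false, hV, bb1_eq, bb2_eq, hj₂, pow_add]
          group
        have hchain : Chain' NC ((rep (c1 : MLetter n) (kVal n η (Sum.inr b') a) false
                ++ alt c0 c1 (2 * n * (n + 2) - kVal n η (Sum.inr b') a) false
                ++ rep (c0 : MLetter n) (j₂ + 1) false)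
              ++ ([((c1 : MLetter n), true)] ++ (L ++ [(Sum.inr b', false)]))) := by
          apply List.IsChain.append
          · apply chain'_allbool (s := false)
            intro p hp
            rcases List.mem_append.1 hp with h | h
            · rcases List.mem_append.1 h with h2 | h2
              · exact mem_rep h2
              · exact mem_alt h2
            · exact mem_rep h
          · apply List.IsChain.append (List.isChain_singleton _) hCL
            intro x hx y hy
            simp only [List.getLast?_singleton, Option.mem_def, Option.some_inj] at hx
            rw [head?_append_left hL0] at hy
            subst hx
            exact hjuncL y hy
          · refine junc_helper (p := ((c0 : MLetter n), false)) (q := ((c1 : MLetter n), true))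
              ?_ rfl (nc_of_ne_fst c1_ne_c0)
            rw [List.getLast?_append_of_ne_nil _ (rep_ne_nil (Nat.succ_ne_zero _)),
              getLast?_rep (Nat.succ_ne_zero _)]
        refine ⟨((c1, false) :: (alt c0 c1 j false ++ rep (c0 : MLetter n) (j₂ + 1) false
            ++ [((c1 : MLetter n), true)] ++ L))
            ++ [(Sum.inr b', false)], by simp, ?_, by rw [List.getLast?_concat]; rfl⟩
        rw [helem, toWord_mk_of_chain' hchain, pre_true, hj, alt_succ]
        simp [List.append_assoc]
  · -- ε = true : toWord u = pre true ++ L, last of L is (inr b, false)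
    have hjuncL : ∀ y ∈ L.head?, NC ((c0 : MLetter n), false) y := by
      intro y hy
      refine hjunc _ ?_ y hy
      rw [pre_getLast?_true]; rfl
    cases ε'
    · -- ε' = false : sign change, b' ≠ b
      have hbb : b' ≠ b := fun h => hbe ⟨h, by simp⟩
      have hκne : kVal n η (Sum.inr b') a ≠ kVal n η (Sum.inr b) a := by
        intro h
        exact hbb (Sum.inr_injective (kVal_inj η h).1)
      simp only [Bool.not_false, bpow_true]
      have hCL : Chain' NC (L ++ [((Sum.inr b' : MLetter n), true)]) := by
        apply List.IsChain.append hchainL (List.isChain_singleton _)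
        exact junc_helper hLast rfl (nc_of_ne_fst (by simp [hbb]))
      rcases Nat.lt_or_gt_of_ne hκne with hlt | hgt
      · -- κ' < κ
        obtain ⟨j₂, hj₂⟩ : ∃ j₂, kVal n η (Sum.inr b) a
            = kVal n η (Sum.inr b') a + (j₂ + 1) := ⟨kVal n η (Sum.inr b) a
              - kVal n η (Sum.inr b') a - 1, by omega⟩
        have helem : vWord n η (Sum.inr b') a * (u * of (Sum.inr b'))
            = mk ((rep (c0 : MLetter n) (kVal n η (Sum.inr b') a) true
                ++ alt c1 c0 (2 * n * (n + 2) - kVal n η (Sum.inr b') a) true)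
              ++ ((rep (c1 : MLetter n) (j₂ + 1) false ++ [((c0 : MLetter n), false)])
                ++ (L ++ [(Sum.inr b', true)]))) := by
          rw [← mul_mk, ← mul_mk, ← mul_mk, ← mul_mk, ← mul_mk,
            mk_rep_true, mk_alt_true, mk_rep_false, mk_single_false', mk_single_true',
            hu, mk_pre_true, hV, bb1_eq, bb2_eq, hj₂, pow_add]
          group
        have hchain : Chain' NC ((rep (c0 : MLetter n) (kVal n η (Sum.inr b') a) true
                ++ alt c1 c0 (2 * n * (n + 2) - kVal n η (Sum.inr b') a) true)
              ++ ((rep (c1 : MLetter n) (j₂ + 1) false ++ [((c0 : MLetter n), false)])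
                ++ (L ++ [(Sum.inr b', true)]))) := by
          apply List.IsChain.append
          · apply chain'_allbool (s := true)
            intro p hp
            rcases List.mem_append.1 hp with h | h
            · exact mem_rep h
            · exact mem_alt h
          · apply List.IsChain.append
            · apply chain'_allbool (s := false)
              intro p hp
              rcases List.mem_append.1 hp with h | h
              · exact mem_rep h
              · simp at h; rw [h]
            · exact hCL
            · intro x hx y hy
              rw [List.getLast?_append_of_ne_nil _ (by simp), List.getLast?_singleton,
                Option.mem_def, Option.some_inj] at hx
              rw [head?_append_left hL0] at hy
              subst hx
              exact hjuncL y hy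
          · refine junc_helper (p := ((c0 : MLetter n), true)) (q := ((c1 : MLetter n), false))
              ?_ ?_ (nc_of_ne_fst c1_ne_c0)
            · rw [List.getLast?_append_of_ne_nil _ (alt_ne_nil (by omega)),
                getLast?_alt (by omega)]
            · have hne : rep (c1 : MLetter n) (j₂ + 1) false ++ [((c0 : MLetter n), false)] ≠ [] := by
                simp
              rw [head?_append_left hne, head?_append_left (rep_ne_nil (Nat.succ_ne_zero _)),
                head?_rep (Nat.succ_ne_zero _)]
        refine ⟨((c0, true) :: (alt c1 c0 j true
            ++ (rep (c1 : MLetter n) (j₂ + 1) false ++ [((c0 : MLetter n), false)]) ++ L))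
            ++ [(Sum.inr b', true)], by simp, ?_, by rw [List.getLast?_concat]; rfl⟩
        rw [helem, toWord_mk_of_chain' hchain, pre_false, hj, alt_succ]
        simp [List.append_assoc]
      · -- κ' > κ
        obtain ⟨j₂, hj₂⟩ : ∃ j₂, kVal n η (Sum.inr b') a
            = kVal n η (Sum.inr b) a + (j₂ + 1) := ⟨kVal n η (Sum.inr b') a
              - kVal n η (Sum.inr b) a - 1, by omega⟩
        have helem : vWord n η (Sum.inr b') a * (u * of (Sum.inr b'))
            = mk ((rep (c0 : MLetter n) (kVal n η (Sum.inr b') a) true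
                ++ alt c1 c0 (2 * n * (n + 2) - kVal n η (Sum.inr b') a) true
                ++ rep (c1 : MLetter n) (j₂ + 1) true)
              ++ ([((c0 : MLetter n), false)] ++ (L ++ [(Sum.inr b', true)]))) := by
          rw [← mul_mk, ← mul_mk, ← mul_mk, ← mul_mk, ← mul_mk,
            mk_rep_true, mk_alt_true, mk_rep_true, mk_single_false', mk_single_true',
            hu, mk_pre_true, hV, bb1_eq, bb2_eq, hj₂, pow_add]
          group
        have hchain : Chain' NC ((rep (c0 : MLetter n) (kVal n η (Sum.inr b') a) true
                ++ alt c1 c0 (2 * n * (n + 2) - kVal n η (Sum.inr b') a) true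
                ++ rep (c1 : MLetter n) (j₂ + 1) true)
              ++ ([((c0 : MLetter n), false)] ++ (L ++ [(Sum.inr b', true)]))) := by
          apply List.IsChain.append
          · apply chain'_allbool (s := true)
            intro p hp
            rcases List.mem_append.1 hp with h | h
            · rcases List.mem_append.1 h with h2 | h2
              · exact mem_rep h2
              · exact mem_alt h2
            · exact mem_rep h
          · apply List.IsChain.append (List.isChain_singleton _) hCL
            intro x hx y hy
            simp only [List.getLast?_singleton, Option.mem_def, Option.some_inj] at hx
            rw [head?_append_left hL0] at hy
            subst hx
            exact hjuncL y hy
          · refine junc_helper (p := ((c1 : MLetter n), true)) (q := ((c0 : MLetter n), false))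
              ?_ rfl (nc_of_ne_fst c0_ne_c1)
            rw [List.getLast?_append_of_ne_nil _ (rep_ne_nil (Nat.succ_ne_zero _)),
              getLast?_rep (Nat.succ_ne_zero _)]
        refine ⟨((c0, true) :: (alt c1 c0 j true ++ rep (c1 : MLetter n) (j₂ + 1) true
            ++ [((c0 : MLetter n), false)] ++ L))
            ++ [(Sum.inr b', true)], by simp, ?_, by rw [List.getLast?_concat]; rfl⟩
        rw [helem, toWord_mk_of_chain' hchain, pre_false, hj, alt_succ]
        simp [List.append_assoc]
    · -- ε' = true : same sign (negative), prepend full listVinv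
      simp only [Bool.not_true, bpow_false]
      have helem : (vWord n η (Sum.inr b') a)⁻¹ * (u * (of (Sum.inr b'))⁻¹)
          = mk (listVinv (kVal n η (Sum.inr b') a) (2 * n * (n + 2) - kVal n η (Sum.inr b') a)
              ++ (toWord u ++ [(Sum.inr b', false)])) := by
        rw [← mul_mk, ← mul_mk, mk_listVinv_v η hn, mk_toWord, mk_single_false']
      have hchain : Chain' NC (listVinv (kVal n η (Sum.inr b') a)
          (2 * n * (n + 2) - kVal n η (Sum.inr b') a) ++ (toWord u ++ [(Sum.inr b', false)])) := by
        apply List.IsChain.append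
        · exact chain'_allbool (s := false) fun p hp => mem_listVinv hp
        · apply List.IsChain.append (chain'_toWord u) (List.isChain_singleton _)
          refine junc_helper (p := ((Sum.inr b : MLetter n), false)) ?_ rfl
            (nc_of_same_bool rfl)
          rw [hTW, List.getLast?_append_of_ne_nil _ hL0]
          exact hLast
        · refine junc_helper (p := ((c0 : MLetter n), false)) (q := ((c1 : MLetter n), false))
            ?_ ?_ (nc_of_same_bool rfl)
          · rw [listVinv, List.getLast?_append_of_ne_nil _ (rep_ne_nil (kVal_pos η _ _)),
              getLast?_rep (kVal_pos η _ _)]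
          · rw [head?_append_left hUne, hTW, head?_append_left (pre_ne_nil η a b true),
              pre_head?_true]
      refine ⟨((c1, false) :: (alt c0 c1 j false ++ rep c0 (kVal n η (Sum.inr b') a) false
          ++ toWord u)) ++ [(Sum.inr b', false)], by simp, ?_, by rw [List.getLast?_concat]; rfl⟩
      rw [helem, toWord_mk_of_chain' hchain, pre_true, listVinv, hj, alt_succ]
      simp [List.append_assoc]

end StepLemma



section EndsLemmas

lemma isLeft_inl (a : Fin n) : (fun x : MLetter n => x.isLeft) (Sum.inl a, true).1 = true := rfl

lemma ends_of_aCount_succ {a : Fin n} {s : Bool} {w : FreeGroup (MLetter n)}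
    (h : aCount n (w * mk [(Sum.inl a, s)]) = aCount n w + 1) :
    Ends (w * mk [(Sum.inl a, s)]) (Sum.inl a, s) := by
  refine ends_of_cntW_succ (fun x : MLetter n => x.isLeft) (x := (Sum.inl a, s)) rfl ?_
  rw [← aCount_eq, ← aCount_eq]
  exact h

lemma aCount_succ_of_not_ends {a : Fin n} {s : Bool} {w : FreeGroup (MLetter n)}
    (h : ¬ Ends w (Sum.inl a, !s)) :
    aCount n (w * mk [(Sum.inl a, s)]) = aCount n w + 1 := by
  rw [aCount_eq, aCount_eq]
  exact cntW_succ_of_not_ends (fun x : MLetter n => x.isLeft) (x := (Sum.inl a, s)) rfl h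

lemma aCount_pred_of_ends {a : Fin n} {s : Bool} {w : FreeGroup (MLetter n)}
    (h : Ends w (Sum.inl a, !s)) :
    aCount n (w * mk [(Sum.inl a, s)]) + 1 = aCount n w ∧
      toWord w = toWord (w * mk [(Sum.inl a, s)]) ++ [(Sum.inl a, !s)] := by
  have := cntW_pred_of_ends (fun x : MLetter n => x.isLeft) (x := (Sum.inl a, s)) rfl h
  exact ⟨by rw [aCount_eq, aCount_eq]; exact this.1, this.2⟩

lemma of_inl_eq_mk (a : Fin n) :
    (of (Sum.inl a) : FreeGroup (MLetter n)) = mk [(Sum.inl a, true)] := rfl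

lemma of_inl_inv_eq_mk (a : Fin n) :
    (of (Sum.inl a) : FreeGroup (MLetter n))⁻¹ = mk [(Sum.inl a, false)] :=
  (mk_single_false _).symm

lemma phi_ends_neg {h : FreeGroup (MLetter n)} {a : Fin n}
    (hE : Ends h (Sum.inl a, false)) (y : MLetter n) (ε : Bool) :
    ∃ h₂, phiM n η y ε h = h₂ * bpow (vWord n η y a) (!ε) ∧ Ends h₂ (Sum.inl a, false) ∧
      aCount n h₂ = aCount n h := by
  have hpred := aCount_pred_of_ends (s := true) (w := h) (a := a) (by simpa using hE)
  set h₀ := h * mk [(Sum.inl a, true)] with hh₀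
  have hh : h = h₀ * (of (Sum.inl a))⁻¹ := by
    rw [hh₀, ← of_inl_eq_mk, mul_assoc, mul_inv_cancel, mul_one]
  have hsplit : phiM n η y ε h
      = (phiM n η y ε h₀ * (of (Sum.inl a))⁻¹) * bpow (vWord n η y a) (!ε) := by
    conv_lhs => rw [hh]
    rw [_root_.map_mul, _root_.map_inv, phiM_of_inl, ← bpow_inv (vWord n η y a) ε,
      mul_inv_rev, ← mul_assoc]
  have hrw : phiM n η y ε h₀ * (of (Sum.inl a))⁻¹
      = phiM n η y ε h * (bpow (vWord n η y a) (!ε))⁻¹ := by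
    rw [hsplit, mul_assoc, mul_inv_cancel, mul_one]
  have hc2 : aCount n (phiM n η y ε h₀ * (of (Sum.inl a))⁻¹) = aCount n h := by
    rw [hrw, aCount_mulr0 (by rw [aCount_inv, aCount_bpow]; exact aCount_vWord η _ _),
      aCount_phiM]
  refine ⟨phiM n η y ε h₀ * (of (Sum.inl a))⁻¹, hsplit, ?_, hc2⟩
  have hc0 : aCount n (phiM n η y ε h₀) = aCount n h₀ := aCount_phiM η _ _ _
  rw [of_inl_inv_eq_mk]
  apply ends_of_aCount_succ
  rw [← of_inl_inv_eq_mk, hc2, hc0]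
  omega

lemma phi_ends_pos {h : FreeGroup (MLetter n)} {a : Fin n}
    (hE : Ends h (Sum.inl a, true)) (y : MLetter n) (ε : Bool) :
    Ends (phiM n η y ε h) (Sum.inl a, true) := by
  have hpred := aCount_pred_of_ends (s := false) (w := h) (a := a) (by simpa using hE)
  set h₀ := h * mk [(Sum.inl a, false)] with hh₀
  have hh : h = h₀ * of (Sum.inl a) := by
    rw [hh₀, ← of_inl_inv_eq_mk, mul_assoc, inv_mul_cancel, mul_one]
  have hphi : phiM n η y ε h
      = (phiM n η y ε h₀ * bpow (vWord n η y a) ε) * mk [(Sum.inl a, true)] := by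
    rw [hh, _root_.map_mul, phiM_of_inl, ← of_inl_eq_mk, ← mul_assoc]
  rw [hphi]
  apply ends_of_aCount_succ
  rw [← hphi, aCount_phiM,
    aCount_mulr0 (by rw [aCount_bpow]; exact aCount_vWord η _ _), aCount_phiM]
  omega

lemma append_A_letter {h z : FreeGroup (MLetter n)} {a : Fin n} {sa : Bool}
    (hE : Ends h (Sum.inl a, sa)) (hz : aCount n z = 0) (a' : Fin n) (s' : Bool)
    (hno : ¬(z = 1 ∧ a' = a ∧ s' = !sa)) :
    aCount n ((h * z) * mk [(Sum.inl a', s')]) = aCount n (h * z) + 1 := by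
  apply aCount_succ_of_not_ends
  intro hEnd
  have hletters : ∀ p ∈ toWord z, (fun x : MLetter n => x.isLeft) p.1 = false := by
    intro p hp
    have := bletters_of_aCount0 hz p hp
    rcases p with ⟨c | i, s⟩
    · simp at this
    · rfl
  have hTW := toWord_mul_of_ends (fun x : MLetter n => x.isLeft) hE rfl hletters
  rw [Ends, hTW] at hEnd
  rcases List.eq_nil_or_concat (toWord z) with hz0 | ⟨l, pl, hzl⟩
  · have hz1 : z = 1 := toWord_eq_nil_iff.1 hz0
    rw [hz0, List.append_nil] at hEnd
    rw [Ends] at hE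
    rw [hE, Option.some_inj] at hEnd
    have ha : a = a' := Sum.inl_injective (congrArg Prod.fst hEnd)
    have hs : sa = !s' := congrArg Prod.snd hEnd
    exact hno ⟨hz1, ha.symm, by rw [hs]; simp⟩
  · rw [List.concat_eq_append] at hzl
    rw [hzl, ← List.append_assoc, List.getLast?_concat, Option.some_inj] at hEnd
    have hmem : pl ∈ toWord z := by rw [hzl]; simp
    have := hletters pl hmem
    rw [hEnd] at this
    simp at this

end EndsLemmas

section Steps

lemma rho_inr (b : Fin 2) (ε : Bool) (w : FreeGroup (MLetter n)) :
    rhoM n η (Sum.inr b) ε w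
      = phiM n η (Sum.inr b) ε w * bpow (of (Sum.inr b)) (!ε) := by
  cases ε <;> simp [rhoM, bpow]

lemma rho_inl_true (a : Fin n) (w : FreeGroup (MLetter n)) :
    rhoM n η (Sum.inl a) true w
      = phiM n η (Sum.inl a) true w * mk [(Sum.inl a, false)] := by
  simp [rhoM, ← of_inl_inv_eq_mk]

lemma rho_inl_false (a : Fin n) (w : FreeGroup (MLetter n)) :
    rhoM n η (Sum.inl a) false w
      = (phiM n η (Sum.inl a) false w * (vWord n η (Sum.inl a) a)⁻¹)
        * mk [(Sum.inl a, true)] := by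
  simp [rhoM, ← of_inl_eq_mk]

lemma bstep_aCount (b : Fin 2) (ε : Bool) (w : FreeGroup (MLetter n)) :
    aCount n (rhoM n η (Sum.inr b) ε w) = aCount n w := by
  rw [rho_inr, aCount_mulr0 (by rw [aCount_bpow]; exact aCount_of_inr b), aCount_phiM]

lemma astep_aCount (a : Fin n) (ε : Bool) (w : FreeGroup (MLetter n)) :
    aCount n (rhoM n η (Sum.inl a) ε w) = aCount n w + 1 ∨
      aCount n (rhoM n η (Sum.inl a) ε w) + 1 = aCount n w := by
  cases ε
  · rw [rho_inl_false]
    set X := phiM n η (Sum.inl a) false w * (vWord n η (Sum.inl a) a)⁻¹ with hX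
    have hCX : aCount n X = aCount n w := by
      rw [hX, aCount_mulr0 (by rw [aCount_inv]; exact aCount_vWord η _ _), aCount_phiM]
    rcases cntW_mul_letter_cases (fun x : MLetter n => x.isLeft)
        (x := (Sum.inl a, true)) rfl X with ⟨h1, _⟩ | ⟨h1, _⟩
    · left; rw [aCount_eq, h1, ← aCount_eq, hCX]
    · right; rw [aCount_eq, ← hCX, aCount_eq]; exact h1
  · rw [rho_inl_true]
    set X := phiM n η (Sum.inl a) true w with hX
    have hCX : aCount n X = aCount n w := aCount_phiM η _ _ _
    rcases cntW_mul_letter_cases (fun x : MLetter n => x.isLeft)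
        (x := (Sum.inl a, false)) rfl X with ⟨h1, _⟩ | ⟨h1, _⟩
    · left; rw [aCount_eq, h1, ← aCount_eq, hCX]
    · right; rw [aCount_eq, ← hCX, aCount_eq]; exact h1

end Steps

section Key

lemma key_lemma (hn : 0 < n) {t : ℕ} {y : ℕ → MLetter n} {e : ℕ → Bool}
    {w : ℕ → FreeGroup (MLetter n)}
    (hcomp : IsComputation n η t y e w) (hred : ReducedHistory n t y e)
    {p q : ℕ} {a a' : Fin n} (hpq : p < q) (hq : q < t)
    (hyp : y p = Sum.inl a) (hyq : y q = Sum.inl a')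
    (hB : ∀ s, p < s → s < q → ∃ b, y s = Sum.inr b)
    (hinc : aCount n (w (p + 1)) = aCount n (w p) + 1) :
    aCount n (w (q + 1)) = aCount n (w q) + 1 := by
  have hwp1 := hcomp p (lt_trans hpq hq)
  rw [hyp] at hwp1
  have hwq := hcomp q hq
  rw [hyq] at hwq
  cases hep : e p
  · -- e p = false : positive ending
    rw [hep, rho_inl_false] at hwp1
    have hE1 : Ends (w (p + 1)) (Sum.inl a, true) := by
      rw [hwp1]
      apply ends_of_aCount_succ
      rw [← hwp1, hinc,
        aCount_mulr0 (by rw [aCount_inv]; exact aCount_vWord η _ _), aCount_phiM]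
    have hInv : ∀ s (hs : p + 1 ≤ s), s ≤ q →
        ∃ h u, w s = h * u ∧ Ends h (Sum.inl a, true) ∧ aCount n u = 0 ∧
          ((s = p + 1 ∧ u = 1) ∨ (∃ b, y (s - 1) = Sum.inr b ∧ toWord u ≠ [] ∧
            (toWord u).getLast? = some (Sum.inr b, !(e (s - 1))))) := by
      intro s hs
      induction s, hs using Nat.le_induction with
      | base =>
        exact fun _ => ⟨w (p + 1), 1, (mul_one _).symm, hE1, aCount_one, Or.inl ⟨rfl, rfl⟩⟩
      | succ s hs IH =>
        intro hsq
        obtain ⟨h, u, hw, hE, hu0, hdisj⟩ := IH (by omega)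
        obtain ⟨b', hb'⟩ := hB s (by omega) (by omega)
        have hws := hcomp s (by omega)
        rw [hb', rho_inr, hw, _root_.map_mul, phiM_fix η _ _ hu0] at hws
        have hbpow : bpow (of (Sum.inr b') : FreeGroup (MLetter n)) (!(e s))
            = mk [((Sum.inr b' : MLetter n), !(e s))] := by
          cases e s
          · simp [mk_single_true]
          · simp [mk_single_false]
        refine ⟨phiM n η (Sum.inr b') (e s) h,
          u * mk [((Sum.inr b' : MLetter n), !(e s))], ?_, phi_ends_pos η hE _ _, ?_, ?_⟩
        · rw [hws, hbpow, mul_assoc]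
        · apply aCount_mul00 hu0
          rw [← hbpow, aCount_bpow]
          exact aCount_of_inr b'
        · right
          refine ⟨b', by simpa using hb', ?_⟩
          rcases hdisj with ⟨hsp, hu1⟩ | ⟨b, hyb, hne, hlast⟩
          · rw [hu1, one_mul, toWord_mk, reduce_singleton]
            exact ⟨by simp, by simp⟩
          · have hnc : ¬(b' = b ∧ e s = !(e (s - 1))) := by
              have hr := hred (s - 1) (by omega)
              rw [Nat.sub_add_cancel (by omega : 1 ≤ s)] at hr
              rintro ⟨hbb, hee⟩
              exact hr ⟨by rw [hb', hyb, hbb], hee⟩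
            rcases toWord_mul_letter u ((Sum.inr b' : MLetter n), !(e s))
              with hcase | ⟨l, hl, _⟩
            · rw [hcase]
              refine ⟨by simp, ?_⟩
              rw [List.getLast?_concat]
              simp
            · exfalso
              rw [hl, List.getLast?_concat, Option.some_inj] at hlast
              have hbb : b' = b := by
                have h1 := congrArg Prod.fst hlast
                simpa using h1
              have hee : e s = !(e (s - 1)) := by
                have h1 := congrArg Prod.snd hlast
                simp only [Bool.not_not] at h1
                exact h1
              exact hnc ⟨hbb, hee⟩
    obtain ⟨h, u, hw, hE, hu0, hdisj⟩ := hInv q (by omega) le_rfl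
    have hphiw : ∀ ε₀, phiM n η (Sum.inl a') ε₀ (w q)
        = phiM n η (Sum.inl a') ε₀ h * u := by
      intro ε₀; rw [hw, _root_.map_mul, phiM_fix η _ _ hu0]
    cases heq : e q
    · -- e q = false : never decreases here
      rw [heq, rho_inl_false] at hwq
      have hX : phiM n η (Sum.inl a') false (w q) * (vWord n η (Sum.inl a') a')⁻¹
          = phiM n η (Sum.inl a') false h * (u * (vWord n η (Sum.inl a') a')⁻¹) := by
        rw [hphiw, mul_assoc]
      rw [hwq, hX]
      have h1 := append_A_letter (z := u * (vWord n η (Sum.inl a') a')⁻¹)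
        (phi_ends_pos η hE (Sum.inl a') false)
        (aCount_mul00 hu0 (by rw [aCount_inv]; exact aCount_vWord η (Sum.inl a') a')) a' true
        (by rintro ⟨_, _, hcon⟩; simp at hcon)
      rw [h1, ← hX, aCount_mulr0 (t := (vWord n η (Sum.inl a') a')⁻¹)
        (by rw [aCount_inv]; exact aCount_vWord η _ _), aCount_phiM]
    · -- e q = true : decrease only if u = 1 and a' = a
      rw [heq, rho_inl_true] at hwq
      rw [hwq, hphiw]
      have h1 := append_A_letter (phi_ends_pos η hE (Sum.inl a') true) hu0 a' false ?hno
      · rw [h1, ← hphiw, aCount_phiM]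
      · rintro ⟨hu1, haa, _⟩
        rcases hdisj with ⟨hqp, _⟩ | ⟨b, _, hne, _⟩
        · have hr := hred p (by omega)
          apply hr
          refine ⟨?_, ?_⟩
          · rw [← hqp, hyq, hyp, haa]
          · rw [← hqp, heq, hep]; rfl
        · exact hne (by rw [hu1, toWord_one])
  · -- e p = true : negative ending
    rw [hep, rho_inl_true] at hwp1
    have hE1 : Ends (w (p + 1)) (Sum.inl a, false) := by
      rw [hwp1]
      apply ends_of_aCount_succ
      rw [← hwp1, hinc, aCount_phiM]
    have hInv : ∀ s (hs : p + 1 ≤ s), s ≤ q →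
        ∃ h u, w s = h * u ∧ Ends h (Sum.inl a, false) ∧ aCount n u = 0 ∧
          ((s = p + 1 ∧ u = 1) ∨ (∃ b, y (s - 1) = Sum.inr b ∧
            GoodU η a b (e (s - 1)) u)) := by
      intro s hs
      induction s, hs using Nat.le_induction with
      | base =>
        exact fun _ => ⟨w (p + 1), 1, (mul_one _).symm, hE1, aCount_one, Or.inl ⟨rfl, rfl⟩⟩
      | succ s hs IH =>
        intro hsq
        obtain ⟨h, u, hw, hE, hu0, hdisj⟩ := IH (by omega)
        obtain ⟨b', hb'⟩ := hB s (by omega) (by omega)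
        have hws := hcomp s (by omega)
        rw [hb', rho_inr, hw, _root_.map_mul, phiM_fix η _ _ hu0] at hws
        obtain ⟨h₂, hsplit, hE₂, _⟩ := phi_ends_neg η hE (Sum.inr b') (e s)
        have hws2 : w (s + 1) = h₂ * (bpow (vWord n η (Sum.inr b') a) (!(e s))
            * (u * bpow (of (Sum.inr b')) (!(e s)))) := by
          rw [hws, hsplit]; group
        refine ⟨h₂, bpow (vWord n η (Sum.inr b') a) (!(e s))
            * (u * bpow (of (Sum.inr b')) (!(e s))), hws2, hE₂, ?_, ?_⟩
        · apply aCount_mul00 (by rw [aCount_bpow]; exact aCount_vWord η _ _)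
          exact aCount_mul00 hu0 (by rw [aCount_bpow]; exact aCount_of_inr b')
        · right
          refine ⟨b', by simpa using hb', ?_⟩
          rcases hdisj with ⟨hsp, hu1⟩ | ⟨b, hyb, hgood⟩
          · rw [hu1, one_mul]
            exact goodU_base η hn a b' (e s)
          · have hnc : ¬(b' = b ∧ e s = !(e (s - 1))) := by
              have hr := hred (s - 1) (by omega)
              rw [Nat.sub_add_cancel (by omega : 1 ≤ s)] at hr
              rintro ⟨hbb, hee⟩
              exact hr ⟨by rw [hb', hyb, hbb], hee⟩
            exact goodU_step η hn hgood hnc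
    obtain ⟨h, u, hw, hE, hu0, hdisj⟩ := hInv q (by omega) le_rfl
    obtain ⟨h₂, hsplit, hE₂, _⟩ := phi_ends_neg η hE (Sum.inl a') (e q)
    have hphiw : phiM n η (Sum.inl a') (e q) (w q)
        = (h₂ * bpow (vWord n η (Sum.inl a') a) (!(e q))) * u := by
      rw [hw, _root_.map_mul, phiM_fix η _ _ hu0, hsplit]
    cases heq : e q
    · -- e q = false : dangerous case
      rw [heq, rho_inl_false] at hwq
      rw [heq] at hphiw
      have hX : phiM n η (Sum.inl a') false (w q) * (vWord n η (Sum.inl a') a')⁻¹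
          = h₂ * (vWord n η (Sum.inl a') a * (u * (vWord n η (Sum.inl a') a')⁻¹)) := by
        rw [hphiw]; simp only [Bool.not_false, bpow_true]; group
      rw [hwq, hX]
      have hz0 : aCount n (vWord n η (Sum.inl a') a
          * (u * (vWord n η (Sum.inl a') a')⁻¹)) = 0 :=
        aCount_mul00 (aCount_vWord η _ _)
          (aCount_mul00 hu0 (by rw [aCount_inv]; exact aCount_vWord η _ _))
      have h1 := append_A_letter hE₂ hz0 a' true ?hno2
      · rw [h1, ← hX, aCount_mulr0 (t := (vWord n η (Sum.inl a') a')⁻¹)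
          (by rw [aCount_inv]; exact aCount_vWord η _ _), aCount_phiM]
      · rintro ⟨hz1, haa, _⟩
        subst haa
        have hu1 : u = 1 := by
          have h2 : u = (vWord n η (Sum.inl a') a')⁻¹ * 1 * vWord n η (Sum.inl a') a' := by
            rw [← hz1]; group
          simpa using h2
        rcases hdisj with ⟨hqp, _⟩ | ⟨b, _, hgood⟩
        · have hr := hred p (by omega)
          apply hr
          refine ⟨?_, ?_⟩
          · rw [← hqp, hyq, hyp]
          · rw [← hqp, heq, hep]; rfl
        · exact absurd hu1 (GoodU.ne_one η hgood)
    · -- e q = true : never decreases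
      rw [heq, rho_inl_true] at hwq
      rw [heq] at hphiw
      have hX : phiM n η (Sum.inl a') true (w q)
          = h₂ * (bpow (vWord n η (Sum.inl a') a) false * u) := by
        rw [hphiw]; simp only [Bool.not_true]; group
      rw [hwq, hX]
      have hz0 : aCount n (bpow (vWord n η (Sum.inl a') a) false * u) = 0 :=
        aCount_mul00 (by rw [aCount_bpow]; exact aCount_vWord η _ _) hu0
      have h1 := append_A_letter hE₂ hz0 a' false
        (by rintro ⟨_, _, hcon⟩; simp at hcon)
      rw [h1, ← hX, aCount_phiM]

end Key

end Problem

end S9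

/-- **Lemma 5.7 (`𝒜`-growth).** Let `w₀ → ⋯ → w_t` be a computation with reduced
history.  If `|w₀|_𝒜 < |w₁|_𝒜`, then `|w_{i-1}|_𝒜 ≤ |w_i|_𝒜` for all `1 ≤ i ≤ t`. -/
theorem statement9 (n : ℕ) (hn : 0 < n) (η : MLetter n × Fin n ≃ Fin (n * (n + 2)))
    (t : ℕ) (ht : 1 ≤ t) (y : ℕ → MLetter n) (e : ℕ → Bool)
    (w : ℕ → FreeGroup (MLetter n))
    (hcomp : IsComputation n η t y e w) (hred : ReducedHistory n t y e)
    (h01 : aCount n (w 0) < aCount n (w 1)) :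
    ∀ i, 1 ≤ i → i ≤ t → aCount n (w (i - 1)) ≤ aCount n (w i) := by
  classical
  have main : ∀ j, j < t → aCount n (w j) ≤ aCount n (w (j + 1)) := by
    intro j
    induction j using Nat.strong_induction_on with
    | _ j IH =>
      intro hj
      rcases hyj : y j with a' | b'
      · rcases Nat.eq_zero_or_pos j with rfl | hj0
        · exact le_of_lt h01
        · have hy0 : ∃ a0, y 0 = Sum.inl a0 := by
            rcases h0 : y 0 with a0 | b0
            · exact ⟨a0, rfl⟩
            · exfalso
              have hw1 := hcomp 0 (by omega)
              rw [h0] at hw1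
              have hbc := S9.bstep_aCount η b0 (e 0) (w 0)
              rw [← hw1] at hbc
              norm_num at hbc
              omega
          obtain ⟨a0, ha0⟩ := hy0
          have hP0 : (fun i => (y i).isLeft = true) 0 := by
            show (y 0).isLeft = true
            rw [ha0]; rfl
          set p := Nat.findGreatest (fun i => (y i).isLeft = true) (j - 1) with hpdef
          have hPp : (y p).isLeft = true := by
            rw [hpdef]
            exact Nat.findGreatest_spec (P := fun i => (y i).isLeft = true)
              (Nat.zero_le _) hP0
          have hple : p ≤ j - 1 := Nat.findGreatest_le _
          have hmax : ∀ s, p < s → s < j → ¬ ((y s).isLeft = true) := by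
            intro s hs1 hs2
            exact Nat.findGreatest_is_greatest (P := fun i => (y i).isLeft = true)
              hs1 (by omega)
          obtain ⟨ap, hap⟩ : ∃ ap, y p = Sum.inl ap := by
            rcases hyp' : y p with ap | bp
            · exact ⟨ap, rfl⟩
            · rw [hyp'] at hPp; simp at hPp
          have hB : ∀ s, p < s → s < j → ∃ b, y s = Sum.inr b := by
            intro s hs1 hs2
            have hns := hmax s hs1 hs2
            rcases hys : y s with as | bs
            · exfalso; rw [hys] at hns; simp at hns
            · exact ⟨bs, rfl⟩
          have hplt : p < j := by omega
          have hinc : aCount n (w (p + 1)) = aCount n (w p) + 1 := by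
            have hstep := hcomp p (by omega)
            rw [hap] at hstep
            rcases S9.astep_aCount η ap (e p) (w p) with hca | hca
            · rw [hstep, hca]
            · exfalso
              rw [← hstep] at hca
              have hle := IH p hplt (by omega)
              omega
          have hkey := S9.key_lemma η hn hcomp hred hplt hj hap hyj hB hinc
          omega
      · have hstep := hcomp j hj
        rw [hyj] at hstep
        have hbc := S9.bstep_aCount η b' (e j) (w j)
        rw [← hstep] at hbc
        omega
  intro i hi1 hit
  have h := main (i - 1) (by omega)
  rwa [Nat.sub_add_cancel hi1] at h
end
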